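/- arXiv:1703.02485 — 9 statements merged into one kernel-verified Lean document; each statement's English description precedes it below -/
import Mathlib

section
/- For all integers s ≥ 1, t ≥ 1 and q ≥ 1 there exists a natural number z = Z(s, t, q) such that every finite simple graph containing a path on z vertices as a subgraph contains the complete graph K_t, or the complete bipartite graph K_{q,q}, or the path P_s as an induced subgraph. -/
open SimpleGraph

/-- `H` occurs as a subgraph of `G`: an injective map sending edges to edges. -/
def ContainsSubgraph {W V : Type*} (H : SimpleGraph W) (G : SimpleGraph V) : Prop :=
  ∃ σ : W → V, Function.Injective σ ∧ ∀ ⦃u v⦄, H.Adj u v → G.Adj (σ u) (σ v)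

/-- `H` occurs as an induced subgraph of `G`. -/
def ContainsInduced {W V : Type*} (H : SimpleGraph W) (G : SimpleGraph V) : Prop :=
  Nonempty (H ↪g G)

namespace LongPath

section Builders
variable {V : Type} {H : SimpleGraph V}

lemma buildPath {n : ℕ} (f : ℕ → V)
    (hadj : ∀ r, r + 1 < n → H.Adj (f r) (f (r+1)))
    (hfar : ∀ r r', r + 2 ≤ r' → r' < n → ¬H.Adj (f r) (f r') ∧ f r ≠ f r') :
    ContainsInduced (pathGraph n) H := by
  have hne : ∀ (i j : ℕ), i < j → j < n → f i ≠ f j := by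
    intro i j hij hjn
    rcases Nat.lt_or_ge (i + 1) j with h | h
    · exact (hfar i j (by omega) hjn).2
    · have hj : j = i + 1 := by omega
      subst hj
      exact (hadj i hjn).ne
  have hnadj : ∀ (i j : ℕ), i < j → j < n → (H.Adj (f i) (f j) ↔ j = i + 1) := by
    intro i j hij hjn
    constructor
    · intro h
      by_contra hne1
      exact (hfar i j (by omega) hjn).1 h
    · rintro rfl; exact hadj i hjn
  refine ⟨⟨⟨fun i => f i, ?_⟩, ?_⟩⟩
  · intro i j hfe
    by_contra hij2
    rcases lt_trichotomy (i:ℕ) (j:ℕ) with h | h | h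
    · exact hne i j h j.isLt hfe
    · exact hij2 (Fin.ext h)
    · exact hne j i h i.isLt hfe.symm
  · intro i j
    show H.Adj (f i) (f j) ↔ _
    rw [pathGraph_adj]
    rcases lt_trichotomy (i:ℕ) (j:ℕ) with h | h | h
    · rw [hnadj i j h j.isLt]; omega
    · have hij : i = j := Fin.ext h
      subst hij
      constructor
      · intro hadj2; exact absurd hadj2 (H.irrefl)
      · intro hc; omega
    · rw [H.adj_comm, hnadj j i h i.isLt]; omega

lemma buildClique {t : ℕ} (w : ℕ → V) (hadj : ∀ i j, i < j → H.Adj (w i) (w j)) :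
    ContainsInduced (completeGraph (Fin t)) H := by
  refine ⟨⟨⟨fun i => w i, ?_⟩, ?_⟩⟩
  · intro i j hfe
    by_contra hij
    rcases lt_trichotomy (i:ℕ) (j:ℕ) with h | h | h
    · exact (hadj i j h).ne hfe
    · exact hij (Fin.ext h)
    · exact (hadj j i h).ne hfe.symm
  · intro i j
    simp only [Function.Embedding.coeFn_mk, completeGraph, top_adj]
    constructor
    · intro h hij; rw [hij] at h; exact H.irrefl h
    · intro hij
      rcases lt_trichotomy (i:ℕ) (j:ℕ) with h | h | h
      · exact hadj i j h
      · exact absurd (Fin.ext h) hij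
      · exact (hadj j i h).symm

lemma buildBiclique {q : ℕ} (u w : ℕ → V)
    (hcross : ∀ i j, i < q → j < q → H.Adj (u i) (w j))
    (hu : ∀ i j, i < j → j < q → ¬H.Adj (u i) (u j))
    (hw : ∀ i j, i < j → j < q → ¬H.Adj (w i) (w j))
    (huinj : ∀ i j, i < j → j < q → u i ≠ u j)
    (hwinj : ∀ i j, i < j → j < q → w i ≠ w j)
    (huw : ∀ i j, i < q → j < q → u i ≠ w j) :
    ContainsInduced (completeBipartiteGraph (Fin q) (Fin q)) H := by
  have hunadj : ∀ (i j : Fin q), ¬H.Adj (u i) (u j) := by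
    intro i j
    rcases lt_trichotomy (i:ℕ) (j:ℕ) with h | h | h
    · exact hu i j h j.isLt
    · rw [Fin.ext h]; exact fun h2 => H.irrefl h2
    · intro h2; exact hu j i h i.isLt h2.symm
  have hwnadj : ∀ (i j : Fin q), ¬H.Adj (w i) (w j) := by
    intro i j
    rcases lt_trichotomy (i:ℕ) (j:ℕ) with h | h | h
    · exact hw i j h j.isLt
    · rw [Fin.ext h]; exact fun h2 => H.irrefl h2
    · intro h2; exact hw j i h i.isLt h2.symm
  refine ⟨⟨⟨Sum.elim (fun i : Fin q => u i) (fun j : Fin q => w j), ?_⟩, ?_⟩⟩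
  · rintro (i | i) (j | j) hfe <;> simp only [Sum.elim_inl, Sum.elim_inr] at hfe
    · rcases lt_trichotomy (i:ℕ) (j:ℕ) with h | h | h
      · exact absurd hfe (huinj i j h j.isLt)
      · exact congrArg Sum.inl (Fin.ext h)
      · exact absurd hfe.symm (huinj j i h i.isLt)
    · exact absurd hfe (huw i j i.isLt j.isLt)
    · exact absurd hfe.symm (huw j i j.isLt i.isLt)
    · rcases lt_trichotomy (i:ℕ) (j:ℕ) with h | h | h
      · exact absurd hfe (hwinj i j h j.isLt)
      · exact congrArg Sum.inr (Fin.ext h)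
      · exact absurd hfe.symm (hwinj j i h i.isLt)
  · rintro (i | i) (j | j) <;>
      simp only [Sum.elim_inl, Sum.elim_inr, completeBipartiteGraph_adj,
        Sum.isLeft_inl, Sum.isRight_inl, Sum.isLeft_inr, Sum.isRight_inr]
    · show H.Adj (u i) (u j) ↔ _; simpa using hunadj i j
    · show H.Adj (u i) (w j) ↔ _; simpa using hcross i j i.isLt j.isLt
    · show H.Adj (w i) (u j) ↔ _; simpa using (hcross j i j.isLt i.isLt).symm
    · show H.Adj (w i) (w j) ↔ _; simpa using hwnadj i j
end Builders



theorem infinite_ramsey {C : Type} [Finite C] [Nonempty C] :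
    ∀ (r : ℕ) (f : (Fin r → ℕ) → C),
    ∃ g : ℕ → ℕ, StrictMono g ∧ ∃ c : C, ∀ t : Fin r → ℕ, StrictMono t →
      f (fun i => g (t i)) = c := by
  intro r
  induction r with
  | zero =>
    intro f
    exact ⟨id, strictMono_id, f (fun i => i.elim0), fun t _ => by
      congr 1; funext i; exact i.elim0⟩
  | succ r ih =>
    intro f
    have key : ∀ e : {e : ℕ → ℕ // StrictMono e},
        ∃ p : (ℕ → ℕ) × C, StrictMono p.1 ∧
          ∀ t : Fin r → ℕ, StrictMono t →
            f (Fin.cons (e.1 0) (fun i => e.1 (p.1 (t i) + 1))) = p.2 := by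
      intro e
      obtain ⟨g, hg, c, hc⟩ := ih (fun t => f (Fin.cons (e.1 0) (fun i => e.1 (t i + 1))))
      exact ⟨(g, c), hg, fun t ht => hc t ht⟩
    choose P hP1 hP2 using key
    let E : ℕ → {e : ℕ → ℕ // StrictMono e} := fun k =>
      Nat.rec ⟨id, strictMono_id⟩ (fun _ ek => ⟨fun n => ek.1 ((P ek).1 n + 1),
        fun a b hab => ek.2 (by have := hP1 ek hab; omega)⟩) k
    have hEsucc : ∀ k n, (E (k+1)).1 n = (E k).1 ((P (E k)).1 n + 1) := fun _ _ => rfl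
    set x : ℕ → ℕ := fun k => (E k).1 0 with hxdef
    have hx : StrictMono x := by
      apply strictMono_nat_of_lt_succ
      intro k
      have : (E (k+1)).1 0 = (E k).1 ((P (E k)).1 0 + 1) := hEsucc k 0
      simp only [hxdef, this]
      exact (E k).2 (Nat.succ_pos _)
    have hrange : ∀ k j, k ≤ j → Set.range (E j).1 ⊆ Set.range (E k).1 := by
      intro k j hkj
      induction j with
      | zero => simp_all
      | succ j ihj =>
        rcases Nat.lt_or_ge k (j+1) with h | h
        · intro v hv
          obtain ⟨n, hn⟩ := hv
          rw [hEsucc] at hn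
          exact ihj (by omega) ⟨_, hn⟩
        · have : k = j + 1 := by omega
          subst this; exact fun v hv => hv
    have hxmem : ∀ k j, k < j → x j ∈ Set.range (E (k+1)).1 := by
      intro k j hkj
      exact hrange (k+1) j hkj ⟨0, rfl⟩
    set col : ℕ → C := fun k => (P (E k)).2 with hcoldef
    obtain ⟨c, hc⟩ := Finite.exists_infinite_fiber col
    have hinf : (setOf (fun k => col k = c)).Infinite := by
      exact Set.infinite_coe_iff.mp hc
    set κ : ℕ → ℕ := Nat.nth (fun k => col k = c) with hκdef
    have hκmono : StrictMono κ := Nat.nth_strictMono hinf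
    have hκmem : ∀ n, col (κ n) = c := fun n => Nat.nth_mem_of_infinite hinf n
    refine ⟨fun n => x (κ n), hx.comp hκmono, c, ?_⟩
    intro t ht
    set k := κ (t 0) with hk
    have hgt : ∀ i : Fin r, k < κ (t i.succ) := by
      intro i
      exact hκmono (ht (Fin.succ_pos i))
    have hwex : ∀ i : Fin r, ∃ n, (E (k+1)).1 n = x (κ (t i.succ)) := by
      intro i
      obtain ⟨n, hn⟩ := hxmem k (κ (t i.succ)) (hgt i)
      exact ⟨n, hn⟩
    choose w hw using hwex
    have hwmono : StrictMono w := by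
      intro i j hij
      have h1 : x (κ (t i.succ)) < x (κ (t j.succ)) :=
        hx (hκmono (ht (Fin.succ_lt_succ_iff.mpr hij)))
      have := hw i; have := hw j
      have h2 : (E (k+1)).1 (w i) < (E (k+1)).1 (w j) := by rw [hw i, hw j]; exact h1
      exact (E (k+1)).2.lt_iff_lt.mp h2
    have heq : (fun i => x (κ (t i))) =
        Fin.cons (x k) (fun i : Fin r => (E k).1 ((P (E k)).1 (w i) + 1)) := by
      funext i
      refine Fin.cases ?_ ?_ i
      · simp [hk]
      · intro i
        rw [Fin.cons_succ, ← hEsucc, hw i]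
    calc f (fun i => x (κ (t i)))
        = f (Fin.cons ((E k).1 0) (fun i : Fin r => (E k).1 ((P (E k)).1 (w i) + 1))) := by
          rw [heq]
      _ = (P (E k)).2 := hP2 (E k) w hwmono
      _ = c := hκmem (t 0)


section Walks
variable (H : SimpleGraph ℕ)

def WalkFun (a b L : ℕ) (f : ℕ → ℕ) : Prop :=
  f 0 = a ∧ f L = b ∧ (∀ k, k < L → H.Adj (f k) (f (k+1))) ∧ (∀ k, k ≤ L → a ≤ f k ∧ f k ≤ b)

variable (hray : ∀ i, H.Adj i (i+1))

include hray

lemma walk_exists {a b : ℕ} (hab : a ≤ b) : ∃ L, ∃ f, WalkFun H a b L f := by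
  refine ⟨b - a, fun k => a + min k (b - a), by simp, ?_, ?_, ?_⟩
  · dsimp only
    omega
  · intro k hk
    dsimp only
    have e1 : a + min k (b - a) = a + k := by omega
    have e2 : a + min (k+1) (b - a) = a + k + 1 := by omega
    rw [e1, e2]
    exact hray (a + k)
  · intro k hk
    dsimp only
    omega

open Classical in
noncomputable def clen (a b : ℕ) : ℕ :=
  if h : a ≤ b then Nat.find (walk_exists H hray h) else 0

open Classical in
noncomputable def cpath (a b : ℕ) : ℕ → ℕ :=
  if h : a ≤ b then Classical.choose (Nat.find_spec (walk_exists H hray h)) else id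

variable {H}

lemma cpath_spec {a b : ℕ} (hab : a ≤ b) :
    WalkFun H a b (clen H hray a b) (cpath H hray a b) := by
  classical
  rw [clen, cpath, dif_pos hab, dif_pos hab]
  exact Classical.choose_spec (Nat.find_spec (walk_exists H hray hab))

lemma clen_min {a b : ℕ} (hab : a ≤ b) {L : ℕ} {f : ℕ → ℕ}
    (hw : WalkFun H a b L f) : clen H hray a b ≤ L := by
  classical
  rw [clen, dif_pos hab]
  exact Nat.find_le ⟨f, hw⟩

lemma cpath_zero {a b : ℕ} (hab : a ≤ b) : cpath H hray a b 0 = a := (cpath_spec hray hab).1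

lemma cpath_last {a b : ℕ} (hab : a ≤ b) :
    cpath H hray a b (clen H hray a b) = b := (cpath_spec hray hab).2.1

lemma cpath_adj {a b : ℕ} (hab : a ≤ b) {k : ℕ} (hk : k < clen H hray a b) :
    H.Adj (cpath H hray a b k) (cpath H hray a b (k+1)) := (cpath_spec hray hab).2.2.1 k hk

lemma cpath_mem {a b : ℕ} (hab : a ≤ b) {k : ℕ} (hk : k ≤ clen H hray a b) :
    a ≤ cpath H hray a b k ∧ cpath H hray a b k ≤ b := (cpath_spec hray hab).2.2.2 k hk

omit hray in
lemma walkfun_glue {a b L : ℕ} {f : ℕ → ℕ} (hw : WalkFun H a b L f) {p d : ℕ}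
    (hd : 1 ≤ d) (hpd : p + d ≤ L)
    (hjoin : p + d < L → H.Adj (f p) (f (p + d + 1)))
    (hend : p + d = L → f p = b) :
    WalkFun H a b (L - d) (fun k => if k ≤ p then f k else f (k + d)) := by
  obtain ⟨h0, hlast, hadj, hmem⟩ := hw
  refine ⟨?_, ?_, ?_, ?_⟩
  · show (if 0 ≤ p then f 0 else f (0 + d)) = a
    rw [if_pos (Nat.zero_le p)]; exact h0
  · show (if L - d ≤ p then f (L - d) else f (L - d + d)) = b
    by_cases hc : L - d ≤ p
    · rw [if_pos hc]
      have hp : L - d = p := by omega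
      rw [hp]
      exact hend (by omega)
    · rw [if_neg hc]
      have e : L - d + d = L := by omega
      rw [e]; exact hlast
  · intro k hk
    show H.Adj (if k ≤ p then f k else f (k + d)) (if k + 1 ≤ p then f (k+1) else f (k + 1 + d))
    rcases Nat.lt_trichotomy k p with h | h | h
    · rw [if_pos (by omega), if_pos (by omega)]
      exact hadj k (by omega)
    · subst h
      rw [if_pos (le_refl _), if_neg (by omega)]
      have e : k + 1 + d = k + d + 1 := by omega
      rw [e]
      exact hjoin (by omega)
    · rw [if_neg (by omega), if_neg (by omega)]
      have e : k + 1 + d = k + d + 1 := by omega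
      rw [e]
      exact hadj (k + d) (by omega)
  · intro k hk
    show a ≤ (if k ≤ p then f k else f (k + d)) ∧ (if k ≤ p then f k else f (k + d)) ≤ b
    by_cases hc : k ≤ p
    · rw [if_pos hc]; exact hmem k (by omega)
    · rw [if_neg hc]; exact hmem (k + d) (by omega)

lemma cpath_inj {a b : ℕ} (hab : a ≤ b) {p q : ℕ} (hpq : p < q) (hq : q ≤ clen H hray a b) :
    cpath H hray a b p ≠ cpath H hray a b q := by
  intro heq
  obtain ⟨h0, hlast, hadj, hmem⟩ := cpath_spec hray hab (H := H)
  have hw := cpath_spec hray hab (H := H)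
  have hglue := walkfun_glue hw (p := p) (d := q - p) (by omega) (by omega)
    (fun h => by
      have e : p + (q - p) + 1 = q + 1 := by omega
      rw [e, heq]
      exact hadj q (by omega))
    (fun h => by
      have e : q = clen H hray a b := by omega
      rw [heq, e]
      exact hlast)
  have := clen_min hray hab hglue
  omega

lemma cpath_nochord {a b : ℕ} (hab : a ≤ b) {p q : ℕ} (hpq : p + 2 ≤ q)
    (hq : q ≤ clen H hray a b) :
    ¬H.Adj (cpath H hray a b p) (cpath H hray a b q) := by
  intro hadj0
  have hw := cpath_spec hray hab (H := H)
  have hglue := walkfun_glue hw (p := p) (d := q - p - 1) (by omega) (by omega)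
    (fun h => by
      have e : p + (q - p - 1) + 1 = q := by omega
      rw [e]
      exact hadj0)
    (fun h => by omega)
  have := clen_min hray hab hglue
  omega

lemma clen_pos {a b : ℕ} (hab : a < b) : 1 ≤ clen H hray a b := by
  by_contra h
  have h0 : clen H hray a b = 0 := by omega
  have h1 := cpath_zero hray (le_of_lt hab) (H := H)
  have h2 := cpath_last hray (le_of_lt hab) (H := H)
  rw [h0, h1] at h2
  omega

lemma cpath_interior {a b : ℕ} (hab : a ≤ b) {k : ℕ} (hk1 : 1 ≤ k)
    (hk2 : k < clen H hray a b) :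
    a < cpath H hray a b k ∧ cpath H hray a b k < b := by
  have hmem := cpath_mem hray hab (le_of_lt hk2)
  have h1 : cpath H hray a b 0 ≠ cpath H hray a b k := cpath_inj hray hab (by omega) (by omega)
  have h2 : cpath H hray a b k ≠ cpath H hray a b (clen H hray a b) :=
    cpath_inj hray hab hk2 (le_refl _)
  rw [cpath_zero hray hab] at h1
  rw [cpath_last hray hab] at h2
  omega

lemma path_from_cpath {a b : ℕ} (hab : a ≤ b) {n : ℕ} (hn : n ≤ clen H hray a b + 1) :
    ContainsInduced (pathGraph n) H := by
  apply buildPath (cpath H hray a b)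
  · intro r hr
    exact cpath_adj hray hab (by omega)
  · intro r r' hrr hr'
    exact ⟨cpath_nochord hray hab hrr (by omega), cpath_inj hray hab (by omega) (by omega)⟩

lemma clen_le {s : ℕ} (hP : ¬ContainsInduced (pathGraph s) H) (hs : 3 ≤ s)
    {a b : ℕ} (hab : a ≤ b) : clen H hray a b ≤ s - 2 := by
  by_contra h
  exact hP (path_from_cpath hray hab (by omega))

end Walks

section Main

variable {H : SimpleGraph ℕ} (hray : ∀ i, H.Adj i (i+1))

include hray

theorem inf_main (s t q : ℕ) :
    ContainsInduced (completeGraph (Fin t)) H ∨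
    ContainsInduced (completeBipartiteGraph (Fin q) (Fin q)) H ∨
    ContainsInduced (pathGraph s) H := by
  classical
  by_contra hcon
  push_neg at hcon
  obtain ⟨hK, hB, hP⟩ := hcon
  by_cases hs : s ≤ 2
  · apply hP
    apply buildPath (fun n => n)
    · intro r _
      exact hray r
    · intro r r' h1 h2
      exfalso
      omega
  push_neg at hs
  have hs : 3 ≤ s := hs
  haveI : Nonempty (Fin s) := ⟨⟨0, by omega⟩⟩
  obtain ⟨g, hg, c, huni⟩ := infinite_ramsey 4
    (fun v : Fin 4 → ℕ =>
      ((if H.Adj (v 0) (v 1) then true else false),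
       (⟨min (clen H hray (v 0) (v 1)) (s-1), by omega⟩ : Fin s),
       (Finset.univ.filter (fun pq : Fin s × Fin s =>
          H.Adj (cpath H hray (v 0) (v 1) pq.1) (cpath H hray (v 1) (v 2) pq.2))),
       (Finset.univ.filter (fun pq : Fin s × Fin s =>
          H.Adj (cpath H hray (v 0) (v 1) pq.1) (cpath H hray (v 2) (v 3) pq.2)))))
  obtain ⟨badj, lenc, R, Q⟩ := c
  set A : ℕ → ℕ := g with hA
  have hmono4 : ∀ {i j k l : ℕ}, i < j → j < k → k < l → StrictMono ![i,j,k,l] := by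
    intro i j k l h1 h2 h3
    rw [Fin.strictMono_iff_lt_succ]
    intro a
    fin_cases a <;> simpa
  have hAlt : ∀ {i j}, i < j → A i < A j := fun h => hg h
  have hAle : ∀ {i j}, i < j → A i ≤ A j := fun h => (hg h).le
  -- component extraction
  have hcomp : ∀ i j k l, i < j → j < k → k < l →
      ((if H.Adj (A i) (A j) then true else false) = badj) ∧
      ((⟨min (clen H hray (A i) (A j)) (s-1), by omega⟩ : Fin s) = lenc) ∧
      ((Finset.univ.filter (fun pq : Fin s × Fin s =>
          H.Adj (cpath H hray (A i) (A j) pq.1) (cpath H hray (A j) (A k) pq.2))) = R) ∧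
      ((Finset.univ.filter (fun pq : Fin s × Fin s =>
          H.Adj (cpath H hray (A i) (A j) pq.1) (cpath H hray (A k) (A l) pq.2))) = Q) := by
    intro i j k l h1 h2 h3
    have h := huni ![i,j,k,l] (hmono4 h1 h2 h3)
    simp only [Matrix.cons_val_zero, Matrix.cons_val_one, Matrix.head_cons,
      Matrix.cons_val_two, Matrix.cons_val_three, Matrix.tail_cons, Prod.mk.injEq] at h
    exact ⟨h.1, h.2.1, h.2.2.1, h.2.2.2⟩
  -- adjacency dichotomy
  cases hbool : badj with
  | true =>
    apply hK
    apply buildClique A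
    intro i j hij
    have h := (hcomp i j (j+1) (j+2) hij (by omega) (by omega)).1
    rw [hbool] at h
    by_contra hn
    rw [if_neg hn] at h
    exact Bool.noConfusion h
  | false =>
  have hind : ∀ i j, i < j → ¬H.Adj (A i) (A j) := by
    intro i j hij hn
    have h := (hcomp i j (j+1) (j+2) hij (by omega) (by omega)).1
    rw [hbool, if_pos hn] at h
    exact Bool.noConfusion h
  set L : ℕ := (lenc : ℕ) with hLdef
  have hclen : ∀ i j, i < j → clen H hray (A i) (A j) = L := by
    intro i j hij
    have h := (hcomp i j (j+1) (j+2) hij (by omega) (by omega)).2.1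
    have hv := congrArg Fin.val h
    simp only at hv
    have hle : clen H hray (A i) (A j) ≤ s - 2 := clen_le hray hP hs (hAle hij)
    omega
  have hLs : L ≤ s - 2 := by
    have h := hclen 0 1 (by omega)
    have hle : clen H hray (A 0) (A 1) ≤ s - 2 := clen_le hray hP hs (hAle (by omega))
    omega
  have hL2 : 2 ≤ L := by
    have hc := hclen 0 1 (by omega)
    have h01 : A 0 < A 1 := hAlt (by omega)
    have hp1 := clen_pos hray h01
    by_contra h
    have hL1 : clen H hray (A 0) (A 1) = 1 := by omega
    have hadj := cpath_adj hray h01.le (k := 0) (by omega)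
    rw [cpath_zero hray h01.le] at hadj
    have h2 := cpath_last hray h01.le (H := H)
    rw [hL1] at h2
    rw [h2] at hadj
    exact hind 0 1 (by omega) hadj
  -- membership predicates
  set Rmem : ℕ → ℕ → Prop := fun p q' => ∃ (hp : p < s) (hq : q' < s),
    ((⟨p, hp⟩, ⟨q', hq⟩) : Fin s × Fin s) ∈ R with hRmem
  set Qmem : ℕ → ℕ → Prop := fun p q' => ∃ (hp : p < s) (hq : q' < s),
    ((⟨p, hp⟩, ⟨q', hq⟩) : Fin s × Fin s) ∈ Q with hQmem
  have hR : ∀ {i j k}, i < j → j < k → ∀ {p q'}, p ≤ L → q' ≤ L →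
      (H.Adj (cpath H hray (A i) (A j) p) (cpath H hray (A j) (A k) q') ↔ Rmem p q') := by
    intro i j k h1 h2 p q' hp hq
    have hcR := (hcomp i j k (k+1) h1 h2 (by omega)).2.2.1
    constructor
    · intro h
      refine ⟨by omega, by omega, ?_⟩
      rw [← hcR]
      simp only [Finset.mem_filter, Finset.mem_univ, true_and]
      exact h
    · rintro ⟨hp', hq', hmem⟩
      rw [← hcR] at hmem
      simp only [Finset.mem_filter, Finset.mem_univ, true_and] at hmem
      exact hmem
  have hQ : ∀ {i j k l}, i < j → j < k → k < l → ∀ {p q'}, p ≤ L → q' ≤ L →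
      (H.Adj (cpath H hray (A i) (A j) p) (cpath H hray (A k) (A l) q') ↔ Qmem p q') := by
    intro i j k l h1 h2 h3 p q' hp hq
    have hcQ := (hcomp i j k l h1 h2 h3).2.2.2
    constructor
    · intro h
      refine ⟨by omega, by omega, ?_⟩
      rw [← hcQ]
      simp only [Finset.mem_filter, Finset.mem_univ, true_and]
      exact h
    · rintro ⟨hp', hq', hmem⟩
      rw [← hcQ] at hmem
      simp only [Finset.mem_filter, Finset.mem_univ, true_and] at hmem
      exact hmem
  -- basic facts about connector paths between A-vertices
  have hF0 : ∀ i j, i < j → cpath H hray (A i) (A j) 0 = A i :=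
    fun i j hij => cpath_zero hray (hAle hij)
  have hFL : ∀ i j, i < j → cpath H hray (A i) (A j) L = A j := by
    intro i j hij
    have := cpath_last hray (hAle hij) (H := H)
    rw [hclen i j hij] at this
    exact this
  have hFadj : ∀ i j, i < j → ∀ p, p < L → H.Adj (cpath H hray (A i) (A j) p)
      (cpath H hray (A i) (A j) (p+1)) := by
    intro i j hij p hp
    exact cpath_adj hray (hAle hij) (by rw [hclen i j hij]; omega)
  have hFnochord : ∀ i j, i < j → ∀ p q', p + 2 ≤ q' → q' ≤ L →
      ¬H.Adj (cpath H hray (A i) (A j) p) (cpath H hray (A i) (A j) q') := by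
    intro i j hij p q' h1 h2
    exact cpath_nochord hray (hAle hij) h1 (by rw [hclen i j hij]; omega)
  have hFinj : ∀ i j, i < j → ∀ p q', p < q' → q' ≤ L →
      cpath H hray (A i) (A j) p ≠ cpath H hray (A i) (A j) q' := by
    intro i j hij p q' h1 h2
    exact cpath_inj hray (hAle hij) h1 (by rw [hclen i j hij]; omega)
  have hFmem : ∀ i j, i < j → ∀ p, p ≤ L →
      A i ≤ cpath H hray (A i) (A j) p ∧ cpath H hray (A i) (A j) p ≤ A j := by
    intro i j hij p hp
    exact cpath_mem hray (hAle hij) (by rw [hclen i j hij]; omega)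
  have hFltj : ∀ i j, i < j → ∀ p, p ≤ L - 1 → cpath H hray (A i) (A j) p < A j := by
    intro i j hij p hp
    have h1 := (hFmem i j hij p (by omega)).2
    have h2 := hFinj i j hij p L (by omega) (by omega)
    rw [hFL i j hij] at h2
    omega
  have hFgti : ∀ i j, i < j → ∀ p, 1 ≤ p → p ≤ L → A i < cpath H hray (A i) (A j) p := by
    intro i j hij p hp1 hp2
    have h1 := (hFmem i j hij p hp2).1
    have h2 := hFinj i j hij 0 p (by omega) (by omega)
    rw [hF0 i j hij] at h2
    omega
  -- Stage 1: the quad pattern Q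
  by_cases hQex : ∃ p q', p ≤ L ∧ q' ≤ L ∧ Qmem p q'
  · obtain ⟨p0, q0, hp0, hq0, hq00⟩ := hQex
    by_cases hpp : Qmem p0 p0
    · apply hK
      apply buildClique (fun r => cpath H hray (A (2*r)) (A (2*r+1)) p0)
      intro i j hij
      exact (hQ (show 2*i < 2*i+1 by omega) (show 2*i+1 < 2*j by omega)
        (show 2*j < 2*j+1 by omega) hp0 hp0).mpr hpp
    by_cases hqq : Qmem q0 q0
    · apply hK
      apply buildClique (fun r => cpath H hray (A (2*r)) (A (2*r+1)) q0)
      intro i j hij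
      exact (hQ (show 2*i < 2*i+1 by omega) (show 2*i+1 < 2*j by omega)
        (show 2*j < 2*j+1 by omega) hq0 hq0).mpr hqq
    apply hB
    apply buildBiclique (fun r => cpath H hray (A (2*r)) (A (2*r+1)) p0)
      (fun r => cpath H hray (A (2*q + 2*r)) (A (2*q + 2*r+1)) q0)
    · intro i j _ _
      exact (hQ (show 2*i < 2*i+1 by omega) (show 2*i+1 < 2*q+2*j by omega)
        (show 2*q+2*j < 2*q+2*j+1 by omega) hp0 hq0).mpr hq00
    · intro i j hij _
      intro h
      exact hpp ((hQ (show 2*i < 2*i+1 by omega) (show 2*i+1 < 2*j by omega)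
        (show 2*j < 2*j+1 by omega) hp0 hp0).mp h)
    · intro i j hij _
      intro h
      exact hqq ((hQ (show 2*q+2*i < 2*q+2*i+1 by omega) (show 2*q+2*i+1 < 2*q+2*j by omega)
        (show 2*q+2*j < 2*q+2*j+1 by omega) hq0 hq0).mp h)
    · intro i j hij _
      have h1 := (hFmem (2*i) (2*i+1) (by omega) p0 hp0).2
      have h2 := (hFmem (2*j) (2*j+1) (by omega) p0 hp0).1
      have h3 : A (2*i+1) < A (2*j) := hAlt (by omega)
      omega
    · intro i j hij _
      have h1 := (hFmem (2*q+2*i) (2*q+2*i+1) (by omega) q0 hq0).2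
      have h2 := (hFmem (2*q+2*j) (2*q+2*j+1) (by omega) q0 hq0).1
      have h3 : A (2*q+2*i+1) < A (2*q+2*j) := hAlt (by omega)
      omega
    · intro i j _ _
      have h1 := (hFmem (2*i) (2*i+1) (by omega) p0 hp0).2
      have h2 := (hFmem (2*q+2*j) (2*q+2*j+1) (by omega) q0 hq0).1
      have h3 : A (2*i+1) < A (2*q+2*j) := hAlt (by omega)
      omega
  push_neg at hQex
  have hQe : ∀ p q', p ≤ L → q' ≤ L → ¬Qmem p q' := fun p q' hp hq hm => hQex p q' hp hq hm
  -- Stage 2: elementary exclusions in R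
  have hR00 : ¬Rmem 0 0 := by
    intro hm
    have h := (hR (show (0:ℕ)<1 by omega) (show (1:ℕ)<2 by omega) (Nat.zero_le L) (Nat.zero_le L)).mpr hm
    rw [hF0 0 1 (by omega), hF0 1 2 (by omega)] at h
    exact hind 0 1 (by omega) h
  have hR0L : ¬Rmem 0 L := by
    intro hm
    have h := (hR (show (0:ℕ)<1 by omega) (show (1:ℕ)<2 by omega) (Nat.zero_le L) (le_refl L)).mpr hm
    rw [hF0 0 1 (by omega), hFL 1 2 (by omega)] at h
    exact hind 0 2 (by omega) h
  have hRL0 : ¬Rmem L 0 := by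
    intro hm
    have h := (hR (show (0:ℕ)<1 by omega) (show (1:ℕ)<2 by omega) (le_refl L) (Nat.zero_le L)).mpr hm
    rw [hFL 0 1 (by omega), hF0 1 2 (by omega)] at h
    exact H.irrefl h
  have hRLL : ¬Rmem L L := by
    intro hm
    have h := (hR (show (0:ℕ)<1 by omega) (show (1:ℕ)<2 by omega) (le_refl L) (le_refl L)).mpr hm
    rw [hFL 0 1 (by omega), hFL 1 2 (by omega)] at h
    exact hind 1 2 (by omega) h
  have hRLq : ∀ q', 2 ≤ q' → q' ≤ L - 1 → ¬Rmem L q' := by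
    intro q' h1 h2 hm
    have h := (hR (show (0:ℕ)<1 by omega) (show (1:ℕ)<2 by omega) (le_refl L) (by omega)).mpr hm
    rw [hFL 0 1 (by omega)] at h
    have h3 : H.Adj (cpath H hray (A 1) (A 2) 0) (cpath H hray (A 1) (A 2) q') := by
      rw [hF0 1 2 (by omega)]
      exact h
    exact hFnochord 1 2 (by omega) 0 q' (by omega) (by omega) h3
  have hRp0 : ∀ p, p ≤ L - 2 → ¬Rmem p 0 := by
    intro p hp hm
    have h := (hR (show (0:ℕ)<1 by omega) (show (1:ℕ)<2 by omega) (by omega) (Nat.zero_le L)).mpr hm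
    rw [hF0 1 2 (by omega)] at h
    have h3 : H.Adj (cpath H hray (A 0) (A 1) p) (cpath H hray (A 0) (A 1) L) := by
      rw [hFL 0 1 (by omega)]
      exact h
    exact hFnochord 0 1 (by omega) p L (by omega) (by omega) h3
  have hPL : ∀ p, p ≤ L - 1 → Rmem p L → False := by
    intro p hp hm
    by_cases hp0 : p = 0
    · subst hp0
      exact hR0L hm
    apply hB
    apply buildBiclique (fun r => cpath H hray (A (2*r)) (A (2*r+1)) p)
      (fun r => A (2*q + r))
    · intro i j _ _
      have h := (hR (show 2*i < 2*i+1 by omega) (show 2*i+1 < 2*q+j by omega)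
        (by omega) (le_refl L)).mpr hm
      rw [hFL (2*i+1) (2*q+j) (by omega)] at h
      exact h
    · intro i j hij _
      intro h
      exact hQe p p (by omega) (by omega) ((hQ (show 2*i < 2*i+1 by omega)
        (show 2*i+1 < 2*j by omega) (show 2*j < 2*j+1 by omega) (by omega) (by omega)).mp h)
    · intro i j hij _
      exact hind (2*q+i) (2*q+j) (by omega)
    · intro i j hij _
      have h1 := (hFmem (2*i) (2*i+1) (by omega) p (by omega)).2
      have h2 := (hFmem (2*j) (2*j+1) (by omega) p (by omega)).1
      have h3 : A (2*i+1) < A (2*j) := hAlt (by omega)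
      omega
    · intro i j hij _
      have h3 : A (2*q+i) < A (2*q+j) := hAlt (by omega)
      omega
    · intro i j _ _
      have h1 := (hFmem (2*i) (2*i+1) (by omega) p (by omega)).2
      have h3 : A (2*i+1) < A (2*q+j) := hAlt (by omega)
      omega
  have h0q' : ∀ q', 1 ≤ q' → q' ≤ L - 1 → Rmem 0 q' → False := by
    intro q' h1 h2 hm
    apply hB
    apply buildBiclique (fun r => A r)
      (fun r => cpath H hray (A (q + 2*r)) (A (q + 2*r+1)) q')
    · intro i j hi _
      have h := (hR (show i < q+2*j by omega) (show q+2*j < q+2*j+1 by omega)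
        (Nat.zero_le L) (by omega)).mpr hm
      rw [hF0 i (q+2*j) (by omega)] at h
      exact h
    · intro i j hij _
      exact hind i j hij
    · intro i j hij _
      intro h
      exact hQe q' q' (by omega) (by omega) ((hQ (show q+2*i < q+2*i+1 by omega)
        (show q+2*i+1 < q+2*j by omega) (show q+2*j < q+2*j+1 by omega) (by omega) (by omega)).mp h)
    · intro i j hij _
      exact (hAlt hij).ne
    · intro i j hij _
      have h1 := (hFmem (q+2*i) (q+2*i+1) (by omega) q' (by omega)).2
      have h2 := (hFmem (q+2*j) (q+2*j+1) (by omega) q' (by omega)).1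
      have h3 : A (q+2*i+1) < A (q+2*j) := hAlt (by omega)
      omega
    · intro i j hi _
      have h2 := (hFmem (q+2*j) (q+2*j+1) (by omega) q' (by omega)).1
      have h3 : A i < A (q+2*j) := hAlt (by omega)
      omega
  -- Stage 3: the triple pattern R
  by_cases hdirt : ∃ p q', p ≤ L ∧ q' ≤ L ∧ Rmem p q' ∧
      ¬((p = L ∧ q' = 1) ∨ (p = L - 1 ∧ q' = 0))
  · have hint : ∀ p q', p ≤ L → q' ≤ L → Rmem p q' →
        ¬((p = L ∧ q' = 1) ∨ (p = L - 1 ∧ q' = 0)) →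
        1 ≤ p ∧ p ≤ L - 1 ∧ 1 ≤ q' ∧ q' ≤ L - 1 := by
      intro p q' hp hq hm hnl
      have hp' : p = 0 ∨ p = L ∨ (1 ≤ p ∧ p ≤ L - 1) := by omega
      have hq'' : q' = 0 ∨ q' = L ∨ (1 ≤ q' ∧ q' ≤ L - 1) := by omega
      rcases hp' with rfl | rfl | hpint
      · rcases hq'' with rfl | rfl | hqint
        · exact absurd hm hR00
        · exact absurd hm hR0L
        · exact absurd hm (fun hm => h0q' q' hqint.1 hqint.2 hm)
      · rcases hq'' with rfl | rfl | hqint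
        · exact absurd hm hRL0
        · exact absurd hm hRLL
        · rcases Nat.lt_or_ge q' 2 with h2 | h2
          · exfalso; apply hnl; left; omega
          · exact absurd hm (hRLq q' h2 hqint.2)
      · rcases hq'' with rfl | rfl | hqint
        · rcases Nat.lt_or_ge p (L-1) with h2 | h2
          · exact absurd hm (hRp0 p (by omega))
          · exfalso; apply hnl; right; omega
        · exact absurd hm (fun hm => hPL p hpint.2 hm)
        · exact ⟨hpint.1, hpint.2, hqint.1, hqint.2⟩
    obtain ⟨p1, q1, hd1⟩ := hdirt
    have hwit : ∃ w, ∃ p q', (p ≤ L ∧ q' ≤ L ∧ Rmem p q' ∧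
        ¬((p = L ∧ q' = 1) ∨ (p = L - 1 ∧ q' = 0))) ∧ (p - q') + (q' - p) = w :=
      ⟨_, p1, q1, hd1, rfl⟩
    obtain ⟨p2, q2, hd2, hw2⟩ := Nat.find_spec hwit
    have hmin : ∀ p q', p ≤ L → q' ≤ L → Rmem p q' →
        ¬((p = L ∧ q' = 1) ∨ (p = L - 1 ∧ q' = 0)) →
        Nat.find hwit ≤ (p - q') + (q' - p) := by
      intro p q' h1 h2 h3 h4
      exact Nat.find_min' hwit ⟨p, q', ⟨h1, h2, h3, h4⟩, rfl⟩
    obtain ⟨hi1, hi2, hi3, hi4⟩ := hint p2 q2 hd2.1 hd2.2.1 hd2.2.2.1 hd2.2.2.2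
    set m := min p2 q2 with hm_def
    set M := max p2 q2 with hM_def
    have hm1 : 1 ≤ m := by omega
    have hM1 : M ≤ L - 1 := by omega
    have hmM : m ≤ M := by omega
    have hkey : ∀ p q', m ≤ p → p ≤ M → m ≤ q' → q' ≤ M → Rmem p q' →
        ((p = m ∧ q' = M) ∨ (p = M ∧ q' = m)) := by
      intro p q' h1 h2 h3 h4 hmem
      have hnl : ¬((p = L ∧ q' = 1) ∨ (p = L - 1 ∧ q' = 0)) := by omega
      have := hmin p q' (by omega) (by omega) hmem hnl
      omega
    by_cases hc1 : Rmem m M <;> by_cases hc2 : Rmem M m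
    · -- zigzag
      apply hP
      apply buildPath (fun n => cpath H hray (A n) (A (n+1)) (if n % 2 = 0 then m else M))
      · intro r _
        by_cases hpar : r % 2 = 0
        · rw [if_pos hpar, if_neg (by omega : ¬((r+1) % 2 = 0))]
          exact (hR (show r < r+1 by omega) (show r+1 < r+2 by omega) (by omega) (by omega)).mpr hc1
        · rw [if_neg hpar, if_pos (by omega : (r+1) % 2 = 0)]
          exact (hR (show r < r+1 by omega) (show r+1 < r+2 by omega) (by omega) (by omega)).mpr hc2
      · intro r r' hrr _
        have hple : ∀ nn : ℕ, (if nn % 2 = 0 then m else M) ≤ L := by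
          intro nn; split <;> omega
        constructor
        · intro h
          exact hQe _ _ (hple r) (hple r') ((hQ (show r < r+1 by omega)
            (show r+1 < r' by omega) (show r' < r'+1 by omega) (hple r) (hple r')).mp h)
        · intro h
          have h1 := (hFmem r (r+1) (by omega) _ (hple r)).2
          have h2 := (hFmem r' (r'+1) (by omega) _ (hple r')).1
          have h3 : A (r+1) < A r' := hAlt (by omega)
          omega
    · -- only (m, M)
      have hmltM : m < M := by
        rcases Nat.lt_or_ge m M with h | h
        · exact h
        · exfalso
          apply hc2
          have e : M = m := by omega
          rw [e]
          rw [e] at hc1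
          exact hc1
      set W := M - m + 1 with hW_def
      have hWpos : 0 < W := by omega
      have hstep : ∀ n, n % W < W - 1 → (n+1) / W = n / W ∧ (n+1) % W = n % W + 1 := by
        intro n h
        have hdiv := Nat.div_add_mod n W
        exact (Nat.div_mod_unique hWpos).mpr ⟨by omega, by omega⟩
      have hjump : ∀ n, n % W = W - 1 → (n+1) / W = n / W + 1 ∧ (n+1) % W = 0 := by
        intro n h
        have hdiv := Nat.div_add_mod n W
        have hexp : W * (n / W + 1) = W * (n / W) + W := by ring
        exact (Nat.div_mod_unique hWpos).mpr ⟨by omega, by omega⟩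
      have hmodlt : ∀ n, n % W < W := fun n => Nat.mod_lt n hWpos
      apply hP
      apply buildPath (fun n => cpath H hray (A (n / W)) (A (n / W + 1)) (M - n % W))
      · intro n _
        by_cases hc : n % W = W - 1
        · obtain ⟨hd1', hd2'⟩ := hjump n hc
          rw [hd1', hd2', hc]
          have e1 : M - (W - 1) = m := by omega
          have e2 : M - 0 = M := by omega
          rw [e1, e2]
          exact (hR (show n/W < n/W+1 by omega) (show n/W+1 < n/W+1+1 by omega)
            (by omega) (by omega)).mpr hc1
        · obtain ⟨hd1', hd2'⟩ := hstep n (by have := hmodlt n; omega)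
          rw [hd1', hd2']
          have e1 : M - n % W = (M - (n % W + 1)) + 1 := by
            have := hmodlt n
            omega
          rw [e1]
          exact (hFadj (n/W) (n/W+1) (by omega) (M - (n%W+1)) (by omega)).symm
      · intro n n' hnn _
        have hd := Nat.div_add_mod n W
        have hd' := Nat.div_add_mod n' W
        have hrle : n / W ≤ n' / W := Nat.div_le_div_right (by omega)
        have hml := hmodlt n
        have hml' := hmodlt n'
        rcases eq_or_lt_of_le hrle with hr | hr
        · have hW0 : W * (n / W) = W * (n' / W) := by rw [hr]
          have ht' : n' % W = n % W + (n' - n) := by omega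
          rw [← hr]
          constructor
          · intro h
            exact hFnochord (n/W) (n/W+1) (by omega) (M - n' % W) (M - n % W)
              (by omega) (by omega) h.symm
          · intro h
            exact hFinj (n/W) (n/W+1) (by omega) (M - n' % W) (M - n % W)
              (by omega) (by omega) h.symm
        · rcases eq_or_lt_of_le (show n / W + 1 ≤ n' / W by omega) with hr2 | hr2
          · rw [← hr2]
            constructor
            · intro h
              have hmm := (hR (show n/W < n/W+1 by omega) (show n/W+1 < n/W+1+1 by omega)
                (show M - n % W ≤ L by omega) (show M - n' % W ≤ L by omega)).mp h
              have hkk := hkey (M - n % W) (M - n' % W) (by omega) (by omega) (by omega)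
                (by omega) hmm
              rcases hkk with ⟨e1, e2⟩ | ⟨e1, e2⟩
              · have ha : n % W = W - 1 := by omega
                have hb : n' % W = 0 := by omega
                have hexp : W * (n / W + 1) = W * (n / W) + W := by ring
                have hW0 : W * (n' / W) = W * (n / W + 1) := by rw [hr2]
                omega
              · apply hc2
                rw [← e1, ← e2]
                exact hmm
            · intro h
              have h1 : cpath H hray (A (n/W)) (A (n/W+1)) (M - n % W) < A (n/W+1) :=
                hFltj (n/W) (n/W+1) (by omega) _ (by omega)
              have h2 := (hFmem (n/W+1) (n/W+1+1) (by omega) (M - n' % W) (by omega)).1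
              omega
          · constructor
            · intro h
              exact hQe _ _ (show M - n % W ≤ L by omega) (show M - n' % W ≤ L by omega)
                ((hQ (show n/W < n/W+1 by omega) (show n/W+1 < n'/W by omega)
                  (show n'/W < n'/W+1 by omega) (by omega) (by omega)).mp h)
            · intro h
              have h1 : cpath H hray (A (n/W)) (A (n/W+1)) (M - n % W) < A (n/W+1) :=
                hFltj (n/W) (n/W+1) (by omega) _ (by omega)
              have h2 := (hFmem (n'/W) (n'/W+1) (by omega) (M - n' % W) (by omega)).1
              have h3 : A (n/W+1) ≤ A (n'/W) := (hAlt hr2).le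
              omega
    · -- only (M, m)
      have hmltM : m < M := by
        rcases Nat.lt_or_ge m M with h | h
        · exact h
        · exfalso
          apply hc1
          have e : M = m := by omega
          rw [e]
          rw [e] at hc2
          exact hc2
      set W := M - m + 1 with hW_def
      have hWpos : 0 < W := by omega
      have hstep : ∀ n, n % W < W - 1 → (n+1) / W = n / W ∧ (n+1) % W = n % W + 1 := by
        intro n h
        have hdiv := Nat.div_add_mod n W
        exact (Nat.div_mod_unique hWpos).mpr ⟨by omega, by omega⟩
      have hjump : ∀ n, n % W = W - 1 → (n+1) / W = n / W + 1 ∧ (n+1) % W = 0 := by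
        intro n h
        have hdiv := Nat.div_add_mod n W
        have hexp : W * (n / W + 1) = W * (n / W) + W := by ring
        exact (Nat.div_mod_unique hWpos).mpr ⟨by omega, by omega⟩
      have hmodlt : ∀ n, n % W < W := fun n => Nat.mod_lt n hWpos
      apply hP
      apply buildPath (fun n => cpath H hray (A (n / W)) (A (n / W + 1)) (m + n % W))
      · intro n _
        by_cases hc : n % W = W - 1
        · obtain ⟨hd1', hd2'⟩ := hjump n hc
          rw [hd1', hd2', hc]
          have e1 : m + (W - 1) = M := by omega
          have e2 : m + 0 = m := by omega
          rw [e1, e2]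
          exact (hR (show n/W < n/W+1 by omega) (show n/W+1 < n/W+1+1 by omega)
            (by omega) (by omega)).mpr hc2
        · obtain ⟨hd1', hd2'⟩ := hstep n (by have := hmodlt n; omega)
          rw [hd1', hd2']
          have e1 : m + (n % W + 1) = (m + n % W) + 1 := by omega
          rw [e1]
          exact hFadj (n/W) (n/W+1) (by omega) (m + n % W) (by have := hmodlt n; omega)
      · intro n n' hnn _
        have hd := Nat.div_add_mod n W
        have hd' := Nat.div_add_mod n' W
        have hrle : n / W ≤ n' / W := Nat.div_le_div_right (by omega)
        have hml := hmodlt n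
        have hml' := hmodlt n'
        rcases eq_or_lt_of_le hrle with hr | hr
        · have hW0 : W * (n / W) = W * (n' / W) := by rw [hr]
          have ht' : n' % W = n % W + (n' - n) := by omega
          rw [← hr]
          constructor
          · intro h
            exact hFnochord (n/W) (n/W+1) (by omega) (m + n % W) (m + n' % W)
              (by omega) (by omega) h
          · intro h
            exact hFinj (n/W) (n/W+1) (by omega) (m + n % W) (m + n' % W)
              (by omega) (by omega) h
        · rcases eq_or_lt_of_le (show n / W + 1 ≤ n' / W by omega) with hr2 | hr2
          · rw [← hr2]
            constructor
            · intro h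
              have hmm := (hR (show n/W < n/W+1 by omega) (show n/W+1 < n/W+1+1 by omega)
                (show m + n % W ≤ L by omega) (show m + n' % W ≤ L by omega)).mp h
              have hkk := hkey (m + n % W) (m + n' % W) (by omega) (by omega) (by omega)
                (by omega) hmm
              rcases hkk with ⟨e1, e2⟩ | ⟨e1, e2⟩
              · apply hc1
                rw [← e1, ← e2]
                exact hmm
              · have ha : n % W = W - 1 := by omega
                have hb : n' % W = 0 := by omega
                have hexp : W * (n / W + 1) = W * (n / W) + W := by ring
                have hW0 : W * (n' / W) = W * (n / W + 1) := by rw [hr2]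
                omega
            · intro h
              have h1 : cpath H hray (A (n/W)) (A (n/W+1)) (m + n % W) < A (n/W+1) :=
                hFltj (n/W) (n/W+1) (by omega) _ (by omega)
              have h2 := (hFmem (n/W+1) (n/W+1+1) (by omega) (m + n' % W) (by omega)).1
              omega
          · constructor
            · intro h
              exact hQe _ _ (show m + n % W ≤ L by omega) (show m + n' % W ≤ L by omega)
                ((hQ (show n/W < n/W+1 by omega) (show n/W+1 < n'/W by omega)
                  (show n'/W < n'/W+1 by omega) (by omega) (by omega)).mp h)
            · intro h
              have h1 : cpath H hray (A (n/W)) (A (n/W+1)) (m + n % W) < A (n/W+1) :=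
                hFltj (n/W) (n/W+1) (by omega) _ (by omega)
              have h2 := (hFmem (n'/W) (n'/W+1) (by omega) (m + n' % W) (by omega)).1
              have h3 : A (n/W+1) ≤ A (n'/W) := (hAlt hr2).le
              omega
    · -- neither: contradiction with (p2, q2)
      exfalso
      have hmem2 := hd2.2.2.1
      rcases le_total p2 q2 with hle | hle
      · apply hc1
        have e1 : m = p2 := by omega
        have e2 : M = q2 := by omega
        rw [e1, e2]
        exact hmem2
      · apply hc2
        have e1 : M = p2 := by omega
        have e2 : m = q2 := by omega
        rw [e1, e2]
        exact hmem2
  · -- clean case: the grand chain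
    push_neg at hdirt
    have hclean : ∀ p q', p ≤ L → q' ≤ L → Rmem p q' →
        ((p = L ∧ q' = 1) ∨ (p = L - 1 ∧ q' = 0)) := by
      intro p q' h1 h2 h3
      by_contra hnl
      exact hnl (hdirt p q' h1 h2 h3)
    have hWpos : 0 < L := by omega
    have hstep : ∀ n, n % L < L - 1 → (n+1) / L = n / L ∧ (n+1) % L = n % L + 1 := by
      intro n h
      have hdiv := Nat.div_add_mod n L
      exact (Nat.div_mod_unique hWpos).mpr ⟨by omega, by omega⟩
    have hjump : ∀ n, n % L = L - 1 → (n+1) / L = n / L + 1 ∧ (n+1) % L = 0 := by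
      intro n h
      have hdiv := Nat.div_add_mod n L
      have hexp : L * (n / L + 1) = L * (n / L) + L := by ring
      exact (Nat.div_mod_unique hWpos).mpr ⟨by omega, by omega⟩
    have hmodlt : ∀ n, n % L < L := fun n => Nat.mod_lt n hWpos
    apply hP
    apply buildPath (fun n => cpath H hray (A (n / L)) (A (n / L + 1)) (n % L))
    · intro n _
      by_cases hc : n % L = L - 1
      · obtain ⟨hd1', hd2'⟩ := hjump n hc
        rw [hd1', hd2', hc]
        have hx := hFadj (n/L) (n/L+1) (by omega) (L-1) (by omega)
        have e : L - 1 + 1 = L := by omega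
        rw [e] at hx
        rw [hFL (n/L) (n/L+1) (by omega)] at hx
        rw [hF0 (n/L+1) (n/L+1+1) (by omega)]
        exact hx
      · obtain ⟨hd1', hd2'⟩ := hstep n (by have := hmodlt n; omega)
        rw [hd1', hd2']
        exact hFadj (n/L) (n/L+1) (by omega) (n % L) (by have := hmodlt n; omega)
    · intro n n' hnn _
      have hd := Nat.div_add_mod n L
      have hd' := Nat.div_add_mod n' L
      have hrle : n / L ≤ n' / L := Nat.div_le_div_right (by omega)
      have hml := hmodlt n
      have hml' := hmodlt n'
      rcases eq_or_lt_of_le hrle with hr | hr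
      · have hW0 : L * (n / L) = L * (n' / L) := by rw [hr]
        have ht' : n' % L = n % L + (n' - n) := by omega
        rw [← hr]
        constructor
        · intro h
          exact hFnochord (n/L) (n/L+1) (by omega) (n % L) (n' % L)
            (by omega) (by omega) h
        · intro h
          exact hFinj (n/L) (n/L+1) (by omega) (n % L) (n' % L)
            (by omega) (by omega) h
      · rcases eq_or_lt_of_le (show n / L + 1 ≤ n' / L by omega) with hr2 | hr2
        · rw [← hr2]
          constructor
          · intro h
            have hmm := (hR (show n/L < n/L+1 by omega) (show n/L+1 < n/L+1+1 by omega)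
              (show n % L ≤ L by omega) (show n' % L ≤ L by omega)).mp h
            have hkk := hclean (n % L) (n' % L) (by omega) (by omega) hmm
            rcases hkk with ⟨e1, e2⟩ | ⟨e1, e2⟩
            · omega
            · have hexp : L * (n / L + 1) = L * (n / L) + L := by ring
              have hW0 : L * (n' / L) = L * (n / L + 1) := by rw [hr2]
              omega
          · intro h
            have h1 : cpath H hray (A (n/L)) (A (n/L+1)) (n % L) < A (n/L+1) :=
              hFltj (n/L) (n/L+1) (by omega) _ (by omega)
            have h2 := (hFmem (n/L+1) (n/L+1+1) (by omega) (n' % L) (by omega)).1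
            omega
        · constructor
          · intro h
            exact hQe _ _ (show n % L ≤ L by omega) (show n' % L ≤ L by omega)
              ((hQ (show n/L < n/L+1 by omega) (show n/L+1 < n'/L by omega)
                (show n'/L < n'/L+1 by omega) (by omega) (by omega)).mp h)
          · intro h
            have h1 : cpath H hray (A (n/L)) (A (n/L+1)) (n % L) < A (n/L+1) :=
              hFltj (n/L) (n/L+1) (by omega) _ (by omega)
            have h2 := (hFmem (n'/L) (n'/L+1) (by omega) (n' % L) (by omega)).1
            have h3 : A (n/L+1) ≤ A (n'/L) := (hAlt hr2).le
            omega

end Main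

section Transfer

/-- Extend a finite graph (pulled back along a path-embedding) to a graph on `ℕ`
containing the standard ray. -/
def extGraph {V : Type} (Gz : SimpleGraph V) (z : ℕ) (σz : Fin z → V) : SimpleGraph ℕ where
  Adj a b := (∃ (ha : a < z) (hb : b < z), Gz.Adj (σz ⟨a, ha⟩) (σz ⟨b, hb⟩)) ∨
    (¬(a < z ∧ b < z) ∧ (a + 1 = b ∨ b + 1 = a))
  symm := by
    refine ⟨fun a b h => ?_⟩
    rcases h with ⟨ha, hb, hadj⟩ | ⟨hn, hor⟩
    · exact Or.inl ⟨hb, ha, hadj.symm⟩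
    · exact Or.inr ⟨fun hc => hn ⟨hc.2, hc.1⟩, hor.symm⟩
  loopless := by
    refine ⟨fun a h => ?_⟩
    rcases h with ⟨ha, hb, hadj⟩ | ⟨hn, hor⟩
    · exact Gz.irrefl hadj
    · omega

lemma extGraph_ray {V : Type} (Gz : SimpleGraph V) (z : ℕ) (σz : Fin z → V)
    (hσ : ∀ ⦃u v⦄, (pathGraph z).Adj u v → Gz.Adj (σz u) (σz v)) (i : ℕ) :
    (extGraph Gz z σz).Adj i (i+1) := by
  by_cases h : i + 1 < z
  · left
    refine ⟨by omega, h, ?_⟩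
    apply hσ
    rw [pathGraph_adj]
    left
    rfl
  · right
    exact ⟨fun hc => h hc.2, Or.inl rfl⟩

/-- The ultraproduct of a family of graphs on `ℕ`. -/
noncomputable def ultraGraph (K : ℕ → SimpleGraph ℕ) : SimpleGraph ℕ where
  Adj a b := {z | (K z).Adj a b} ∈ (Filter.hyperfilter ℕ : Filter ℕ)
  symm := by
    refine ⟨fun a b h => ?_⟩
    have he : {z | (K z).Adj a b} = {z | (K z).Adj b a} := by
      ext z
      exact ⟨fun hh => hh.symm, fun hh => hh.symm⟩
    rwa [he] at h
  loopless := by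
    refine ⟨fun a h => ?_⟩
    have he : {z | (K z).Adj a a} = (∅ : Set ℕ) := by
      ext z
      simp
    rw [he] at h
    exact Filter.empty_notMem _ h

lemma ultraGraph_ray (K : ℕ → SimpleGraph ℕ) (hK : ∀ z i, (K z).Adj i (i+1)) (i : ℕ) :
    (ultraGraph K).Adj i (i+1) :=
  Filter.univ_mem' (fun z => hK z i)

lemma ultra_transfer (K : ℕ → SimpleGraph ℕ) {α : Type} [Fintype α] (W : SimpleGraph α)
    (h : ContainsInduced W (ultraGraph K)) (N : ℕ) :
    ∃ z, N ≤ z ∧ ∃ f : α → ℕ, Function.Injective f ∧ (∀ a, f a < z) ∧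
      (∀ a b, W.Adj a b ↔ (K z).Adj (f a) (f b)) := by
  classical
  obtain ⟨e⟩ := h
  set N' := max N ((Finset.univ.sup (fun a : α => e a)) + 1) with hN'
  have hsets : ∀ p : α × α,
      {z | if W.Adj p.1 p.2 then (K z).Adj (e p.1) (e p.2) else ¬(K z).Adj (e p.1) (e p.2)}
        ∈ (Filter.hyperfilter ℕ : Filter ℕ) := by
    intro p
    by_cases hw : W.Adj p.1 p.2
    · simp only [if_pos hw]
      exact e.map_rel_iff.mpr hw
    · simp only [if_neg hw]
      have hn : ¬(ultraGraph K).Adj (e p.1) (e p.2) := fun hh => hw (e.map_rel_iff.mp hh)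
      have hn' : {z | (K z).Adj (e p.1) (e p.2)} ∉ Filter.hyperfilter ℕ := by
        intro hc
        exact hn (Ultrafilter.mem_coe.mpr hc)
      have hc := Ultrafilter.compl_mem_iff_notMem.mpr hn'
      rw [← Ultrafilter.mem_coe] at hc
      have he : {z | ¬(K z).Adj (e p.1) (e p.2)} = {z | (K z).Adj (e p.1) (e p.2)}ᶜ := rfl
      rw [he]
      exact hc
  have hN'mem : {z | N' ≤ z} ∈ (Filter.hyperfilter ℕ : Filter ℕ) := by
    apply Filter.hyperfilter_le_cofinite
    have hfin : ({z : ℕ | z < N'}).Finite := Set.finite_lt_nat N'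
    have he : {z : ℕ | N' ≤ z} = {z : ℕ | z < N'}ᶜ := by
      ext z
      simp [Nat.not_lt]
    rw [he]
    exact hfin.compl_mem_cofinite
  have hbig : ({z | N' ≤ z} ∩ ⋂ p : α × α,
      {z | if W.Adj p.1 p.2 then (K z).Adj (e p.1) (e p.2) else ¬(K z).Adj (e p.1) (e p.2)})
      ∈ (Filter.hyperfilter ℕ : Filter ℕ) :=
    Filter.inter_mem hN'mem (Filter.iInter_mem.mpr hsets)
  obtain ⟨z, hz⟩ := Filter.nonempty_of_mem hbig
  obtain ⟨hzN, hzp⟩ := hz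
  rw [Set.mem_iInter] at hzp
  have hzN' : N' ≤ z := hzN
  have hlt : ∀ a : α, (e a : ℕ) < z := by
    intro a
    have h1 : (e a : ℕ) ≤ Finset.univ.sup (fun a : α => e a) :=
      Finset.le_sup (Finset.mem_univ a)
    omega
  refine ⟨z, by omega, fun a => e a, ?_, hlt, ?_⟩
  · intro a b hab
    exact e.injective hab
  · intro a b
    constructor
    · intro hw
      have h2 := hzp (a, b)
      simp only [Set.mem_setOf_eq] at h2
      rw [if_pos hw] at h2
      exact h2
    · intro hadj
      by_contra hw
      have h2 := hzp (a, b)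
      simp only [Set.mem_setOf_eq] at h2
      rw [if_neg hw] at h2
      exact h2 hadj

lemma extGraph_adj {V : Type} (Gz : SimpleGraph V) (z : ℕ) (σz : Fin z → V) (a b : ℕ) :
    (extGraph Gz z σz).Adj a b ↔
      ((∃ (ha : a < z) (hb : b < z), Gz.Adj (σz ⟨a, ha⟩) (σz ⟨b, hb⟩)) ∨
        (¬(a < z ∧ b < z) ∧ (a + 1 = b ∨ b + 1 = a))) := Iff.rfl

end Transfer

end LongPath

theorem long_path_gives_clique_biclique_or_induced_path
    (s t q : ℕ) (hs : 1 ≤ s) (ht : 1 ≤ t) (hq : 1 ≤ q) :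
    ∃ z : ℕ, ∀ (V : Type) [Fintype V] (G : SimpleGraph V),
      ContainsSubgraph (pathGraph z) G →
      ContainsInduced (completeGraph (Fin t)) G ∨
      ContainsInduced (completeBipartiteGraph (Fin q) (Fin q)) G ∨
      ContainsInduced (pathGraph s) G := by
  classical
  by_contra hcon
  have key : ∀ z, ∃ (V : Type) (_ : Fintype V) (G : SimpleGraph V),
      ContainsSubgraph (pathGraph z) G ∧
      ¬ContainsInduced (completeGraph (Fin t)) G ∧
      ¬ContainsInduced (completeBipartiteGraph (Fin q) (Fin q)) G ∧
      ¬ContainsInduced (pathGraph s) G := by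
    intro z
    by_contra hz
    apply hcon
    refine ⟨z, ?_⟩
    intro V instV G hsub
    by_contra hdisj
    push_neg at hdisj
    exact hz ⟨V, instV, G, hsub, hdisj.1, hdisj.2.1, hdisj.2.2⟩
  choose V instV G hsub hnK hnB hnP using key
  choose σ hσinj hσadj using hsub
  have hKray : ∀ z i, (LongPath.extGraph (G z) z (σ z)).Adj i (i+1) := fun z i =>
    LongPath.extGraph_ray (G z) z (σ z) (hσadj z) i
  have hray : ∀ i, (LongPath.ultraGraph (fun z => LongPath.extGraph (G z) z (σ z))).Adj i (i+1) :=
    LongPath.ultraGraph_ray _ hKray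
  have htrans : ∀ {α : Type} (instα : Fintype α) (W : SimpleGraph α),
      ContainsInduced W (LongPath.ultraGraph (fun z => LongPath.extGraph (G z) z (σ z))) →
      ∃ z, ContainsInduced W (G z) := by
    intro α instα W h
    letI := instα
    obtain ⟨z, hzN, f, hfinj, hflt, hfadj⟩ := LongPath.ultra_transfer _ W h 0
    have hbridge : ∀ a b : α,
        (LongPath.extGraph (G z) z (σ z)).Adj (f a) (f b) ↔
          (G z).Adj (σ z ⟨f a, hflt a⟩) (σ z ⟨f b, hflt b⟩) := by
      intro a b
      rw [LongPath.extGraph_adj]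
      constructor
      · intro h2
        rcases h2 with ⟨ha, hb, hadj⟩ | ⟨hn, _⟩
        · exact hadj
        · exact absurd ⟨hflt a, hflt b⟩ hn
      · intro h2
        exact Or.inl ⟨hflt a, hflt b, h2⟩
    refine ⟨z, ⟨⟨⟨fun a => σ z ⟨f a, hflt a⟩, ?_⟩, ?_⟩⟩⟩
    · intro a b hab
      have h1 := hσinj z hab
      have h2 : f a = f b := congrArg Fin.val h1
      exact hfinj h2
    · intro a b
      show (G z).Adj (σ z ⟨f a, hflt a⟩) (σ z ⟨f b, hflt b⟩) ↔ _
      rw [← hbridge, ← hfadj]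
  rcases LongPath.inf_main hray s t q with h | h | h
  · obtain ⟨z, hz⟩ := htrans inferInstance _ h
    exact hnK z hz
  · obtain ⟨z, hz⟩ := htrans inferInstance _ h
    exact hnB z hz
  · obtain ⟨z, hz⟩ := htrans inferInstance _ h
    exact hnP z hz
end

section
/- For every finite simple graph H and all integers k ≥ 1 and t ≥ 1 there exists a natural number l such that every finite simple graph G that is P_k-free and K_{t,t}-free and admits a graph homomorphism to H contains no path on l vertices as a subgraph. -/
open SimpleGraph

namespace GRSaux

variable {V : Type} (G : SimpleGraph V)

/-- a (finite) path in `G`, given as the first `n` values of `w`. -/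
def GChain (n : ℕ) (w : ℕ → V) : Prop :=
  (∀ i, i + 2 ≤ n → G.Adj (w i) (w (i+1))) ∧ (∀ i j, i < j → j < n → w i ≠ w j)

/-- an induced path in `G`. -/
def GInd (n : ℕ) (w : ℕ → V) : Prop :=
  GChain G n w ∧ ∀ i j, i + 2 ≤ j → j < n → ¬ G.Adj (w i) (w j)

theorem gind_embed {n : ℕ} {w : ℕ → V} (h : GInd G n w) :
    Nonempty (pathGraph n ↪g G) := by
  obtain ⟨⟨hadj, hinj⟩, hnadj⟩ := h
  refine ⟨⟨⟨fun i => w i.val, ?_⟩, ?_⟩⟩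
  · intro a b hab
    by_contra hne
    rcases Nat.lt_or_ge a.val b.val with h1 | h1
    · exact hinj a.val b.val h1 b.isLt hab
    · rcases Nat.lt_or_ge b.val a.val with h2 | h2
      · exact hinj b.val a.val h2 a.isLt hab.symm
      · exact hne (Fin.ext (le_antisymm h2 h1))
  · intro a b
    show G.Adj (w a.val) (w b.val) ↔ (pathGraph n).Adj a b
    constructor
    · intro hadj'
      rw [pathGraph_adj]
      rcases Nat.lt_or_ge a.val b.val with h1 | h1
      · left
        by_contra hne
        have : a.val + 2 ≤ b.val := by omega
        exact hnadj a.val b.val this b.isLt hadj'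
      · rcases Nat.lt_or_ge b.val a.val with h2 | h2
        · right
          by_contra hne
          have : b.val + 2 ≤ a.val := by omega
          exact hnadj b.val a.val this a.isLt hadj'.symm
        · exact absurd hadj' (by
            have : a = b := Fin.ext (le_antisymm h2 h1)
            subst this; exact G.irrefl)
    · intro hab
      rw [pathGraph_adj] at hab
      rcases hab with h1 | h1
      · have := hadj a.val (by omega)
        rwa [h1] at this
      · have := hadj b.val (by omega)
        rw [h1] at this
        exact this.symm

theorem gind_trunc {n m : ℕ} {w : ℕ → V} (h : GInd G n w) (hm : m ≤ n) : GInd G m w := by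
  obtain ⟨⟨hadj, hinj⟩, hnadj⟩ := h
  exact ⟨⟨fun i hi => hadj i (by omega), fun i j h1 h2 => hinj i j h1 (by omega)⟩,
    fun i j h1 h2 => hnadj i j h1 (by omega)⟩

theorem gind_short {k : ℕ} (hP : ¬ ContainsInduced (pathGraph k) G)
    {n : ℕ} {w : ℕ → V} (h : GInd G n w) : n < k := by
  by_contra hge
  exact hP (gind_embed G (gind_trunc G h (by omega)))

/-- minimal connectors are induced paths -/
theorem min_connector {n : ℕ} {w : ℕ → V} (h : GChain G n w) (hn : 1 ≤ n) :
    ∃ m u, GInd G m u ∧ 1 ≤ m ∧ u 0 = w 0 ∧ u (m-1) = w (n-1) ∧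
      ∀ i, i < m → ∃ j, j < n ∧ u i = w j := by
  classical
  set A : Set ℕ := {m | ∃ u : ℕ → V, GChain G m u ∧ 1 ≤ m ∧ u 0 = w 0 ∧ u (m-1) = w (n-1) ∧
      ∀ i, i < m → ∃ j, j < n ∧ u i = w j} with hA
  have hne : n ∈ A := ⟨w, h, hn, rfl, rfl, fun i hi => ⟨i, hi, rfl⟩⟩
  have hex : ∃ m, m ∈ A := ⟨n, hne⟩
  obtain ⟨m, hmA, hmin⟩ := Nat.lt_wfRel.wf.has_min A hex
  obtain ⟨u, hu, hm1, hu0, hue, humem⟩ := hmA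
  refine ⟨m, u, ⟨hu, ?_⟩, hm1, hu0, hue, humem⟩
  intro i j hij hjm hadj
  -- splice out the part between i and j
  set δ := j - i - 1 with hδ
  have hδ1 : 1 ≤ δ := by omega
  set m' := m - δ with hm'
  have hm'lt : m' < m := by omega
  set u' : ℕ → V := fun x => if x ≤ i then u x else u (x + δ) with hu'
  have hval : ∀ x, x ≤ i → u' x = u x := fun x hx => by simp [hu', hx]
  have hval2 : ∀ x, i < x → u' x = u (x + δ) := fun x hx => by
    simp [hu', Nat.not_le.mpr hx]
  refine hmin m' ⟨u', ⟨?_, ?_⟩, by omega, ?_, ?_, ?_⟩ hm'lt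
  · -- adjacency
    intro x hx
    rcases Nat.lt_or_ge (x+1) i with h1 | h1
    · rw [hval x (by omega), hval (x+1) (by omega)]
      exact hu.1 x (by omega)
    · rcases Nat.eq_or_lt_of_le h1 with h2 | h2
      · -- x + 1 = i
        rw [hval x (by omega), hval (x+1) (by omega)]
        exact hu.1 x (by omega)
      · rcases Nat.eq_or_lt_of_le (Nat.succ_le_of_lt h2) with h3 | h3
        · -- x = i
          have hxi : x = i := by omega
          rw [hval x (by omega), hval2 (x+1) (by omega)]
          have : x + 1 + δ = j := by omega
          rw [this, hxi]
          exact hadj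
        · -- x > i
          rw [hval2 x (by omega), hval2 (x+1) (by omega)]
          have : x + δ + 1 = x + 1 + δ := by omega
          rw [← this]
          exact hu.1 (x + δ) (by omega)
  · -- injectivity
    intro a b hab hbm'
    have key : ∀ x, x < m' → ∃ y, y < m ∧ u' x = u y ∧
        ((x ≤ i ∧ y = x) ∨ (i < x ∧ y = x + δ)) := by
      intro x hx
      rcases le_or_gt x i with h1 | h1
      · exact ⟨x, by omega, hval x h1, Or.inl ⟨h1, rfl⟩⟩
      · exact ⟨x + δ, by omega, hval2 x h1, Or.inr ⟨h1, rfl⟩⟩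
    obtain ⟨ya, hya, hva, hca⟩ := key a (by omega)
    obtain ⟨yb, hyb, hvb, hcb⟩ := key b hbm'
    rw [hva, hvb]
    have : ya < yb := by rcases hca with ⟨h1,h2⟩|⟨h1,h2⟩ <;> rcases hcb with ⟨h3,h4⟩|⟨h3,h4⟩ <;> omega
    exact hu.2 ya yb this hyb
  · rw [hval 0 (by omega)]; exact hu0
  · rcases le_or_gt (m' - 1) i with h1 | h1
    · -- impossible : m' - 1 ≥ i + 1
      omega
    · rw [hval2 (m'-1) h1]
      have : m' - 1 + δ = m - 1 := by omega
      rw [this]; exact hue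
  · intro x hx
    rcases le_or_gt x i with h1 | h1
    · rw [hval x h1]; exact humem x (by omega)
    · rw [hval2 x h1]; exact humem (x + δ) (by omega)


theorem ramsey_aux (C : Type) [Fintype C] [Nonempty C] (r : ℕ)
    (IH : ∀ m' : ℕ, ∃ N : ℕ, ∀ c : (Fin r → ℕ) → C,
      ∃ g : ℕ → ℕ, StrictMono g ∧ (∀ i, i < m' → g i < N) ∧
        ∃ κ : C, ∀ t : Fin r → ℕ, StrictMono t → (∀ i, t i < m') → c (fun i => g (t i)) = κ) :
    ∀ s : ℕ, ∃ D : ℕ, 1 ≤ D ∧ ∀ (c : (Fin (r+1) → ℕ) → C) (e : ℕ → ℕ), StrictMono e →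
      ∃ (x : ℕ → ℕ) (κ : ℕ → C), StrictMono x ∧ (∀ j, ∃ a, x j = e a) ∧
        (∀ j, j < s → ∃ a, a < D ∧ x j = e a) ∧
        (∀ j, j < s → ∀ v : Fin r → ℕ, StrictMono v → (∀ i, j < v i) → (∀ i, v i < s) →
          c (Fin.cons (x j) (fun i => x (v i))) = κ j) := by
  classical
  intro s
  induction s with
  | zero =>
    refine ⟨1, le_refl 1, fun c e he => ⟨e, fun _ => Classical.arbitrary C, he,
      fun j => ⟨j, rfl⟩, fun j hj => absurd hj (by omega), fun j hj => absurd hj (by omega)⟩⟩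
  | succ s ih =>
    obtain ⟨D, hD1, hand⟩ := ih
    obtain ⟨B, hB⟩ := IH D
    refine ⟨B + 2, by omega, ?_⟩
    intro c e he
    set c' : (Fin r → ℕ) → C := fun u => c (Fin.cons (e 0) (fun i => e (u i + 1))) with hc'
    obtain ⟨g', hg'm, hg'b, κ₀, hκ₀⟩ := hB c'
    set e₁ : ℕ → ℕ := fun i => e (g' i + 1) with he₁def
    have he₁ : StrictMono e₁ := fun a b hab => he (by have := hg'm hab; omega)
    obtain ⟨x', κ', hx'm, hx'range, hx'b, hx'h⟩ := hand c e₁ he₁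
    have hx'e : ∀ j, ∃ a, x' j = e (g' a + 1) := by
      intro j; obtain ⟨a, ha⟩ := hx'range j; exact ⟨a, ha⟩
    refine ⟨fun j => if j = 0 then e 0 else x' (j-1),
           fun j => if j = 0 then κ₀ else κ' (j-1), ?_, ?_, ?_, ?_⟩
    · -- StrictMono
      intro a b hab
      have hb0 : ¬ (b = 0) := by omega
      simp only [hb0, if_false]
      rcases Nat.eq_zero_or_pos a with ha0 | ha0
      · subst ha0
        simp only [if_pos rfl]
        obtain ⟨a', ha'⟩ := hx'e (b-1)
        rw [ha']
        exact he (by omega)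
      · have ha0' : ¬ (a = 0) := by omega
        simp only [ha0', if_false]
        exact hx'm (by omega)
    · -- range
      intro j
      rcases Nat.eq_zero_or_pos j with h0 | h0
      · subst h0; exact ⟨0, by simp⟩
      · obtain ⟨a, ha⟩ := hx'e (j-1)
        refine ⟨g' a + 1, ?_⟩
        simp only [Nat.pos_iff_ne_zero.mp h0, if_false]
        exact ha
    · -- bound
      intro j hj
      rcases Nat.eq_zero_or_pos j with h0 | h0
      · subst h0; exact ⟨0, by omega, by simp⟩
      · obtain ⟨a, haD, ha⟩ := hx'b (j-1) (by omega)
        have ha' : x' (j-1) = e (g' a + 1) := ha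
        refine ⟨g' a + 1, ?_, ?_⟩
        · have := hg'b a haD; omega
        · simp only [Nat.pos_iff_ne_zero.mp h0, if_false]; exact ha'
    · -- homogeneity
      intro j hj v hv hvgt hvlt
      rcases Nat.eq_zero_or_pos j with h0 | h0
      · subst h0
        -- head case
        have hv1 : ∀ i, 1 ≤ v i := fun i => hvgt i
        have hvs : ∀ i, v i - 1 < s := fun i => by have := hvlt i; have := hv1 i; omega
        have hax : ∀ i : Fin r, ∃ a, a < D ∧ x' (v i - 1) = e₁ a := fun i => hx'b _ (hvs i)
        choose a haD hae using hax
        have ham : StrictMono a := by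
          intro i i' hii
          have h1 : x' (v i - 1) < x' (v i' - 1) := by
            apply hx'm
            have := hv hii; have := hv1 i; omega
          rw [hae i, hae i'] at h1
          exact he₁.lt_iff_lt.mp h1
        have hcol := hκ₀ a ham haD
        have heq : (Fin.cons (if (0:ℕ) = 0 then e 0 else x' 0) (fun i =>
            if v i = 0 then e 0 else x' (v i - 1)) : Fin (r+1) → ℕ)
            = (Fin.cons (e 0) (fun i => e (g' (a i) + 1))) := by
          funext i
          refine Fin.cases ?_ ?_ i
          · simp
          · intro i'
            simp only [Fin.cons_succ]
            have : ¬ (v i' = 0) := by have := hv1 i'; omega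
            simp only [this, if_false]
            exact hae i'
        simp only [if_pos rfl]
        calc c (Fin.cons (e 0) (fun i => if v i = 0 then e 0 else x' (v i - 1)))
            = c (Fin.cons (e 0) (fun i => e (g' (a i) + 1))) := by
              rw [← heq]; simp
          _ = κ₀ := hcol
      · -- later case
        have hj0 : ¬ (j = 0) := by omega
        simp only [hj0, if_false]
        have hv1 : ∀ i, 1 ≤ v i := fun i => by have := hvgt i; omega
        have hres := hx'h (j-1) (by omega) (fun i => v i - 1)
          (fun i i' hii => by
            show v i - 1 < v i' - 1
            have := hv hii; have := hv1 i; omega)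
          (fun i => by show j - 1 < v i - 1; have := hvgt i; omega)
          (fun i => by show v i - 1 < s; have := hvlt i; have := hv1 i; omega)
        calc c (Fin.cons (x' (j-1)) (fun i => if v i = 0 then e 0 else x' (v i - 1)))
            = c (Fin.cons (x' (j-1)) (fun i => x' (v i - 1))) := by
              congr 1
              funext i
              refine Fin.cases ?_ ?_ i
              · simp
              · intro i'
                simp only [Fin.cons_succ]
                have : ¬ (v i' = 0) := by have := hv1 i'; omega
                simp only [this, if_false]
          _ = κ' (j-1) := hres

theorem tupleRamsey (C : Type) [Fintype C] [Nonempty C] :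
    ∀ (r m : ℕ), ∃ N : ℕ, ∀ c : (Fin r → ℕ) → C,
      ∃ g : ℕ → ℕ, StrictMono g ∧ (∀ i, i < m → g i < N) ∧
        ∃ κ : C, ∀ t : Fin r → ℕ, StrictMono t → (∀ i, t i < m) → c (fun i => g (t i)) = κ := by
  classical
  intro r
  induction r with
  | zero =>
    intro m
    refine ⟨m + 1, fun c => ⟨id, strictMono_id, fun i hi => by simpa using Nat.lt_succ_of_lt hi, c (fun _ => 0), ?_⟩⟩
    intro t ht htlt
    congr 1
    funext i
    exact i.elim0
  | succ r IH =>
    intro m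
    set n : ℕ := Fintype.card C * m + 1 with hn
    obtain ⟨D, hD1, hand⟩ := ramsey_aux C r IH n
    refine ⟨D, fun c => ?_⟩
    obtain ⟨x, κ, hxm, hxrange, hxb, hxh⟩ := hand c id strictMono_id
    -- pigeonhole on κ over range n
    have hmaps : ∀ j ∈ Finset.range n, κ j ∈ (Finset.univ : Finset C) :=
      fun j _ => Finset.mem_univ _
    have hcard : (Finset.univ : Finset C).card * (m - 1) < (Finset.range n).card := by
      rw [Finset.card_range, Finset.card_univ]
      have h1 : Fintype.card C * (m-1) ≤ Fintype.card C * m := by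
        apply Nat.mul_le_mul_left; omega
      omega
    obtain ⟨κstar, _, hfib⟩ :=
      Finset.exists_lt_card_fiber_of_mul_lt_card_of_maps_to hmaps hcard
    have hfib' : m ≤ ((Finset.range n).filter (fun j => κ j = κstar)).card := by omega
    obtain ⟨T, hTsub, hTcard⟩ := Finset.exists_subset_card_eq hfib'
    set sel := T.orderEmbOfFin hTcard with hsel
    have hselmem : ∀ i : Fin m, sel i ∈ T := fun i => T.orderEmbOfFin_mem hTcard i
    have hselfib : ∀ i : Fin m, sel i < n ∧ κ (sel i) = κstar := by
      intro i
      have := hTsub (hselmem i)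
      simp only [Finset.mem_filter, Finset.mem_range] at this
      exact this
    refine ⟨fun i => if h : i < m then x (sel ⟨i, h⟩) else x (n + i), ?_, ?_, κstar, ?_⟩
    · -- StrictMono
      intro a b hab
      by_cases ha : a < m <;> by_cases hb : b < m
      · simp only [dif_pos ha, dif_pos hb]
        exact hxm (sel.strictMono (show (⟨a, ha⟩ : Fin m) < ⟨b, hb⟩ from hab))
      · simp only [dif_pos ha, dif_neg hb]
        exact hxm (by have := (hselfib ⟨a, ha⟩).1; omega)
      · omega
      · simp only [dif_neg ha, dif_neg hb]
        exact hxm (by omega)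
    · -- bound
      intro i hi
      simp only [dif_pos hi]
      obtain ⟨a, haD, hae⟩ := hxb (sel ⟨i, hi⟩) (hselfib ⟨i, hi⟩).1
      rw [hae]; exact haD
    · -- homogeneity
      intro t ht htlt
      set tm : Fin (r+1) → Fin m := fun i => ⟨t i, htlt i⟩ with htm
      have hkey := hxh (sel (tm 0)) (hselfib (tm 0)).1
        (fun i : Fin r => sel (tm i.succ))
        (fun i i' hii => sel.strictMono (show tm i.succ < tm i'.succ by
          simp only [htm, Fin.mk_lt_mk]; exact ht (Fin.succ_lt_succ_iff.mpr hii)))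
        (fun i => sel.strictMono (show tm 0 < tm i.succ by
          simp only [htm, Fin.mk_lt_mk]; exact ht (Fin.succ_pos i)))
        (fun i => (hselfib (tm i.succ)).1)
      have heq : (fun i => if h : t i < m then x (sel ⟨t i, h⟩) else x (n + t i))
          = (Fin.cons (x (sel (tm 0))) (fun i : Fin r => x (sel (tm i.succ)))
             : Fin (r+1) → ℕ) := by
        funext i
        refine Fin.cases ?_ ?_ i
        · simp only [Fin.cons_zero, dif_pos (htlt 0)]; rfl
        · intro i'
          simp only [Fin.cons_succ, dif_pos (htlt i'.succ)]; rfl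
      rw [heq, hkey, (hselfib (tm 0)).2]

theorem strictMono4 {a b a' b' : ℕ} (h1 : a < b) (h2 : b < a') (h3 : a' < b') :
    StrictMono (![a, b, a', b'] : Fin 4 → ℕ) := by
  intro x y hxy
  fin_cases x <;> fin_cases y <;> simp_all <;> omega

theorem lt4 {a b a' b' M : ℕ} (h1 : a < b) (h2 : b < a') (h3 : a' < b') (h : b' < M) :
    ∀ i : Fin 4, (![a, b, a', b'] : Fin 4 → ℕ) i < M := by
  intro i
  fin_cases i <;> simp <;> omega

theorem comp4 (g : ℕ → ℕ) (a b a' b' : ℕ) :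
    (fun i => g ((![a, b, a', b'] : Fin 4 → ℕ) i)) = (![g a, g b, g a', g b'] : Fin 4 → ℕ) := by
  funext i
  fin_cases i <;> simp

end GRSaux

open GRSaux in
theorem H_colorable_graphs_have_no_long_paths
    (W : Type) [Fintype W] (H : SimpleGraph W) (k t : ℕ) (hk : 1 ≤ k) (ht : 1 ≤ t) :
    ∃ l : ℕ, ∀ (V : Type) [Fintype V] (G : SimpleGraph V),
      ¬ ContainsInduced (pathGraph k) G →
      ¬ ContainsInduced (completeBipartiteGraph (Fin t) (Fin t)) G →
      Nonempty (G →g H) →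
      ¬ ContainsSubgraph (pathGraph l) G := by
  classical
  have hk0 : 0 < k := hk
  obtain ⟨s, hs⟩ : ∃ s, s = Fintype.card W * (t-1) + 1 := ⟨_, rfl⟩
  obtain ⟨m, hm⟩ : ∃ m, m = 4*s + k + 10 := ⟨_, rfl⟩
  haveI : Nonempty (Fin k × Fin k × (Fin k → Fin k → Bool)) :=
    ⟨⟨0, hk0⟩, ⟨0, hk0⟩, fun _ _ => true⟩
  obtain ⟨N, hN⟩ := tupleRamsey (Fin k × Fin k × (Fin k → Fin k → Bool)) 4 m
  refine ⟨N + 2, ?_⟩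
  intro V _ G hP hK hHom hSub
  obtain ⟨f⟩ := hHom
  obtain ⟨sg, hσinj, hσadj⟩ := hSub
  obtain ⟨L, hL0⟩ : ∃ L, L = N + 2 := ⟨_, rfl⟩
  set P : ℕ → V := fun i => sg ⟨i % (N+2), Nat.mod_lt _ (by omega)⟩ with hPdef
  have hPadj : ∀ i, i + 1 < L → G.Adj (P i) (P (i+1)) := by
    intro i hi
    simp only [hPdef]
    apply hσadj
    rw [pathGraph_adj]
    left
    show (i % (N+2)) + 1 = (i+1) % (N+2)
    rw [Nat.mod_eq_of_lt (by omega), Nat.mod_eq_of_lt (by omega)]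
  have hPinj : ∀ i j, i < j → j < L → P i ≠ P j := by
    intro i j hij hj heq
    simp only [hPdef] at heq
    have := hσinj heq
    rw [Fin.mk.injEq, Nat.mod_eq_of_lt (by omega), Nat.mod_eq_of_lt (by omega)] at this
    omega
  have noLong : ∀ n w, GInd G n w → n < k := fun n w hw => gind_short G hP hw
  have hk3 : 3 ≤ k := by
    have h1 : GInd G 2 P := by
      refine ⟨⟨?_, ?_⟩, ?_⟩
      · intro i hi
        have : i = 0 := by omega
        subst this
        exact hPadj 0 (by omega)
      · intro i j h1 h2
        exact hPinj i j h1 (by omega)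
      · intro i j h1 h2
        omega
    have := noLong 2 P h1
    omega
  have hblk : ∀ a b : ℕ, ∃ (nb : ℕ) (wb : ℕ → V), a < b → b < L →
      (GInd G nb wb ∧ 2 ≤ nb ∧ nb < k ∧ wb 0 = P a ∧ wb (nb-1) = P b ∧
       ∀ i, i < nb → ∃ e, a ≤ e ∧ e ≤ b ∧ wb i = P e) := by
    intro a b
    by_cases hab : a < b ∧ b < L
    · obtain ⟨hab1, hab2⟩ := hab
      have hsub : GChain G (b - a + 1) (fun i => P (a + i)) := by
        constructor
        · intro i hi
          show G.Adj (P (a+i)) (P (a+i+1))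
          exact hPadj (a+i) (by omega)
        · intro i j h1 h2
          exact hPinj (a+i) (a+j) (by omega) (by omega)
      obtain ⟨nb, wb, hind, hnb1, h0, hend, hmemw⟩ := min_connector G hsub (by omega)
      refine ⟨nb, wb, fun _ _ => ⟨hind, ?_, noLong _ _ hind, ?_, ?_, ?_⟩⟩
      · -- 2 ≤ nb
        by_contra hlt
        have hnb : nb = 1 := by omega
        have he1 : wb 0 = P a := by simpa using h0
        have he2 : wb 0 = P b := by
          have h' : wb (nb - 1) = P (a + (b - a + 1 - 1)) := hend
          rw [hnb, show a + (b - a + 1 - 1) = b from by omega] at h'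
          exact h'
        exact hPinj a b hab1 hab2 (he1 ▸ he2 ▸ rfl)
      · simpa using h0
      · have h' : wb (nb - 1) = P (a + (b - a + 1 - 1)) := hend
        rw [show a + (b - a + 1 - 1) = b from by omega] at h'
        exact h'
      · intro i hi
        obtain ⟨j, hj, hjw⟩ := hmemw i hi
        exact ⟨a + j, by omega, by omega, hjw⟩
    · exact ⟨0, fun _ => P 0, fun h1 h2 => absurd ⟨h1, h2⟩ hab⟩
  choose bn bw hbn using hblk
  set enc : ℕ → Fin k := fun n => ⟨n % k, Nat.mod_lt _ hk0⟩ with hencdef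
  have hencinj : ∀ x y, x < k → y < k → enc x = enc y → x = y := by
    intro x y hx hy hxy
    have := congrArg Fin.val hxy
    simp only [hencdef] at this
    rwa [Nat.mod_eq_of_lt hx, Nat.mod_eq_of_lt hy] at this
  obtain ⟨g, hgm, hgb, κ, hκ⟩ := hN (fun q =>
    (enc (bn (q 0) (q 1)), enc (bn (q 2) (q 3)),
     fun p p' => decide (G.Adj (bw (q 0) (q 1) p.val) (bw (q 2) (q 3) p'.val))))
  have hvalid : ∀ a b, a < b → b < m →
      (GInd G (bn (g a) (g b)) (bw (g a) (g b)) ∧ 2 ≤ bn (g a) (g b) ∧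
       bn (g a) (g b) < k ∧ bw (g a) (g b) 0 = P (g a) ∧
       bw (g a) (g b) (bn (g a) (g b) - 1) = P (g b) ∧
       ∀ i, i < bn (g a) (g b) → ∃ e, g a ≤ e ∧ e ≤ g b ∧ bw (g a) (g b) i = P e) := by
    intro a b h1 h2
    exact hbn (g a) (g b) (hgm h1) (by have := hgb b h2; omega)
  have hcomp : ∀ a b a' b' : ℕ, a < b → b < a' → a' < b' → b' < m →
      enc (bn (g a) (g b)) = κ.1 ∧ enc (bn (g a') (g b')) = κ.2.1 ∧
      ∀ p p' : Fin k,
        decide (G.Adj (bw (g a) (g b) p.val) (bw (g a') (g b') p'.val)) = κ.2.2 p p' := by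
    intro a b a' b' h1 h2 h3 h4
    have h5 := hκ ![a,b,a',b'] (strictMono4 h1 h2 h3) (lt4 h1 h2 h3 h4)
    rw [comp4 g a b a' b'] at h5
    simp only [Matrix.cons_val_zero, Matrix.cons_val_one, Matrix.cons_val_two,
      Matrix.cons_val_three, Matrix.vecHead, Matrix.vecTail, Function.comp] at h5
    refine ⟨?_, ?_, ?_⟩
    · exact congrArg Prod.fst h5
    · exact congrArg (fun z => z.2.1) h5
    · intro p p'
      exact congrFun (congrFun (congrArg (fun z => z.2.2) h5) p) p'
  set Λ : ℕ := bn (g 0) (g 1) with hΛdef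
  have hΛ2 : 2 ≤ Λ := (hvalid 0 1 (by omega) (by omega)).2.1
  have hΛk : Λ < k := (hvalid 0 1 (by omega) (by omega)).2.2.1
  have hLam : ∀ a b, a < b → b + 3 ≤ m → bn (g a) (g b) = Λ := by
    intro a b h1 h2
    have e1 := (hcomp a b (b+1) (b+2) h1 (by omega) (by omega) (by omega)).1
    have e2 := (hcomp 0 1 2 3 (by omega) (by omega) (by omega) (by omega)).1
    exact hencinj _ _ (hvalid a b h1 (by omega)).2.2.1 hΛk (e1.trans e2.symm)
  have hM : ∀ a b a' b' : ℕ, a < b → b < a' → a' < b' → b' < m → ∀ p p' : Fin k,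
      (G.Adj (bw (g a) (g b) p.val) (bw (g a') (g b') p'.val)) ↔ κ.2.2 p p' = true := by
    intro a b a' b' h1 h2 h3 h4 p p'
    rw [← (hcomp a b a' b' h1 h2 h3 h4).2.2 p p']
    simp
  by_cases hEdge : ∃ p p' : Fin k, p.val < Λ ∧ p'.val < Λ ∧ κ.2.2 p p' = true
  · -- biclique case
    obtain ⟨α, β, hα, hβ, hTrue⟩ := hEdge
    set xx : ℕ → V := fun i => bw (g (2*i)) (g (2*i+1)) α.val with hxxdef
    set yy : ℕ → V := fun j => bw (g (2*s + 2*j)) (g (2*s + 2*j+1)) β.val with hyydef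
    have hadjxy : ∀ i j, i < s → j < s → G.Adj (xx i) (yy j) := by
      intro i j hi hj
      have := hM (2*i) (2*i+1) (2*s+2*j) (2*s+2*j+1)
        (by omega) (by omega) (by omega) (by omega) α β
      exact this.mpr hTrue
    have hexx : ∀ i : ℕ, ∃ e, i < s → (g (2*i) ≤ e ∧ e ≤ g (2*i+1) ∧ xx i = P e) := by
      intro i
      by_cases hi : i < s
      · obtain ⟨e, he⟩ := (hvalid (2*i) (2*i+1) (by omega) (by omega)).2.2.2.2.2 α.val
          (by rw [hLam (2*i) (2*i+1) (by omega) (by omega)]; exact hα)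
        exact ⟨e, fun _ => he⟩
      · exact ⟨0, fun h => absurd h hi⟩
    have heyy : ∀ j : ℕ, ∃ e, j < s →
        (g (2*s+2*j) ≤ e ∧ e ≤ g (2*s+2*j+1) ∧ yy j = P e) := by
      intro j
      by_cases hj : j < s
      · obtain ⟨e, he⟩ := (hvalid (2*s+2*j) (2*s+2*j+1) (by omega) (by omega)).2.2.2.2.2 β.val
          (by rw [hLam (2*s+2*j) (2*s+2*j+1) (by omega) (by omega)]; exact hβ)
        exact ⟨e, fun _ => he⟩
      · exact ⟨0, fun h => absurd h hj⟩
    choose exf hexf using hexx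
    choose eyf heyf using heyy
    have hexb : ∀ i, i < s → exf i < N + 2 := by
      intro i hi
      have h1 := (hexf i hi).2.1
      have h2 := hgb (2*i+1) (by omega)
      omega
    have heyb : ∀ j, j < s → eyf j < N + 2 := by
      intro j hj
      have h1 := (heyf j hj).2.1
      have h2 := hgb (2*s+2*j+1) (by omega)
      omega
    have hxxlt : ∀ i i', i < i' → i' < s → exf i < exf i' := by
      intro i i' h1 h2
      have e1 := (hexf i (by omega)).2.1
      have e2 := (hexf i' h2).1
      have e3 := hgm (show 2*i+1 < 2*i' by omega)
      omega
    have hyylt : ∀ j j', j < j' → j' < s → eyf j < eyf j' := by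
      intro j j' h1 h2
      have e1 := (heyf j (by omega)).2.1
      have e2 := (heyf j' h2).1
      have e3 := hgm (show 2*s+2*j+1 < 2*s+2*j' by omega)
      omega
    have hxylt : ∀ i j, i < s → j < s → exf i < eyf j := by
      intro i j h1 h2
      have e1 := (hexf i h1).2.1
      have e2 := (heyf j h2).1
      have e3 := hgm (show 2*i+1 < 2*s+2*j by omega)
      omega
    have hxxinj : ∀ i i', i < s → i' < s → xx i = xx i' → i = i' := by
      intro i i' hi hi' hE
      rcases lt_trichotomy i i' with h|h|h
      · exfalso
        rw [(hexf i hi).2.2, (hexf i' hi').2.2] at hE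
        exact hPinj _ _ (hxxlt i i' h hi') (by rw [hL0]; exact hexb i' hi') hE
      · exact h
      · exfalso
        rw [(hexf i hi).2.2, (hexf i' hi').2.2] at hE
        exact hPinj _ _ (hxxlt i' i h hi) (by rw [hL0]; exact hexb i hi) hE.symm
    have hyyinj : ∀ j j', j < s → j' < s → yy j = yy j' → j = j' := by
      intro j j' hj hj' hE
      rcases lt_trichotomy j j' with h|h|h
      · exfalso
        rw [(heyf j hj).2.2, (heyf j' hj').2.2] at hE
        exact hPinj _ _ (hyylt j j' h hj') (by rw [hL0]; exact heyb j' hj') hE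
      · exact h
      · exfalso
        rw [(heyf j hj).2.2, (heyf j' hj').2.2] at hE
        exact hPinj _ _ (hyylt j' j h hj) (by rw [hL0]; exact heyb j hj) hE.symm
    have hxyne : ∀ i j, i < s → j < s → xx i ≠ yy j := by
      intro i j hi hj hE
      rw [(hexf i hi).2.2, (heyf j hj).2.2] at hE
      exact hPinj _ _ (hxylt i j hi hj) (by rw [hL0]; exact heyb j hj) hE
    have hpig : ∀ (FF : ℕ → W), ∃ (w0 : W) (TT : Finset ℕ), TT.card = t ∧
        ∀ j ∈ TT, j < s ∧ FF j = w0 := by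
      intro FF
      have hmaps : ∀ j ∈ Finset.range s, FF j ∈ (Finset.univ : Finset W) :=
        fun j _ => Finset.mem_univ _
      have hcard : (Finset.univ : Finset W).card * (t-1) < (Finset.range s).card := by
        rw [Finset.card_range, Finset.card_univ, hs]
        exact Nat.lt_succ_self _
      obtain ⟨w0, _, hfib⟩ :=
        Finset.exists_lt_card_fiber_of_mul_lt_card_of_maps_to hmaps hcard
      have hge : t ≤ ((Finset.range s).filter (fun j => FF j = w0)).card := by omega
      obtain ⟨TT, hTsub, hTcard⟩ := Finset.exists_subset_card_eq hge
      refine ⟨w0, TT, hTcard, fun j hj => ?_⟩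
      have := hTsub hj
      simp only [Finset.mem_filter, Finset.mem_range] at this
      exact this
    obtain ⟨w₁, TA, hTAcard, hTA⟩ := hpig (fun i => f (xx i))
    obtain ⟨w₂, TB, hTBcard, hTB⟩ := hpig (fun j => f (yy j))
    set selA := TA.orderEmbOfFin hTAcard with hselA
    set selB := TB.orderEmbOfFin hTBcard with hselB
    have hselAf : ∀ i : Fin t, selA i < s ∧ f (xx (selA i)) = w₁ :=
      fun i => hTA _ (TA.orderEmbOfFin_mem hTAcard i)
    have hselBf : ∀ j : Fin t, selB j < s ∧ f (yy (selB j)) = w₂ :=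
      fun j => hTB _ (TB.orderEmbOfFin_mem hTBcard j)
    have hnoadj : ∀ (u v : V), f u = f v → ¬ G.Adj u v := by
      intro u v huv hadj
      have := f.map_adj hadj
      rw [huv] at this
      exact H.irrefl this
    refine hK ⟨⟨⟨Sum.elim (fun i => xx (selA i)) (fun j => yy (selB j)), ?_⟩, ?_⟩⟩
    · -- injective
      intro u v huv
      rcases u with i | i <;> rcases v with i' | i'
      · simp only [Sum.elim_inl] at huv
        have := hxxinj _ _ (hselAf i).1 (hselAf i').1 huv
        have := selA.injective this
        rw [this]
      · exact absurd huv (hxyne _ _ (hselAf i).1 (hselBf i').1)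
      · exact absurd huv.symm (hxyne _ _ (hselAf i').1 (hselBf i).1)
      · simp only [Sum.elim_inr] at huv
        have := hyyinj _ _ (hselBf i).1 (hselBf i').1 huv
        have := selB.injective this
        rw [this]
    · -- map_rel_iff
      intro u v
      rcases u with i | i <;> rcases v with i' | i'
      · simp only [Function.Embedding.coeFn_mk, Sum.elim_inl, completeBipartiteGraph_adj,
          Sum.isLeft_inl, Sum.isRight_inl, and_false, false_and, and_true, true_and, or_self]
        constructor
        · intro hadj
          exact (hnoadj _ _ (((hselAf i).2).trans ((hselAf i').2).symm) hadj).elim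
        · intro hfalse
          simp at hfalse
      · simp only [Function.Embedding.coeFn_mk, Sum.elim_inl, Sum.elim_inr,
          completeBipartiteGraph_adj, Sum.isLeft_inl, Sum.isRight_inr, Sum.isRight_inl,
          Sum.isLeft_inr, and_true, true_and, and_false, false_and, or_false]
        constructor
        · intro _; trivial
        · intro _; exact hadjxy _ _ (hselAf i).1 (hselBf i').1
      · simp only [Function.Embedding.coeFn_mk, Sum.elim_inl, Sum.elim_inr,
          completeBipartiteGraph_adj, Sum.isLeft_inl, Sum.isRight_inr, Sum.isRight_inl,
          Sum.isLeft_inr, and_true, true_and, and_false, false_and, false_or]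
        constructor
        · intro _; trivial
        · intro _; exact (hadjxy _ _ (hselAf i').1 (hselBf i).1).symm
      · simp only [Function.Embedding.coeFn_mk, Sum.elim_inr, completeBipartiteGraph_adj,
          Sum.isLeft_inr, Sum.isRight_inr, and_false, false_and, and_true, true_and, or_self]
        constructor
        · intro hadj
          exact (hnoadj _ _ (((hselBf i).2).trans ((hselBf i').2).symm) hadj).elim
        · intro hfalse
          simp at hfalse
  · -- chain case
    have hFalse : ∀ p p' : Fin k, p.val < Λ → p'.val < Λ → κ.2.2 p p' = false := by
      intro p p' h1 h2
      by_contra hne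
      exact hEdge ⟨p, p', h1, h2, by simpa using hne⟩
    have hSep : ∀ r r' o o' : ℕ, r + 2 ≤ r' → r' + 1 < m → o < Λ → o' < Λ →
        ¬ G.Adj (bw (g r) (g (r+1)) o) (bw (g r') (g (r'+1)) o') := by
      intro r r' o o' h1 h2 h3 h4 hadj
      have hm' := hM r (r+1) r' (r'+1) (by omega) (by omega) (by omega) (by omega)
        ⟨o, by omega⟩ ⟨o', by omega⟩
      have : κ.2.2 ⟨o, by omega⟩ ⟨o', by omega⟩ = true := hm'.mp hadj
      rw [hFalse ⟨o, by omega⟩ ⟨o', by omega⟩ h3 h4] at this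
      exact absurd this (by simp)
    set Λ1 : ℕ := Λ - 1 with hΛ1def
    have hΛ1pos : 0 < Λ1 := by omega
    have hblkr : ∀ r, r < k → bn (g r) (g (r+1)) = Λ := by
      intro r hr
      exact hLam r (r+1) (by omega) (by omega)
    have hBW0 : ∀ r, r < k → bw (g r) (g (r+1)) 0 = P (g r) := by
      intro r hr
      exact (hvalid r (r+1) (by omega) (by omega)).2.2.2.1
    have hBWe : ∀ r, r < k → bw (g r) (g (r+1)) Λ1 = P (g (r+1)) := by
      intro r hr
      have h := (hvalid r (r+1) (by omega) (by omega)).2.2.2.2.1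
      rw [hblkr r hr] at h
      have hΛ1 : Λ - 1 = Λ1 := by omega
      rw [hΛ1] at h
      exact h
    have hBWadj : ∀ r o, r < k → o + 1 ≤ Λ1 → G.Adj (bw (g r) (g (r+1)) o) (bw (g r) (g (r+1)) (o+1)) := by
      intro r o hr ho
      have h := (hvalid r (r+1) (by omega) (by omega)).1.1.1 o
      rw [hblkr r hr] at h
      exact h (by omega)
    have hBWinj : ∀ r o o', r < k → o < Λ → o' < Λ → bw (g r) (g (r+1)) o = bw (g r) (g (r+1)) o' → o = o' := by
      intro r o o' hr ho ho' hE
      have h := (hvalid r (r+1) (by omega) (by omega)).1.1.2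
      rw [hblkr r hr] at h
      rcases lt_trichotomy o o' with hc | hc | hc
      · exact absurd hE (h o o' hc ho')
      · exact hc
      · exact absurd hE.symm (h o' o hc ho)
    have hmemb : ∀ r o, r < k → o ≤ Λ1 → ∃ e, g r ≤ e ∧ e ≤ g (r+1) ∧ bw (g r) (g (r+1)) o = P e ∧
        (o < Λ1 → e < g (r+1)) := by
      intro r o hr ho
      have h := (hvalid r (r+1) (by omega) (by omega)).2.2.2.2.2 o
      rw [hblkr r hr] at h
      obtain ⟨e, he1, he2, he3⟩ := h (by omega)
      refine ⟨e, he1, he2, he3, ?_⟩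
      intro hoΛ1
      rcases Nat.lt_or_ge e (g (r+1)) with hc | hc
      · exact hc
      · exfalso
        have hee : e = g (r+1) := by omega
        have : bw (g r) (g (r+1)) o = bw (g r) (g (r+1)) Λ1 := by
          rw [he3, hee, hBWe r hr]
        exact absurd (hBWinj r o Λ1 hr (by omega) (by omega) this) (by omega)
    set wcat : ℕ → V := fun idx =>
      if idx < k * Λ1 then bw (g (idx / Λ1)) (g (idx / Λ1+1)) (idx % Λ1) else P (g k) with hwcatdef
    have hrep : ∀ r o, r < k → o ≤ Λ1 → wcat (r * Λ1 + o) = bw (g r) (g (r+1)) o := by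
      intro r o hr ho
      rcases Nat.lt_or_ge o Λ1 with hoΛ | hoΛ
      · have hlt : r * Λ1 + o < k * Λ1 := by
          have h1 : (r+1) * Λ1 ≤ k * Λ1 := Nat.mul_le_mul_right _ (by omega)
          have h2 : (r+1) * Λ1 = r * Λ1 + Λ1 := by ring
          omega
        have hdiv : (r * Λ1 + o) / Λ1 = r := by
          rw [mul_comm, Nat.mul_add_div hΛ1pos, Nat.div_eq_of_lt hoΛ, Nat.add_zero]
        have hmod : (r * Λ1 + o) % Λ1 = o := by
          rw [mul_comm, Nat.mul_add_mod, Nat.mod_eq_of_lt hoΛ]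
        simp only [hwcatdef]
        rw [if_pos hlt, hdiv, hmod]
      · have hoe : o = Λ1 := by omega
        rw [hoe]
        rcases Nat.lt_or_ge (r+1) k with hrk | hrk
        · have he1 : r * Λ1 + Λ1 = (r+1) * Λ1 := by ring
          have hlt : (r+1) * Λ1 < k * Λ1 := (Nat.mul_lt_mul_right hΛ1pos).mpr (by omega)
          have hdiv : ((r+1) * Λ1) / Λ1 = r + 1 := Nat.mul_div_cancel _ hΛ1pos
          have hmod : ((r+1) * Λ1) % Λ1 = 0 := Nat.mul_mod_left _ _
          rw [he1]
          simp only [hwcatdef]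
          rw [if_pos hlt, hdiv, hmod, hBW0 (r+1) hrk]
          exact (hBWe r (by omega)).symm
        · have hre : r + 1 = k := by omega
          have he1 : r * Λ1 + Λ1 = k * Λ1 := by rw [← hre]; ring
          rw [he1]
          simp only [hwcatdef]
          rw [if_neg (by omega), hBWe r (by omega), hre]
    have hcano : ∀ x, x ≤ k * Λ1 → ∃ r o, r < k ∧ o ≤ Λ1 ∧ x = r * Λ1 + o ∧
        wcat x = bw (g r) (g (r+1)) o ∧ (x < k * Λ1 → o < Λ1) := by
      intro x hx
      rcases Nat.lt_or_ge x (k * Λ1) with hlt | hge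
      · have hrk : x / Λ1 < k := (Nat.div_lt_iff_lt_mul hΛ1pos).mpr (by omega)
        have hor : x % Λ1 < Λ1 := Nat.mod_lt _ hΛ1pos
        have hxe : x = (x / Λ1) * Λ1 + x % Λ1 := by
          rw [mul_comm]
          exact (Nat.div_add_mod x Λ1).symm
        have hval := hrep (x / Λ1) (x % Λ1) hrk (le_of_lt hor)
        rw [← hxe] at hval
        exact ⟨x / Λ1, x % Λ1, hrk, le_of_lt hor, hxe, hval, fun _ => hor⟩
      · have hxe : x = k * Λ1 := by omega
        have hk1 : k - 1 + 1 = k := by omega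
        have he2 : (k-1) * Λ1 + Λ1 = k * Λ1 := by
          calc (k-1) * Λ1 + Λ1 = ((k-1)+1) * Λ1 := by ring
            _ = k * Λ1 := by rw [hk1]
        have hval := hrep (k-1) Λ1 (by omega) (le_refl _)
        rw [he2] at hval
        rw [← hxe] at hval
        exact ⟨k-1, Λ1, by omega, le_refl _, by omega, hval, fun h => absurd hxe (by omega)⟩
    have hwchain : GChain G (k * Λ1 + 1) wcat := by
      constructor
      · intro idx hidx
        have hrk : idx / Λ1 < k := (Nat.div_lt_iff_lt_mul hΛ1pos).mpr (by omega)
        have hor : idx % Λ1 < Λ1 := Nat.mod_lt _ hΛ1pos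
        have hxe : idx = (idx / Λ1) * Λ1 + idx % Λ1 := by
          rw [mul_comm]
          exact (Nat.div_add_mod idx Λ1).symm
        have e1 := hrep (idx / Λ1) (idx % Λ1) hrk (le_of_lt hor)
        rw [← hxe] at e1
        have e2 := hrep (idx / Λ1) (idx % Λ1 + 1) hrk (by omega)
        have e2' : (idx / Λ1) * Λ1 + (idx % Λ1 + 1) = idx + 1 := by omega
        rw [e2'] at e2
        rw [e1, e2]
        exact hBWadj (idx / Λ1) (idx % Λ1) hrk (by omega)
      · intro idx jdx hij hjk
        obtain ⟨r, o, hrk, hoΛ, hxe, hval, hsharp⟩ := hcano idx (by omega)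
        obtain ⟨r', o', hrk', hoΛ', hxe', hval', hsharp'⟩ := hcano jdx (by omega)
        rw [hval, hval']
        obtain ⟨e, he1, he2, he3, he4⟩ := hmemb r o hrk hoΛ
        obtain ⟨e', he'1, he'2, he'3, he'4⟩ := hmemb r' o' hrk' hoΛ'
        have hor2 : o < Λ1 := hsharp (by omega)
        have hee : e < g (r+1) := he4 hor2
        rcases lt_trichotomy r r' with hcase | hcase | hcase
        · intro hEq
          rw [he3, he'3] at hEq
          have hlt : e < e' := by
            have h1 : g (r+1) ≤ g r' := hgm.le_iff_le.mpr (by omega)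
            omega
          have hbnd : e' < L := by
            have h1 := hgb (r'+1) (by omega)
            rw [hL0]
            omega
          exact hPinj e e' hlt hbnd hEq
        · subst hcase
          intro hEq
          have ho' := hBWinj r o o' hrk (by omega) (by omega) hEq
          have : idx = jdx := by rw [hxe, hxe', ho']
          omega
        · exfalso
          have ha : jdx ≤ (r'+1) * Λ1 := by
            have h2 : (r'+1) * Λ1 = r' * Λ1 + Λ1 := by ring
            omega
          have hb : (r'+1) * Λ1 ≤ r * Λ1 := Nat.mul_le_mul_right _ (by omega)
          omega
    obtain ⟨n₃, w₃, hind₃, hn₃1, h₃0, h₃e, h₃mem⟩ := min_connector G hwchain (by omega)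
    have h₃0' : w₃ 0 = P (g 0) := by
      rw [h₃0]
      have := hrep 0 0 (by omega) (by omega)
      simp only [Nat.zero_mul, Nat.add_zero] at this
      rw [this]
      exact hBW0 0 (by omega)
    have h₃e' : w₃ (n₃ - 1) = P (g k) := by
      rw [h₃e]
      have he : k * Λ1 + 1 - 1 = k * Λ1 := by omega
      rw [he]
      simp only [hwcatdef]
      rw [if_neg (by omega)]
    have hrep3 : ∀ i, i < n₃ → ∃ r o, r < k ∧ o ≤ Λ1 ∧ w₃ i = bw (g r) (g (r+1)) o := by
      intro i hi
      obtain ⟨idx, hidx, hw⟩ := h₃mem i hi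
      obtain ⟨r, o, hrk, hoΛ, _, hval, _⟩ := hcano idx (by omega)
      exact ⟨r, o, hrk, hoΛ, by rw [hw, hval]⟩
    have hgbnd : ∀ i, i ≤ k → g i < L := by
      intro i hi
      have := hgb i (by omega)
      omega
    have hclaim : ∀ i, i < n₃ → ∀ r o, r < k → o ≤ Λ1 → w₃ i = bw (g r) (g (r+1)) o → r ≤ i := by
      intro i
      induction i with
      | zero =>
        intro hi r o hrk hoΛ hE
        obtain ⟨e, he1, he2, he3, _⟩ := hmemb r o hrk hoΛ
        rw [h₃0', he3] at hE
        by_contra hr0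
        have h1 : g 0 < e := by
          have := hgm (show 0 < r by omega)
          omega
        exact hPinj (g 0) e h1 (by
          have := hgbnd (r+1) (by omega)
          omega) hE
      | succ i ih =>
        intro hi r' o' hrk' hoΛ' hE
        obtain ⟨r, o, hrk, hoΛ, hw⟩ := hrep3 i (by omega)
        have hri := ih (by omega) r o hrk hoΛ hw
        by_contra hr'
        have hsep2 := hSep r r' o o' (by omega) (by omega) (by omega) (by omega)
        have hadj := hind₃.1.1 i (by omega)
        rw [hw, hE] at hadj
        exact hsep2 hadj
    have hfin : k ≤ n₃ := by
      obtain ⟨r, o, hrk, hoΛ, hw⟩ := hrep3 (n₃ - 1) (by omega)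
      obtain ⟨e, he1, he2, he3, _⟩ := hmemb r o hrk hoΛ
      have hpe : P (g k) = P e := by rw [← h₃e', hw, he3]
      have hekr : e = g k := by
        by_contra hne
        rcases Nat.lt_or_ge e (g k) with hc | hc
        · exact hPinj e (g k) hc (hgbnd k (le_refl _)) hpe.symm
        · exact hPinj (g k) e (by omega) (by
            have := hgbnd (r+1) (by omega)
            omega) hpe
      have h1 : g k ≤ g (r+1) := by omega
      have h2 : k ≤ r + 1 := hgm.le_iff_le.mp h1
      have h3 := hclaim (n₃-1) (by omega) r o hrk hoΛ hw
      omega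
    have := noLong n₃ w₃ hind₃
    omega
end

section
/- Let k ≥ 4 be an integer and let G be a finite simple graph that is P_k-free and not bipartite. Then there exists an odd integer m with 3 ≤ m ≤ k such that G contains the cycle C_m as an induced subgraph. -/
open SimpleGraph

namespace OddHoleAux

variable {V : Type} {G : SimpleGraph V}

/-- A closed walk of length `n`, given as a function `ℕ → V`. -/
def CW (G : SimpleGraph V) (n : ℕ) (c : ℕ → V) : Prop :=
  c n = c 0 ∧ ∀ i < n, G.Adj (c i) (c (i + 1))

lemma cw_rotate {n : ℕ} {c : ℕ → V} (h : CW G n c) (s : ℕ) (hs : s ≤ n) :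
    CW G n (fun i => if s + i ≤ n then c (s + i) else c (s + i - n)) := by
  obtain ⟨h0, hadj⟩ := h
  have hn0 : c n = c 0 := h0
  constructor
  · by_cases h1 : s + n ≤ n
    · have hs0 : s = 0 := by omega
      subst hs0
      simp only [if_pos h1, if_pos (by omega : 0 + 0 ≤ n)]
      simpa using hn0
    · simp only [if_neg h1, if_pos (by omega : s + 0 ≤ n)]
      have e : s + n - n = s + 0 := by omega
      rw [e]
  · intro i hi
    by_cases h1 : s + (i + 1) ≤ n
    · simp only [if_pos (by omega : s + i ≤ n), if_pos h1]
      have e : s + (i + 1) = (s + i) + 1 := by omega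
      rw [e]
      exact hadj (s + i) (by omega)
    · by_cases h2 : s + i ≤ n
      · have hsn : s + i = n := by omega
        simp only [if_pos h2, if_neg h1]
        have e1 : s + i = n := hsn
        have e2 : s + (i + 1) - n = 1 := by omega
        rw [e1, e2, hn0]
        exact hadj 0 (by omega)
      · simp only [if_neg h1, if_neg h2]
        have e : s + (i + 1) - n = (s + i - n) + 1 := by omega
        rw [e]
        exact hadj (s + i - n) (by omega)

lemma cw_closeup {n m : ℕ} {c : ℕ → V} (h : CW G n c) (hm : m ≤ n)
    (hadj : G.Adj (c 0) (c m)) :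
    CW G (m + 1) (fun i => if i ≤ m then c i else c 0) := by
  obtain ⟨h0, hstep⟩ := h
  constructor
  · simp only [if_neg (by omega : ¬ m + 1 ≤ m), if_pos (by omega : 0 ≤ m)]
  · intro i hi
    by_cases h1 : i + 1 ≤ m
    · simp only [if_pos (by omega : i ≤ m), if_pos h1]
      exact hstep i (by omega)
    · have him : i = m := by omega
      subst him
      simp only [if_pos (le_refl i), if_neg (by omega : ¬ i + 1 ≤ i)]
      exact hadj.symm

lemma cw_prefix {n m : ℕ} {c : ℕ → V} (h : CW G n c) (hm : m ≤ n)
    (he : c m = c 0) : CW G m c :=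
  ⟨he, fun i hi => h.2 i (by omega)⟩

end OddHoleAux

open OddHoleAux in
theorem non_bipartite_path_free_has_short_odd_hole
    (k : ℕ) (hk : 4 ≤ k) (V : Type) [Fintype V] (G : SimpleGraph V)
    (hPfree : ¬ ContainsInduced (pathGraph k) G)
    (hnotbip : ¬ ∃ f : V → Bool, ∀ ⦃u v⦄, G.Adj u v → f u ≠ f v) :
    ∃ m : ℕ, Odd m ∧ 3 ≤ m ∧ m ≤ k ∧ ContainsInduced (cycleGraph m) G := by
  classical
  -- Step 1: there exists an odd closed walk.
  have hexists : ∃ n, Odd n ∧ ∃ c : ℕ → V, CW G n c := by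
    by_contra hno
    push_neg at hno
    apply hnotbip
    -- every closed walk is even
    have heven : ∀ (x : V) (w : G.Walk x x), Even w.length := by
      intro x w
      by_contra hodd
      rw [Nat.not_even_iff_odd] at hodd
      refine hno w.length hodd w.getVert ?_
      refine ⟨by simp, fun i hi => w.adj_getVert_succ hi⟩
    -- build a 2-coloring from parities of walks to component representatives
    have hrep : ∀ v : V, G.Reachable ((G.connectedComponentMk v).out) v := by
      intro v
      exact ConnectedComponent.exact ((G.connectedComponentMk v).out_eq)
    refine ⟨fun v => decide (Odd ((hrep v).some.length)), ?_⟩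
    intro u v huv hfeq
    have hcomp : G.connectedComponentMk v = G.connectedComponentMk u :=
      ConnectedComponent.sound huv.symm.reachable
    have hout : (G.connectedComponentMk v).out = (G.connectedComponentMk u).out := by
      rw [hcomp]
    set pu := (hrep u).some with hpu
    set pv := (hrep v).some with hpv
    have W : G.Walk ((G.connectedComponentMk u).out) ((G.connectedComponentMk u).out) :=
      pu.append (Walk.cons huv ((pv.copy hout rfl).reverse))
    have hWe : Even (pu.length + pv.length + 1) := by
      have := heven _ (pu.append (Walk.cons huv ((pv.copy hout rfl).reverse)))
      simpa [Walk.length_append, Walk.length_cons, Walk.length_reverse,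
        Walk.length_copy, Nat.add_comm, Nat.add_assoc, Nat.add_left_comm] using this
    simp only [decide_eq_decide] at hfeq
    rw [Nat.even_add_one, Nat.even_add] at hWe
    rw [← Nat.not_even_iff_odd, ← Nat.not_even_iff_odd] at hfeq
    tauto
  -- Step 2: minimal odd closed walk
  set n := Nat.find hexists with hn
  obtain ⟨hodd, c, hcw⟩ := Nat.find_spec hexists
  have hmin : ∀ L, L < n → Odd L → ∀ c' : ℕ → V, ¬ CW G L c' := by
    intro L hL hLodd c' hc'
    exact Nat.find_min hexists hL ⟨hLodd, c', hc'⟩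
  have hn1 : n ≠ 1 := by
    intro h1
    have := hcw.2 0 (by omega)
    rw [show (0 : ℕ) + 1 = n by omega, hcw.1] at this
    exact G.irrefl this
  have hn3 : 3 ≤ n := by
    rw [Nat.odd_iff] at hodd
    omega
  -- no repeated vertices (except the endpoints 0, n)
  have hne : ∀ a b, a < b → b ≤ n → ¬(a = 0 ∧ b = n) → c a ≠ c b := by
    intro a b hab hbn hne0 heq
    set m := b - a with hm
    have hm0 : 0 < m := by omega
    have hmn : m < n := by omega
    have hrot := cw_rotate hcw a (by omega)
    set d : ℕ → V := fun i => if a + i ≤ n then c (a + i) else c (a + i - n) with hd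
    have hd0 : d 0 = c a := by
      simp only [hd, if_pos (by omega : a + 0 ≤ n), Nat.add_zero]
    have hdm : d m = c b := by
      simp only [hd, if_pos (by omega : a + m ≤ n)]
      congr 1
      omega
    have hw1 : CW G m d := cw_prefix hrot (by omega) (by rw [hdm, hd0, heq])
    have hrot2 := cw_rotate hrot m (by omega)
    set e : ℕ → V := fun i => if m + i ≤ n then d (m + i) else d (m + i - n) with he
    have he0 : e 0 = d m := by
      simp only [he, if_pos (by omega : m + 0 ≤ n), Nat.add_zero]
    have heN : e (n - m) = d n := by
      simp only [he, if_pos (by omega : m + (n - m) ≤ n)]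
      congr 1
      omega
    have hw2 : CW G (n - m) e :=
      cw_prefix hrot2 (by omega) (by rw [heN, hrot.1, he0, hdm, hd0, heq])
    have hpar : Odd m ∨ Odd (n - m) := by
      rw [Nat.odd_iff] at hodd ⊢
      rw [Nat.odd_iff]
      omega
    rcases hpar with hp | hp
    · exact hmin m hmn hp d hw1
    · exact hmin (n - m) (by omega) hp e hw2
  -- no chords
  have hchord : ∀ a b, a < b → b < n → b ≠ a + 1 → ¬(a = 0 ∧ b = n - 1) →
      ¬ G.Adj (c a) (c b) := by
    intro a b hab hbn hb1 hne0 hadj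
    set m := b - a with hm
    have hm2 : 2 ≤ m := by omega
    have hmn : m ≤ n - 2 := by omega
    have hrot := cw_rotate hcw a (by omega)
    set d : ℕ → V := fun i => if a + i ≤ n then c (a + i) else c (a + i - n) with hd
    have hd0 : d 0 = c a := by
      simp only [hd, if_pos (by omega : a + 0 ≤ n), Nat.add_zero]
    have hdm : d m = c b := by
      simp only [hd, if_pos (by omega : a + m ≤ n)]
      congr 1
      omega
    have hadj1 : G.Adj (d 0) (d m) := by rw [hd0, hdm]; exact hadj
    have hw1 : CW G (m + 1) _ := cw_closeup hrot (by omega) hadj1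
    have hrot2 := cw_rotate hrot m (by omega)
    set e : ℕ → V := fun i => if m + i ≤ n then d (m + i) else d (m + i - n) with he
    have he0 : e 0 = d m := by
      simp only [he, if_pos (by omega : m + 0 ≤ n), Nat.add_zero]
    have heN : e (n - m) = d n := by
      simp only [he, if_pos (by omega : m + (n - m) ≤ n)]
      congr 1
      omega
    have hadj2 : G.Adj (e 0) (e (n - m)) := by
      rw [he0, heN, hrot.1, hd0, hdm]
      exact hadj.symm
    have hw2 : CW G ((n - m) + 1) _ := cw_closeup hrot2 (by omega) hadj2
    have hpar : Odd (m + 1) ∨ Odd ((n - m) + 1) := by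
      rw [Nat.odd_iff] at hodd ⊢
      rw [Nat.odd_iff]
      omega
    rcases hpar with hp | hp
    · exact hmin (m + 1) (by omega) hp _ hw1
    · exact hmin ((n - m) + 1) (by omega) hp _ hw2
  -- injectivity on [0, n)
  have hinj : ∀ a b, a < n → b < n → c a = c b → a = b := by
    intro a b ha hb heq
    rcases lt_trichotomy a b with h | h | h
    · exact absurd heq (hne a b h (by omega) (by omega))
    · exact h
    · exact absurd heq.symm (hne b a h (by omega) (by omega))
  -- full adjacency characterization
  have hGadjIff : ∀ x y, x < n → y < n →
      (G.Adj (c x) (c y) ↔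
        (x = y + 1 ∨ (x = 0 ∧ y = n - 1) ∨ y = x + 1 ∨ (y = 0 ∧ x = n - 1))) := by
    have hAdjIff : ∀ a b, a < b → b < n →
        (G.Adj (c a) (c b) ↔ (b = a + 1 ∨ (a = 0 ∧ b = n - 1))) := by
      intro a b hab hbn
      constructor
      · intro h
        by_cases h1 : b = a + 1
        · exact Or.inl h1
        by_cases h2 : a = 0 ∧ b = n - 1
        · exact Or.inr h2
        exact absurd h (hchord a b hab hbn h1 h2)
      · rintro (rfl | ⟨rfl, rfl⟩)
        · exact hcw.2 a (by omega)
        · have := hcw.2 (n - 1) (by omega)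
          rw [show n - 1 + 1 = n by omega, hcw.1] at this
          exact this.symm
    intro x y hx hy
    rcases lt_trichotomy x y with h | h | h
    · rw [hAdjIff x y h hy]; omega
    · subst h
      exact iff_of_false (G.irrefl) (by omega)
    · rw [G.adj_comm, hAdjIff y x h hx]; omega
  -- arithmetic helper for `Fin` subtraction
  have hmodIff : ∀ x y : ℕ, x < n → y < n →
      (((n - y) + x) % n = 1 ↔ (x = y + 1 ∨ (x = 0 ∧ y = n - 1))) := by
    intro x y hx hy
    rcases Nat.lt_or_ge ((n - y) + x) n with h | h
    · rw [Nat.mod_eq_of_lt h]; omega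
    · have h2 : (n - y) + x - n < n := by omega
      rw [Nat.mod_eq_sub_mod h, Nat.mod_eq_of_lt h2]; omega
  -- the induced cycle embedding
  have hcyc : ContainsInduced (cycleGraph n) G := by
    refine ⟨⟨⟨fun i => c i.val, ?_⟩, ?_⟩⟩
    · intro a b h
      exact Fin.ext (hinj a.val b.val a.isLt b.isLt h)
    · intro a b
      show G.Adj (c a.val) (c b.val) ↔ _
      rw [cycleGraph_adj', Fin.sub_def, Fin.sub_def]
      simp only [Fin.val_mk]
      rw [hmodIff a.val b.val a.isLt b.isLt, hmodIff b.val a.val b.isLt a.isLt,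
        hGadjIff a.val b.val a.isLt b.isLt]
      omega
  -- the length bound
  have hle : n ≤ k := by
    by_contra hnk
    push_neg at hnk
    apply hPfree
    refine ⟨⟨⟨fun i => c i.val, ?_⟩, ?_⟩⟩
    · intro a b h
      exact Fin.ext (hinj a.val b.val (by omega) (by omega) h)
    · intro a b
      show G.Adj (c a.val) (c b.val) ↔ _
      rw [pathGraph_adj, hGadjIff a.val b.val (by omega) (by omega)]
      have ha := a.isLt
      have hb := b.isLt
      omega
  exact ⟨n, hodd, hn3, hle, hcyc⟩
end

section
/- Let k ≥ 7 be an odd integer and let G be a finite simple graph that is P_k-free and contains no cycle on m vertices as a subgraph for any odd m with 3 ≤ m < k - 2. Let c : Z/kZ → V(G) be injective with c(a) adjacent to c(b) if and only if b - a = ±1 (so the image of c is an induced cycle on k vertices), and let v be a vertex not in the image of c that has at least one neighbor in the image of c. Then there exists i ∈ Z/kZ such that the set of neighbors of v in the image of c is exactly {c(i), c(i+2)}, or exactly {c(i), c(i+4)}, or exactly {c(i), c(i+2), c(i+4)}. -/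
open SimpleGraph

lemma aux_cast_inj (k : ℕ) [NeZero k] {x y : ℕ} (hx : x < k) (hy : y < k)
    (h : (x : ZMod k) = (y : ZMod k)) : x = y := by
  have := congrArg ZMod.val h
  rwa [ZMod.val_cast_of_lt hx, ZMod.val_cast_of_lt hy] at this

lemma aux_not_dvd (k : ℕ) (hk : 7 ≤ k) (hodd : Odd k) {n : ℕ}
    (h1 : n % 2 = 0) (h2 : 0 < n) (h3 : n ≤ 12) : ((n : ZMod k) ≠ 0) := by
  intro h0
  rw [ZMod.natCast_eq_zero_iff] at h0
  have hk2 : k % 2 = 1 := Nat.odd_iff.mp hodd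
  obtain ⟨m, rfl⟩ := h0
  rcases m with _ | _ | m
  · rw [Nat.mul_zero] at h2; omega
  · rw [Nat.mul_one] at h1 h3; omega
  · have h14 : 14 ≤ k * (m + 1 + 1) :=
      le_trans (by omega : (14:ℕ) ≤ 7 * (m + 1 + 1)) (Nat.mul_le_mul_right _ hk)
    omega

lemma aux_bound (k : ℕ) (hk : 7 ≤ k) {V : Type} (G : SimpleGraph V)
    (hnoShortOdd : ∀ m : ℕ, Odd m → 3 ≤ m → m < k - 2 → ¬ ContainsSubgraph (cycleGraph m) G)
    (c : ZMod k → V) (hinj : Function.Injective c)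
    (hcyc : ∀ a b : ZMod k, G.Adj (c a) (c b) ↔ (b - a = 1 ∨ b - a = -1))
    (v : V) (hv : v ∉ Set.range c)
    (a b : ZMod k) (ha : G.Adj v (c a)) (hb : G.Adj v (c b)) (hne : a ≠ b)
    (hodd : Odd (b - a).val) : k - 4 ≤ (b - a).val := by
  haveI : NeZero k := ⟨by omega⟩
  by_contra hlt
  push_neg at hlt
  set d := (b - a).val with hd
  have hdpos : 0 < d := by
    rcases Nat.eq_zero_or_pos d with h | h
    · exact absurd (sub_eq_zero.mp ((ZMod.val_eq_zero _).mp h)) (Ne.symm hne)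
    · exact h
  have hdlt : d < k := ZMod.val_lt _
  have hcastd : ((d : ℕ) : ZMod k) = b - a := by rw [hd, ZMod.natCast_val, ZMod.cast_id]
  apply hnoShortOdd (d + 2) (by rw [Nat.odd_iff] at hodd ⊢; omega) (by omega) (by omega)
  classical
  set σ : Fin (d + 2) → V :=
    fun j => if j.val = 0 then v else c (a + ((j.val - 1 : ℕ) : ZMod k)) with hσ
  have hσ0 : ∀ j : Fin (d + 2), j.val = 0 → σ j = v := by intro j h; rw [hσ]; exact if_pos h
  have hσs : ∀ j : Fin (d + 2), j.val ≠ 0 → σ j = c (a + ((j.val - 1 : ℕ) : ZMod k)) := by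
    intro j h; rw [hσ]; exact if_neg h
  refine ⟨σ, ?_, ?_⟩
  · intro x y hxy
    by_cases hx : x.val = 0 <;> by_cases hy : y.val = 0
    · exact Fin.ext (by omega)
    · rw [hσ0 x hx, hσs y hy] at hxy
      exact absurd ⟨_, hxy.symm⟩ hv
    · rw [hσs x hx, hσ0 y hy] at hxy
      exact absurd ⟨_, hxy⟩ hv
    · rw [hσs x hx, hσs y hy] at hxy
      have h2 := add_left_cancel (hinj hxy)
      have hx2 : x.val - 1 < k := by have := x.isLt; omega
      have hy2 : y.val - 1 < k := by have := y.isLt; omega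
      have := aux_cast_inj k hx2 hy2 h2
      exact Fin.ext (by omega)
  · intro u w huw
    rw [cycleGraph_adj] at huw
    have main : ∀ u w : Fin (d + 2), w - u = 1 → G.Adj (σ u) (σ w) := by
      intro u w h
      have hw : w = 1 + u := by rwa [sub_eq_iff_eq_add] at h
      have hwval : w.val = (1 + u.val) % (d + 2) := by rw [hw, Fin.val_add, Fin.val_one]
      by_cases hu0 : u.val = 0
      · have hwv : w.val = 1 := by rw [hwval, hu0, Nat.mod_eq_of_lt (by omega)]
        rw [hσ0 u hu0, hσs w (by omega)]
        rw [hwv]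
        simpa using ha
      · by_cases hud : u.val = d + 1
        · have h1 : 1 + (d + 1) = d + 2 := by omega
          have hwv : w.val = 0 := by rw [hwval, hud, h1, Nat.mod_self]
          rw [hσs u (by omega), hσ0 w hwv]
          have h2 : u.val - 1 = d := by omega
          rw [h2, hcastd]
          have h3 : a + (b - a) = b := by ring
          rw [h3]
          exact hb.symm
        · have hwv : w.val = 1 + u.val := by
            rw [hwval, Nat.mod_eq_of_lt (by have := u.isLt; omega)]
          rw [hσs u hu0, hσs w (by omega)]
          have h2 : w.val - 1 = u.val := by omega
          rw [h2]
          refine (hcyc _ _).mpr (Or.inl ?_)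
          have e : u.val = (u.val - 1) + 1 := by omega
          have h4 : (u.val : ZMod k) = ((u.val - 1 : ℕ) : ZMod k) + 1 := by
            calc (u.val : ZMod k) = (((u.val - 1) + 1 : ℕ) : ZMod k) := by rw [← e]
              _ = ((u.val - 1 : ℕ) : ZMod k) + 1 := by push_cast; ring
          linear_combination h4
    rcases huw with h | h
    · exact (main w u h).symm
    · exact main u w h

lemma aux_two (k : ℕ) (hk : 7 ≤ k) {V : Type} (G : SimpleGraph V)
    (hPfree : ¬ ContainsInduced (pathGraph k) G)
    (c : ZMod k → V) (hinj : Function.Injective c)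
    (hcyc : ∀ a b : ZMod k, G.Adj (c a) (c b) ↔ (b - a = 1 ∨ b - a = -1))
    (v : V) (hv : v ∉ Set.range c)
    (a : ZMod k) (ha : G.Adj v (c a)) :
    ∃ b, G.Adj v (c b) ∧ b ≠ a := by
  haveI : NeZero k := ⟨by omega⟩
  by_contra hcon
  push_neg at hcon
  apply hPfree
  classical
  set f : Fin k → V :=
    fun j => if j.val = 0 then v else c (a + ((j.val - 1 : ℕ) : ZMod k)) with hf
  have hf0 : ∀ j : Fin k, j.val = 0 → f j = v := by intro j h; rw [hf]; exact if_pos h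
  have hfs : ∀ j : Fin k, j.val ≠ 0 → f j = c (a + ((j.val - 1 : ℕ) : ZMod k)) := by
    intro j h; rw [hf]; exact if_neg h
  -- helper for adjacency between cycle vertices
  have cast1 : ∀ i j : ℕ, i ≤ k - 2 → j ≤ k - 2 →
      (((j : ZMod k)) - ((i : ZMod k)) = 1 ↔ j = i + 1) := by
    intro i j hi hj
    constructor
    · intro h
      have h2 : (j : ZMod k) = ((i + 1 : ℕ) : ZMod k) := by push_cast; linear_combination h
      exact aux_cast_inj k (by omega) (by omega) h2
    · rintro rfl; push_cast; ring
  have hinjf : Function.Injective f := by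
    intro x y hxy
    by_cases hx : x.val = 0 <;> by_cases hy : y.val = 0
    · exact Fin.ext (by omega)
    · rw [hf0 x hx, hfs y hy] at hxy
      exact absurd ⟨_, hxy.symm⟩ hv
    · rw [hfs x hx, hf0 y hy] at hxy
      exact absurd ⟨_, hxy⟩ hv
    · rw [hfs x hx, hfs y hy] at hxy
      have h2 := add_left_cancel (hinj hxy)
      have := aux_cast_inj k (by have := x.isLt; omega) (by have := y.isLt; omega) h2
      exact Fin.ext (by omega)
  refine ⟨⟨⟨f, hinjf⟩, ?_⟩⟩
  intro x y
  show G.Adj (f x) (f y) ↔ (pathGraph k).Adj x y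
  by_cases hx : x.val = 0 <;> by_cases hy : y.val = 0
  · have hxy : x = y := Fin.ext (by omega)
    subst hxy
    exact iff_of_false (G.irrefl) ((pathGraph k).irrefl)
  · rw [hf0 x hx, hfs y hy, pathGraph_adj]
    constructor
    · intro h
      have h1 := hcon _ h
      have h0 : ((y.val - 1 : ℕ) : ZMod k) = 0 := by
        have := congrArg (· - a) h1
        simpa using this
      have : y.val - 1 = 0 :=
        aux_cast_inj k (by have := y.isLt; omega) (by omega) (by exact_mod_cast h0)
      omega
    · intro h
      have hy1 : y.val = 1 := by omega
      rw [hy1]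
      simpa using ha
  · rw [hfs x hx, hf0 y hy, pathGraph_adj]
    constructor
    · intro h
      have h1 := hcon _ h.symm
      have h0 : ((x.val - 1 : ℕ) : ZMod k) = 0 := by
        have := congrArg (· - a) h1
        simpa using this
      have : x.val - 1 = 0 :=
        aux_cast_inj k (by have := x.isLt; omega) (by omega) (by exact_mod_cast h0)
      omega
    · intro h
      have hx1 : x.val = 1 := by omega
      rw [hx1]
      simpa using ha.symm
  · rw [hfs x hx, hfs y hy, pathGraph_adj, hcyc]
    have hd : (a + ((y.val - 1 : ℕ) : ZMod k)) - (a + ((x.val - 1 : ℕ) : ZMod k))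
        = ((y.val - 1 : ℕ) : ZMod k) - ((x.val - 1 : ℕ) : ZMod k) := by ring
    rw [hd]
    have hxk : x.val - 1 ≤ k - 2 := by have := x.isLt; omega
    have hyk : y.val - 1 ≤ k - 2 := by have := y.isLt; omega
    have hneg : (((y.val - 1 : ℕ) : ZMod k) - ((x.val - 1 : ℕ) : ZMod k) = -1)
        ↔ (((x.val - 1 : ℕ) : ZMod k) - ((y.val - 1 : ℕ) : ZMod k) = 1) := by
      constructor <;> intro h <;> linear_combination -h
    rw [cast1 _ _ hxk hyk, hneg, cast1 _ _ hyk hxk]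
    omega

lemma aux_key (k : ℕ) (hk : 7 ≤ k) (hodd : Odd k) {V : Type} (G : SimpleGraph V)
    (hnoShortOdd : ∀ m : ℕ, Odd m → 3 ≤ m → m < k - 2 → ¬ ContainsSubgraph (cycleGraph m) G)
    (c : ZMod k → V) (hinj : Function.Injective c)
    (hcyc : ∀ a b : ZMod k, G.Adj (c a) (c b) ↔ (b - a = 1 ∨ b - a = -1))
    (v : V) (hv : v ∉ Set.range c)
    (a b : ZMod k) (ha : G.Adj v (c a)) (hb : G.Adj v (c b)) (hne : a ≠ b) :
    b - a = 2 ∨ b - a = -2 ∨ b - a = 4 ∨ b - a = -4 := by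
  haveI : NeZero k := ⟨by omega⟩
  have hk2 : k % 2 = 1 := Nat.odd_iff.mp hodd
  have hsub : b - a ≠ 0 := sub_ne_zero.mpr (Ne.symm hne)
  set d := (b - a).val with hd
  have hdpos : 0 < d := by
    rcases Nat.eq_zero_or_pos d with h | h
    · exact absurd ((ZMod.val_eq_zero _).mp h) hsub
    · exact h
  have hdlt : d < k := ZMod.val_lt _
  have hcastd : ((d : ℕ) : ZMod k) = b - a := by rw [hd, ZMod.natCast_val, ZMod.cast_id]
  have hsum : (a - b).val = k - d := by
    haveI : NeZero (b - a) := ⟨hsub⟩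
    have h1 : a - b = -(b - a) := by ring
    rw [h1, ZMod.val_neg_of_ne_zero]
  have hnat : d = 2 ∨ d = 4 ∨ d = k - 4 ∨ d = k - 2 := by
    rcases Nat.even_or_odd d with he | ho
    · have hodd' : Odd (a - b).val := by
        rw [hsum, Nat.odd_iff]; rw [Nat.even_iff] at he; omega
      have := aux_bound k hk G hnoShortOdd c hinj hcyc v hv b a hb ha (Ne.symm hne) hodd'
      rw [hsum] at this
      rw [Nat.even_iff] at he
      omega
    · have := aux_bound k hk G hnoShortOdd c hinj hcyc v hv a b ha hb hne (hd ▸ ho)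
      rw [Nat.odd_iff] at ho
      omega
  rcases hnat with h | h | h | h
  · left; rw [← hcastd, h]; norm_num
  · right; right; left; rw [← hcastd, h]; norm_num
  · right; right; right
    rw [← hcastd, h, Nat.cast_sub (by omega), ZMod.natCast_self]
    norm_num
  · right; left
    rw [← hcastd, h, Nat.cast_sub (by omega), ZMod.natCast_self]
    norm_num

theorem neighborhood_of_induced_Ck
    (k : ℕ) (hk : 7 ≤ k) (hodd : Odd k) (V : Type) [Fintype V] (G : SimpleGraph V)
    (hPfree : ¬ ContainsInduced (pathGraph k) G)
    (hnoShortOdd : ∀ m : ℕ, Odd m → 3 ≤ m → m < k - 2 →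
      ¬ ContainsSubgraph (cycleGraph m) G)
    (c : ZMod k → V) (hinj : Function.Injective c)
    (hcyc : ∀ a b : ZMod k, G.Adj (c a) (c b) ↔ (b - a = 1 ∨ b - a = -1))
    (v : V) (hv : v ∉ Set.range c) (hadj : ∃ a : ZMod k, G.Adj v (c a)) :
    ∃ i : ZMod k,
      {x : V | x ∈ Set.range c ∧ G.Adj v x} = {c i, c (i + 2)} ∨
      {x : V | x ∈ Set.range c ∧ G.Adj v x} = {c i, c (i + 4)} ∨
      {x : V | x ∈ Set.range c ∧ G.Adj v x} = {c i, c (i + 2), c (i + 4)} := by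
  haveI : NeZero k := ⟨by omega⟩
  have h2 : (2 : ZMod k) ≠ 0 := by exact_mod_cast aux_not_dvd k hk hodd rfl (by norm_num) (by norm_num)
  have h4 : (4 : ZMod k) ≠ 0 := by exact_mod_cast aux_not_dvd k hk hodd rfl (by norm_num) (by norm_num)
  have h6 : (6 : ZMod k) ≠ 0 := by exact_mod_cast aux_not_dvd k hk hodd rfl (by norm_num) (by norm_num)
  have h8 : (8 : ZMod k) ≠ 0 := by exact_mod_cast aux_not_dvd k hk hodd rfl (by norm_num) (by norm_num)
  have h10 : (10 : ZMod k) ≠ 0 := by exact_mod_cast aux_not_dvd k hk hodd rfl (by norm_num) (by norm_num)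
  have h12 : (12 : ZMod k) ≠ 0 := by exact_mod_cast aux_not_dvd k hk hodd rfl (by norm_num) (by norm_num)
  have key : ∀ a b : ZMod k, G.Adj v (c a) → G.Adj v (c b) → a ≠ b →
      (b - a = 2 ∨ b - a = -2 ∨ b - a = 4 ∨ b - a = -4) :=
    fun a b ha hb hne => aux_key k hk hodd G hnoShortOdd c hinj hcyc v hv a b ha hb hne
  have himg : {x : V | x ∈ Set.range c ∧ G.Adj v x} = c '' {a : ZMod k | G.Adj v (c a)} := by
    ext x
    constructor
    · rintro ⟨⟨a, rfl⟩, hx⟩; exact ⟨a, hx, rfl⟩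
    · rintro ⟨a, ha, rfl⟩; exact ⟨⟨a, rfl⟩, ha⟩
  suffices h : ∃ i : ZMod k,
      {a : ZMod k | G.Adj v (c a)} = {i, i + 2} ∨
      {a : ZMod k | G.Adj v (c a)} = {i, i + 4} ∨
      {a : ZMod k | G.Adj v (c a)} = {i, i + 2, i + 4} by
    obtain ⟨i, hI⟩ := h
    refine ⟨i, ?_⟩
    rw [himg]
    rcases hI with hI | hI | hI
    · exact Or.inl (by rw [hI]; simp [Set.image_insert_eq])
    · exact Or.inr (Or.inl (by rw [hI]; simp [Set.image_insert_eq]))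
    · exact Or.inr (Or.inr (by rw [hI]; simp [Set.image_insert_eq]))
  obtain ⟨a0, ha0⟩ := hadj
  obtain ⟨b0, hb0, hb0ne⟩ := aux_two k hk G hPfree c hinj hcyc v hv a0 ha0
  by_cases hC2 : ∃ p : ZMod k, G.Adj v (c p) ∧ G.Adj v (c (p + 2))
  · obtain ⟨p, hp1, hp2⟩ := hC2
    have hmem : ∀ x, G.Adj v (c x) → x = p - 2 ∨ x = p ∨ x = p + 2 ∨ x = p + 4 := by
      intro x hx
      by_cases hx1 : x = p
      · tauto
      by_cases hx2 : x = p + 2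
      · tauto
      rcases key p x hp1 hx (Ne.symm hx1) with e | e | e | e
      · exact absurd (by linear_combination e : x = p + 2) hx2
      · left; linear_combination e
      · right; right; right; linear_combination e
      · exfalso
        rcases key (p + 2) x hp2 hx (Ne.symm hx2) with f | f | f | f
        · exact h8 (by linear_combination e - f)
        · exact h4 (by linear_combination e - f)
        · exact h10 (by linear_combination e - f)
        · exact h2 (by linear_combination e - f)
    by_cases hm : G.Adj v (c (p - 2)) <;> by_cases hq : G.Adj v (c (p + 4))
    · exfalso
      have hne6 : p - 2 ≠ p + 4 := fun h => h6 (by linear_combination -h)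
      rcases key (p - 2) (p + 4) hm hq hne6 with e | e | e | e
      · exact h4 (by linear_combination e)
      · exact h8 (by linear_combination e)
      · exact h2 (by linear_combination e)
      · exact h10 (by linear_combination e)
    · -- p-2, p, p+2
      refine ⟨p - 2, Or.inr (Or.inr ?_)⟩
      ext x
      simp only [Set.mem_setOf_eq, Set.mem_insert_iff, Set.mem_singleton_iff]
      constructor
      · intro hx
        rcases hmem x hx with h | h | h | h
        · tauto
        · right; left; linear_combination h
        · right; right; linear_combination h
        · exact absurd (h ▸ hx) hq
      · rintro (rfl | h | h)
        · exact hm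
        · rw [(by linear_combination h : x = p)]; exact hp1
        · rw [(by linear_combination h : x = p + 2)]; exact hp2
    · -- p, p+2, p+4
      refine ⟨p, Or.inr (Or.inr ?_)⟩
      ext x
      simp only [Set.mem_setOf_eq, Set.mem_insert_iff, Set.mem_singleton_iff]
      constructor
      · intro hx
        rcases hmem x hx with h | h | h | h
        · exact absurd (h ▸ hx) hm
        · tauto
        · tauto
        · tauto
      · rintro (rfl | rfl | rfl)
        · exact hp1
        · exact hp2
        · exact hq
    · -- p, p+2
      refine ⟨p, Or.inl ?_⟩
      ext x
      simp only [Set.mem_setOf_eq, Set.mem_insert_iff, Set.mem_singleton_iff]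
      constructor
      · intro hx
        rcases hmem x hx with h | h | h | h
        · exact absurd (h ▸ hx) hm
        · tauto
        · tauto
        · exact absurd (h ▸ hx) hq
      · rintro (rfl | rfl)
        · exact hp1
        · exact hp2
  · push_neg at hC2
    have key4 : ∀ a b : ZMod k, G.Adj v (c a) → G.Adj v (c b) → a ≠ b →
        (b - a = 4 ∨ b - a = -4) := by
      intro a b ha hb hne
      rcases key a b ha hb hne with e | e | e | e
      · exact absurd ((by linear_combination e : b = a + 2) ▸ hb) (hC2 a ha)
      · exact absurd ((by linear_combination -e : a = b + 2) ▸ ha) (hC2 b hb)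
      · exact Or.inl e
      · exact Or.inr e
    obtain ⟨q, hq, hq4⟩ : ∃ q : ZMod k, G.Adj v (c q) ∧ G.Adj v (c (q + 4)) := by
      rcases key4 a0 b0 ha0 hb0 (Ne.symm hb0ne) with e | e
      · exact ⟨a0, ha0, (by linear_combination e : b0 = a0 + 4) ▸ hb0⟩
      · exact ⟨b0, hb0, (by linear_combination -e : a0 = b0 + 4) ▸ ha0⟩
    refine ⟨q, Or.inr (Or.inl ?_)⟩
    ext x
    simp only [Set.mem_setOf_eq, Set.mem_insert_iff, Set.mem_singleton_iff]
    constructor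
    · intro hx
      by_cases hx1 : x = q
      · tauto
      rcases key4 q x hq hx (Ne.symm hx1) with e | e
      · right; linear_combination e
      · exfalso
        have hne2 : x ≠ q + 4 := fun h => h8 (by linear_combination e - h)
        rcases key4 (q + 4) x hq4 hx (Ne.symm hne2) with f | f
        · exact h12 (by linear_combination e - f)
        · exact h4 (by linear_combination e - f)
    · rintro (rfl | h)
      · exact hq
      · rw [h]; exact hq4
end

section
/- Let k ≥ 7 be an odd integer and let G be a finite simple graph that is P_k-free, contains no induced cycle on k vertices, and contains no cycle on m vertices as a subgraph for any odd m with 3 ≤ m < k - 2. Let c : Z/(k-2)Z → V(G) be injective with c(a) adjacent to c(b) if and only if b - a = ±1 (so the image of c is an induced cycle on k-2 vertices), and let v be a vertex not in the image of c that has at least one neighbor in the image of c. Then there exists i ∈ Z/(k-2)Z such that the set of neighbors of v in the image of c is exactly {c(i)} or exactly {c(i), c(i+2)}. -/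
open SimpleGraph

/-- An arc of the induced cycle together with `v` forms a cycle subgraph of length
`e.val + 2`. -/
lemma arc_cycle_aux
    (n : ℕ) (hn : 5 ≤ n) [NeZero n] (V : Type) (G : SimpleGraph V)
    (c : ZMod n → V) (hinj : Function.Injective c)
    (hcyc : ∀ a b : ZMod n, G.Adj (c a) (c b) ↔ (b - a = 1 ∨ b - a = -1))
    (v : V) (hv : v ∉ Set.range c)
    (a e : ZMod n) (he : e ≠ 0) (h1 : G.Adj v (c a)) (h2 : G.Adj v (c (a + e))) :
    ContainsSubgraph (cycleGraph (e.val + 2)) G := by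
  set d := e.val with hd
  have hdlt : d < n := e.val_lt
  have hd1 : 1 ≤ d := Nat.pos_of_ne_zero (fun h => he ((ZMod.val_eq_zero e).mp h))
  set σ : Fin (d + 2) → V :=
    fun j => if j.val = 0 then v else c (a + ((j.val - 1 : ℕ) : ZMod n)) with hσ
  have hval : ∀ t : ℕ, t < n → ((t : ZMod n)).val = t := fun t ht => ZMod.val_cast_of_lt ht
  refine ⟨σ, ?_, ?_⟩
  · intro j j' hjj'
    by_cases hj : j.val = 0 <;> by_cases hj' : j'.val = 0 <;>
      simp only [hσ, hj, hj', if_true, if_false, if_pos, if_neg, reduceIte] at hjj'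
    · exact Fin.ext (hj.trans hj'.symm)
    · exact absurd ⟨_, hjj'.symm⟩ hv
    · exact absurd ⟨_, hjj'⟩ hv
    · have h3 := add_left_cancel (hinj hjj')
      have hb1 : j.val - 1 < n := by have := j.isLt; omega
      have hb2 : j'.val - 1 < n := by have := j'.isLt; omega
      have := (hval _ hb1) ▸ (hval _ hb2) ▸ congrArg ZMod.val h3
      exact Fin.ext (by omega)
  · have key : ∀ u : Fin (d + 2), G.Adj (σ u) (σ (u + 1)) := by
      intro u
      by_cases hu : u.val = d + 1
      · -- wrap-around edge: c (a + e) — v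
        have hlast : u = Fin.last (d + 1) := Fin.ext hu
        have h0 : (u + 1 : Fin (d + 2)).val = 0 := by
          simp [hlast]
        have hde : ((d : ℕ) : ZMod n) = e := by
          rw [hd, ZMod.natCast_val, ZMod.cast_id]
        have hσu : σ u = c (a + e) := by
          simp only [hσ, hu]
          norm_num
          rw [hde]
        rw [hσu, show σ (u + 1) = v by simp [hσ, h0, -Fin.val_eq_zero_iff]]
        exact h2.symm
      · have hlt : u.val < d + 1 := by have := u.isLt; omega
        have hsucc : (u + 1 : Fin (d + 2)).val = u.val + 1 :=
          Fin.val_add_one_of_lt (by rw [Fin.lt_iff_val_lt_val, Fin.val_last]; exact hlt)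
        by_cases hu0 : u.val = 0
        · have hσu : σ u = v := by simp [hσ, hu0, -Fin.val_eq_zero_iff]
          have hσu1 : σ (u + 1) = c a := by
            simp [hσ, hsucc, hu0, -Fin.val_eq_zero_iff]
          rw [hσu, hσu1]; exact h1
        · have ht : 1 ≤ u.val := Nat.one_le_iff_ne_zero.mpr hu0
          have hσu : σ u = c (a + ((u.val - 1 : ℕ) : ZMod n)) := by simp [hσ, hu0, -Fin.val_eq_zero_iff]
          have hσu1 : σ (u + 1) = c (a + ((u.val : ℕ) : ZMod n)) := by
            simp [hσ, hsucc, -Fin.val_eq_zero_iff]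
          rw [hσu, hσu1, hcyc]
          left
          have : (u.val : ℕ) = (u.val - 1) + 1 := by omega
          rw [this]
          push_cast
          ring
    intro x y hxy
    rw [cycleGraph_adj] at hxy
    rcases hxy with h | h
    · have : x = y + 1 := by
        have h2 := sub_eq_iff_eq_add.mp h; exact h2.trans (add_comm 1 _)
      rw [this]; exact (key y).symm
    · have : y = x + 1 := by
        have h2 := sub_eq_iff_eq_add.mp h; exact h2.trans (add_comm 1 _)
      rw [this]; exact key x

lemma main_aux (n : ℕ) (hn5 : 5 ≤ n) (hnodd : Odd n) (V : Type) (G : SimpleGraph V)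
    (hnoShortOdd : ∀ m : ℕ, Odd m → 3 ≤ m → m < n → ¬ ContainsSubgraph (cycleGraph m) G)
    (c : ZMod n → V) (hinj : Function.Injective c)
    (hcyc : ∀ a b : ZMod n, G.Adj (c a) (c b) ↔ (b - a = 1 ∨ b - a = -1))
    (v : V) (hv : v ∉ Set.range c) (hadj : ∃ a : ZMod n, G.Adj v (c a)) :
    ∃ i : ZMod n,
      {x : V | x ∈ Set.range c ∧ G.Adj v x} = {c i} ∨
      {x : V | x ∈ Set.range c ∧ G.Adj v x} = {c i, c (i + 2)} := by
  haveI : NeZero n := ⟨by omega⟩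
  -- step 1: if (b - a).val is odd then b - a = -2
  have step1 : ∀ a b : ZMod n, G.Adj v (c a) → G.Adj v (c b) → a ≠ b →
      Odd (b - a).val → b - a = -2 := by
    intro a b ha hb hab hov
    set e := b - a with he
    have he0 : e ≠ 0 := sub_ne_zero.mpr (Ne.symm hab)
    have hcyc' := arc_cycle_aux n hn5 V G c hinj hcyc v hv a e he0 ha
      (by rw [he]; simpa using hb)
    have hmodd : Odd (e.val + 2) := by
      obtain ⟨t, ht⟩ := hov; exact ⟨t + 1, by omega⟩
    have hm3 : 3 ≤ e.val + 2 := by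
      have : e.val ≠ 0 := fun h => he0 ((ZMod.val_eq_zero e).mp h)
      omega
    have hnot : ¬ (e.val + 2 < n) := fun h => hnoShortOdd _ hmodd hm3 h hcyc'
    have hlt : e.val < n := e.val_lt
    -- so e.val = n - 2 (since e.val odd, e.val ≥ n - 4, e.val < n, n odd means n - 3 even)
    have heval : e.val = n - 2 := by
      obtain ⟨t, ht⟩ := hov
      obtain ⟨s, hs⟩ := hnodd
      omega
    -- hence e = -2
    have : ((n - 2 : ℕ) : ZMod n) = -2 := by
      have h2n : 2 ≤ n := by omega
      rw [Nat.cast_sub h2n, ZMod.natCast_self, Nat.cast_ofNat, zero_sub]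
    calc e = ((e.val : ℕ) : ZMod n) := by rw [ZMod.natCast_val, ZMod.cast_id]
    _ = ((n - 2 : ℕ) : ZMod n) := by rw [heval]
    _ = -2 := this
  -- step 2: distinct neighbors differ by ±2
  have step2 : ∀ a b : ZMod n, G.Adj v (c a) → G.Adj v (c b) → a ≠ b →
      b - a = 2 ∨ b - a = -2 := by
    intro a b ha hb hab
    have hsum : (b - a).val + (a - b).val = n := by
      have h1 : (b - a) ≠ 0 := sub_ne_zero.mpr (Ne.symm hab)
      have : (a - b) = -(b - a) := by ring
      rw [this, ZMod.neg_val, if_neg h1]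
      have := (b - a).val_lt
      omega
    rcases Nat.even_or_odd (b - a).val with hev | hov
    · -- then (a - b).val is odd
      have hov' : Odd (a - b).val := by
        obtain ⟨s, hs⟩ := hnodd
        obtain ⟨t, ht⟩ := hev
        refine ⟨s - t, by omega⟩
      have := step1 b a hb ha (Ne.symm hab) hov'
      left
      have : b - a = -(a - b) := by ring
      rw [this, step1 b a hb ha (Ne.symm hab) hov']; ring
    · right; exact step1 a b ha hb hab hov
  -- step 3: assemble
  obtain ⟨a₀, ha₀⟩ := hadj
  have h2ne : (2 : ZMod n) ≠ 0 := by
    intro h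
    have h2 : ((2 : ℕ) : ZMod n) = 0 := by exact_mod_cast h
    have hd := (ZMod.natCast_eq_zero_iff 2 n).mp h2
    have := Nat.le_of_dvd (by norm_num) hd
    omega
  have h6ne : (6 : ZMod n) ≠ 0 := by
    intro h
    have h6 : ((6 : ℕ) : ZMod n) = 0 := by exact_mod_cast h
    have hd := (ZMod.natCast_eq_zero_iff 6 n).mp h6
    have hle := Nat.le_of_dvd (by norm_num) hd
    obtain ⟨s, hs⟩ := hnodd
    have hn5' : n = 5 := by omega
    rw [hn5'] at hd
    norm_num at hd
  have pair : ∀ i : ZMod n, G.Adj v (c i) → G.Adj v (c (i + 2)) →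
      {x : V | x ∈ Set.range c ∧ G.Adj v x} = {c i, c (i + 2)} := by
    intro i hi hi2
    ext x
    simp only [Set.mem_setOf_eq, Set.mem_insert_iff, Set.mem_singleton_iff]
    constructor
    · rintro ⟨⟨a, rfl⟩, hax⟩
      by_cases h1 : a = i
      · left; rw [h1]
      by_cases h2 : a = i + 2
      · right; rw [h2]
      exfalso
      rcases step2 i a hi hax (Ne.symm h1) with hc1 | hc1
      · exact h2 (by linear_combination hc1)
      rcases step2 (i + 2) a hi2 hax (Ne.symm h2) with hc2 | hc2
      · -- a = i - 2 and a = i + 4 : 6 = 0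
        exact h6ne (by linear_combination hc1 - hc2)
      · -- a = i - 2 and a = i : contradiction with h1
        exact h1 (by linear_combination hc2)
    · rintro (rfl | rfl)
      · exact ⟨⟨i, rfl⟩, hi⟩
      · exact ⟨⟨i + 2, rfl⟩, hi2⟩
  by_cases hb : ∃ b : ZMod n, b ≠ a₀ ∧ G.Adj v (c b)
  · obtain ⟨b, hb0, hbadj⟩ := hb
    rcases step2 a₀ b ha₀ hbadj (Ne.symm hb0) with h | h
    · refine ⟨a₀, Or.inr ?_⟩
      have hb' : b = a₀ + 2 := by linear_combination h
      exact pair a₀ ha₀ (hb' ▸ hbadj)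
    · refine ⟨b, Or.inr ?_⟩
      have ha' : a₀ = b + 2 := by linear_combination -h
      exact pair b hbadj (ha' ▸ ha₀)
  · refine ⟨a₀, Or.inl ?_⟩
    push_neg at hb
    ext x
    simp only [Set.mem_setOf_eq, Set.mem_singleton_iff]
    constructor
    · rintro ⟨⟨a, rfl⟩, hax⟩
      by_contra hne
      exact (hb a (fun h => hne (by rw [h]))) hax
    · rintro rfl
      exact ⟨⟨a₀, rfl⟩, ha₀⟩

theorem neighborhood_of_induced_Ck_minus_two
    (k : ℕ) (hk : 7 ≤ k) (hodd : Odd k) (V : Type) [Fintype V] (G : SimpleGraph V)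
    (hPfree : ¬ ContainsInduced (pathGraph k) G)
    (hCkfree : ¬ ContainsInduced (cycleGraph k) G)
    (hnoShortOdd : ∀ m : ℕ, Odd m → 3 ≤ m → m < k - 2 →
      ¬ ContainsSubgraph (cycleGraph m) G)
    (c : ZMod (k - 2) → V) (hinj : Function.Injective c)
    (hcyc : ∀ a b : ZMod (k - 2), G.Adj (c a) (c b) ↔ (b - a = 1 ∨ b - a = -1))
    (v : V) (hv : v ∉ Set.range c) (hadj : ∃ a : ZMod (k - 2), G.Adj v (c a)) :
    ∃ i : ZMod (k - 2),
      {x : V | x ∈ Set.range c ∧ G.Adj v x} = {c i} ∨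
      {x : V | x ∈ Set.range c ∧ G.Adj v x} = {c i, c (i + 2)} := by
  exact main_aux (k - 2) (by omega) (by obtain ⟨t, ht⟩ := hodd; exact ⟨t - 1, by omega⟩)
    V G hnoShortOdd c hinj hcyc v hv hadj
end

section
/- Let k ≥ 7 be an odd integer and let f be a graph homomorphism from the cycle C_k to the cycle C_{k-2}. Then f is surjective; moreover there are exactly two vertices of C_{k-2} whose preimage under f has exactly two elements, these two vertices are adjacent in C_{k-2}, and every other vertex of C_{k-2} has exactly one preimage. -/
open SimpleGraph Finset
open scoped Fin.NatCast Fin.IntCast Fin.CommRing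

private lemma fin_intCast_eq_iff (m : ℕ) [NeZero m] (x y : ℤ) :
    ((x : Fin m) = (y : Fin m)) ↔ (m : ℤ) ∣ x - y := by
  rw [← sub_eq_zero, ← Int.cast_sub, CharP.intCast_eq_zero_iff (Fin m) m]

theorem hom_Ck_to_Ckm2_structure
    (k : ℕ) (hk : 7 ≤ k) (hodd : Odd k)
    (f : cycleGraph k →g cycleGraph (k - 2)) :
    Function.Surjective f ∧
    ∃ a b : Fin (k - 2), a ≠ b ∧ (cycleGraph (k - 2)).Adj a b ∧
      (Finset.univ.filter (fun x : Fin k => f x = a)).card = 2 ∧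
      (Finset.univ.filter (fun x : Fin k => f x = b)).card = 2 ∧
      ∀ z : Fin (k - 2), z ≠ a → z ≠ b →
        (Finset.univ.filter (fun x : Fin k => f x = z)).card = 1 := by
  obtain ⟨m, hmdef⟩ : ∃ m, k - 2 = m := ⟨_, rfl⟩
  revert f
  rw [hmdef]
  intro f
  have hm5 : 5 ≤ m := by omega
  have hmk : m + 2 = k := by omega
  haveI : NeZero m := ⟨by omega⟩
  haveI : NeZero k := ⟨by omega⟩
  have honek : (1 : Fin k).val = 1 := by
    rw [← Nat.cast_one, Fin.val_natCast]; exact Nat.mod_eq_of_lt (by omega)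
  have honem : (1 : Fin m).val = 1 := by
    rw [← Nat.cast_one, Fin.val_natCast]; exact Nat.mod_eq_of_lt (by omega)
  set F : ℕ → Fin m := fun i => f ((i : Fin k)) with hF
  -- step differences
  have hstep : ∀ i : ℕ, F (i + 1) - F i = 1 ∨ F i - F (i + 1) = 1 := by
    intro i
    have hadj : (cycleGraph k).Adj ((i : Fin k)) (((i + 1 : ℕ) : Fin k)) := by
      rw [cycleGraph_adj']
      right
      have h1 : ((i + 1 : ℕ) : Fin k) - (i : Fin k) = 1 := by push_cast; ring
      rw [h1, honek]
    have := (cycleGraph_adj'.mp (f.map_adj hadj))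
    rcases this with h | h
    · right; exact Fin.ext (by rw [h, honem])
    · left; exact Fin.ext (by rw [h, honem])
  set e : ℕ → ℤ := fun i => if F (i + 1) - F i = 1 then 1 else -1 with he
  have he1 : ∀ i, e i = 1 ∨ e i = -1 := by
    intro i; by_cases h : F (i + 1) - F i = 1 <;> simp [he, h]
  have hFe : ∀ i, F (i + 1) = F i + ((e i : ℤ) : Fin m) := by
    intro i
    by_cases h : F (i + 1) - F i = 1
    · rw [he]; simp only [if_pos h]
      push_cast
      rw [← h]; ring
    · rcases hstep i with h' | h'
      · exact absurd h' h
      · rw [he]; simp only [if_neg h]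
        push_cast
        rw [← h']; ring
  set P : ℕ → ℤ := fun j => ∑ i ∈ Finset.range j, e i with hP
  have hFP : ∀ j, F j = F 0 + ((P j : ℤ) : Fin m) := by
    intro j
    induction j with
    | zero => simp [hP]
    | succ j ih =>
      rw [hFe j, ih, show P (j + 1) = P j + e j from Finset.sum_range_succ e j]
      push_cast
      ring
  -- the total sum is divisible by m
  have hFk : F k = F 0 := by
    have : ((k : ℕ) : Fin k) = 0 := by
      exact_mod_cast Fin.natCast_self k
    simp only [hF, this, Nat.cast_zero]
  have hdvd : (m : ℤ) ∣ P k := by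
    have := hFP k
    rw [hFk, left_eq_add] at this
    exact (CharP.intCast_eq_zero_iff (Fin m) m _).mp this
  -- parity
  have hparity : ∀ j : ℕ, P j % 2 = (j : ℤ) % 2 := by
    intro j
    induction j with
    | zero => simp [hP]
    | succ j ih =>
      rw [show P (j + 1) = P j + e j from Finset.sum_range_succ e j]
      rcases he1 j with h | h <;> rw [h] <;> push_cast <;> omega
  -- bound
  have hbound : ∀ j : ℕ, |P j| ≤ (j : ℤ) := by
    intro j
    calc |P j| ≤ ∑ i ∈ Finset.range j, |e i| := Finset.abs_sum_le_sum_abs _ _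
    _ = ∑ i ∈ Finset.range j, 1 := by
        refine Finset.sum_congr rfl fun i _ => ?_
        rcases he1 i with h | h <;> rw [h] <;> norm_num
    _ = (j : ℤ) := by simp
  -- S = ± m
  obtain ⟨σ, hσc⟩ := hdvd
  have hk2 : k % 2 = 1 := Nat.odd_iff.mp hodd
  have hσ : σ = 1 ∨ σ = -1 := by
    have hb := hbound k
    have hp := hparity k
    rw [hσc] at hb hp
    have hm' : (5 : ℤ) ≤ (m : ℤ) := by exact_mod_cast hm5
    have hkm : (k : ℤ) = (m : ℤ) + 2 := by exact_mod_cast hmk.symm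
    have habs : |(m : ℤ)| * |σ| ≤ (m : ℤ) + 2 := by
      rw [← abs_mul]; rw [hkm] at hb; exact hb
    rw [abs_of_nonneg (by linarith : (0:ℤ) ≤ (m:ℤ))] at habs
    have hσ1 : |σ| ≤ 1 := by nlinarith [abs_nonneg σ]
    have hσ0 : σ ≠ 0 := by
      rintro rfl
      rw [mul_zero] at hp
      omega
    rcases abs_le.mp hσ1 with ⟨h1, h2⟩
    interval_cases σ
    · right; rfl
    · exact absurd rfl hσ0
    · left; rfl
  have hσσ : σ * σ = 1 := by rcases hσ with h | h <;> rw [h] <;> ring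
  -- normalized steps
  set e' : ℕ → ℤ := fun i => σ * e i with he'
  have he'1 : ∀ i, e' i = 1 ∨ e' i = -1 := by
    intro i
    rcases hσ with h | h <;> rcases he1 i with h' | h' <;>
      simp [he', h, h']
  set P' : ℕ → ℤ := fun j => ∑ i ∈ Finset.range j, e' i with hP'
  have hPP' : ∀ j, P j = σ * P' j := by
    intro j
    have hcg : ∀ i ∈ Finset.range j, e i = σ * e' i := by
      intro i _
      have h1 : σ * e' i = (σ * σ) * e i := by rw [he']; ring
      rw [h1, hσσ, one_mul]
    calc P j = ∑ i ∈ Finset.range j, σ * e' i := Finset.sum_congr rfl hcg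
      _ = σ * P' j := (Finset.mul_sum _ _ _).symm
  have hsum' : P' k = (m : ℤ) := by
    have h1 := hPP' k
    rw [hσc] at h1
    have h2 : σ * ((m:ℤ) * σ) = σ * (σ * P' k) := by rw [h1]
    have h3 : σ * ((m:ℤ) * σ) = (m:ℤ) * (σ * σ) := by ring
    have h4 : σ * (σ * P' k) = (σ * σ) * P' k := by ring
    rw [h3, h4, hσσ, mul_one, one_mul] at h2
    exact h2.symm
  -- exactly one -1 step
  set T : Finset ℕ := (Finset.range k).filter (fun i => e' i = -1) with hT
  have hTcard : T.card = 1 := by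
    have hsplit := Finset.sum_filter_add_sum_filter_not (Finset.range k) (fun i => e' i = -1) e'
    have h1 : ∑ i ∈ T, e' i = -(T.card : ℤ) := by
      have hall : ∀ i ∈ T, e' i = -1 := fun i hi => (Finset.mem_filter.mp hi).2
      rw [Finset.sum_congr rfl hall, Finset.sum_const, nsmul_eq_mul, mul_neg_one]
    have h2 : ∑ i ∈ (Finset.range k).filter (fun i => ¬ e' i = -1), e' i
        = (((Finset.range k).filter (fun i => ¬ e' i = -1)).card : ℤ) := by
      have hall : ∀ i ∈ (Finset.range k).filter (fun i => ¬ e' i = -1), e' i = 1 := by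
        intro i hi
        rcases he'1 i with h | h
        · exact h
        · exact absurd h (Finset.mem_filter.mp hi).2
      rw [Finset.sum_congr rfl hall, Finset.sum_const, nsmul_eq_mul, mul_one]
    have hc2 : ((Finset.range k).filter (fun i => ¬ e' i = -1)).card = k - T.card := by
      rw [hT, Finset.filter_not, Finset.card_sdiff_of_subset (Finset.filter_subset _ _), Finset.card_range]
    have hTle : T.card ≤ k := by
      rw [hT]; exact le_trans (Finset.card_filter_le _ _) (by rw [Finset.card_range])
    have hPk : ∑ i ∈ Finset.range k, e' i = (m : ℤ) := hsum'
    rw [h1, h2, hc2, hPk] at hsplit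
    have : ((k - T.card : ℕ) : ℤ) = (k : ℤ) - T.card := by
      push_cast [hTle]; ring
    rw [this] at hsplit
    omega
  obtain ⟨t, ht⟩ := Finset.card_eq_one.mp hTcard
  have htmem : t ∈ T := by rw [ht]; exact Finset.mem_singleton_self t
  have htlt : t < k := Finset.mem_range.mp (Finset.mem_filter.mp htmem).1
  have hother : ∀ i, i < k → i ≠ t → e' i = 1 := by
    intro i hik hit
    rcases he'1 i with h | h
    · exact h
    · exfalso
      exact hit (Finset.mem_singleton.mp (ht ▸ Finset.mem_filter.mpr ⟨Finset.mem_range.mpr hik, h⟩))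
  have het : e' t = -1 := (Finset.mem_filter.mp htmem).2
  -- partial sums
  have hval : ∀ j, j ≤ k → P' j = if j ≤ t then (j : ℤ) else (j : ℤ) - 2 := by
    intro j hj
    by_cases hjt : j ≤ t
    · rw [if_pos hjt]
      have hall : ∀ i ∈ Finset.range j, e' i = 1 := fun i hi =>
        hother i (by have := Finset.mem_range.mp hi; omega)
          (by have := Finset.mem_range.mp hi; omega)
      calc P' j = ∑ i ∈ Finset.range j, (1:ℤ) := Finset.sum_congr rfl hall
        _ = (j : ℤ) := by simp
    · rw [if_neg hjt]
      push_neg at hjt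
      have htj : t ∈ Finset.range j := Finset.mem_range.mpr hjt
      have hall : ∀ i ∈ (Finset.range j).erase t, e' i = 1 := fun i hi =>
        hother i (by have := Finset.mem_range.mp (Finset.mem_erase.mp hi).2; omega)
          (Finset.mem_erase.mp hi).1
      calc P' j = e' t + ∑ i ∈ (Finset.range j).erase t, e' i :=
            (Finset.add_sum_erase _ e' htj).symm
        _ = -1 + ∑ i ∈ (Finset.range j).erase t, (1:ℤ) := by
            rw [het, Finset.sum_congr rfl hall]
        _ = -1 + ((j : ℤ) - 1) := by
            rw [Finset.sum_const, Finset.card_erase_of_mem htj, Finset.card_range,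
              nsmul_eq_mul, mul_one, Nat.cast_sub (by omega : 1 ≤ j), Nat.cast_one]
        _ = (j : ℤ) - 2 := by ring
  -- fiber criterion
  have hfx : ∀ x : Fin k, f x = F 0 + ((σ * P' x.val : ℤ) : Fin m) := by
    intro x
    have h1 : f x = F x.val := by rw [hF]; simp [Fin.cast_val_eq_self]
    rw [h1, hFP x.val, hPP']
  have hσm : ((σ : ℤ) : Fin m) * ((σ : ℤ) : Fin m) = 1 := by
    rw [← Int.cast_mul, hσσ, Int.cast_one]
  have hcrit : ∀ (x : Fin k) (w : ℤ),
      f x = F 0 + ((σ * w : ℤ) : Fin m) ↔ (m : ℤ) ∣ P' x.val - w := by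
    intro x w
    rw [hfx x, add_right_inj, fin_intCast_eq_iff]
    constructor
    · rintro ⟨c, hc⟩
      refine ⟨σ * c, ?_⟩
      have h5 : σ * (σ * P' x.val - σ * w) = σ * ((m:ℤ) * c) := by rw [hc]
      calc P' x.val - w = σ * (σ * P' x.val - σ * w) := by
            rw [mul_sub, ← mul_assoc, ← mul_assoc, hσσ, one_mul, one_mul]
        _ = (m:ℤ) * (σ * c) := by rw [h5]; ring
    · rintro ⟨c, hc⟩
      refine ⟨σ * c, ?_⟩
      calc σ * P' x.val - σ * w = σ * (P' x.val - w) := by ring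
        _ = (m:ℤ) * (σ * c) := by rw [hc]; ring
  -- surjectivity
  have hsurj : Function.Surjective f := by
    intro z
    obtain ⟨c, hc⟩ : ∃ c : Fin m, c = ((σ : ℤ) : Fin m) * (z - F 0) := ⟨_, rfl⟩
    have hcv : c.val < m := c.isLt
    have hcz : F 0 + ((σ * (c.val : ℤ) : ℤ) : Fin m) = z := by
      have h0 : ((c.val : ℤ) : Fin m) = c := by rw [Int.cast_natCast]; exact Fin.cast_val_eq_self c
      rw [Int.cast_mul, h0, hc, ← mul_assoc, hσm, one_mul]
      ring
    by_cases hct : c.val ≤ t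
    · refine ⟨⟨c.val, by omega⟩, ?_⟩
      have h1 : f ⟨c.val, by omega⟩ = F 0 + ((σ * (c.val : ℤ) : ℤ) : Fin m) := by
        rw [hcrit _ (c.val : ℤ)]
        show (m:ℤ) ∣ P' c.val - (c.val : ℤ)
        rw [hval c.val (by omega), if_pos hct]
        simp
      rw [h1, hcz]
    · refine ⟨⟨c.val + 2, by omega⟩, ?_⟩
      have h1 : f ⟨c.val + 2, by omega⟩ = F 0 + ((σ * (c.val : ℤ) : ℤ) : Fin m) := by
        rw [hcrit _ (c.val : ℤ)]
        show (m:ℤ) ∣ P' (c.val + 2) - (c.val : ℤ)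
        rw [hval (c.val + 2) (by omega), if_neg (by omega)]
        push_cast
        refine ⟨0, by ring⟩
      rw [h1, hcz]
  -- preimages of a and b (raw form)
  have hx1 : f ⟨t, htlt⟩ = F 0 + ((σ * (t : ℤ) : ℤ) : Fin m) := by
    rw [hcrit _ (t : ℤ)]
    show (m:ℤ) ∣ P' t - (t : ℤ)
    rw [hval t (by omega), if_pos le_rfl]
    simp
  have hx2v : (if t + 2 < k then t + 2 else t + 2 - k) < k := by split_ifs <;> omega
  have hx2 : f ⟨(if t + 2 < k then t + 2 else t + 2 - k), hx2v⟩
      = F 0 + ((σ * (t : ℤ) : ℤ) : Fin m) := by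
    rw [hcrit _ (t : ℤ)]
    show (m:ℤ) ∣ P' (if t + 2 < k then t + 2 else t + 2 - k) - (t : ℤ)
    by_cases h : t + 2 < k
    · rw [if_pos h, hval (t+2) (by omega), if_neg (by omega)]
      push_cast
      refine ⟨0, by ring⟩
    · rw [if_neg h, hval (t + 2 - k) (by omega), if_pos (by omega)]
      refine ⟨-1, ?_⟩
      have h1 : t = k - 2 ∨ t = k - 1 := by omega
      rcases h1 with h1 | h1 <;> push_cast [h1] <;> omega
  have hx3v : (if t + 1 < k then t + 1 else t + 1 - k) < k := by split_ifs <;> omega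
  have hx3 : f ⟨(if t + 1 < k then t + 1 else t + 1 - k), hx3v⟩
      = F 0 + ((σ * ((t : ℤ) - 1) : ℤ) : Fin m) := by
    rw [hcrit _ ((t : ℤ) - 1)]
    show (m:ℤ) ∣ P' (if t + 1 < k then t + 1 else t + 1 - k) - ((t : ℤ) - 1)
    by_cases h : t + 1 < k
    · rw [if_pos h, hval (t+1) (by omega), if_neg (by omega)]
      push_cast
      refine ⟨0, by ring⟩
    · rw [if_neg h, hval (t + 1 - k) (by omega), if_pos (by omega)]
      refine ⟨-1, ?_⟩
      have h1 : t = k - 1 := by omega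
      push_cast [h1]
      omega
  have hx4v : (if 1 ≤ t then t - 1 else k - 1) < k := by split_ifs <;> omega
  have hx4 : f ⟨(if 1 ≤ t then t - 1 else k - 1), hx4v⟩
      = F 0 + ((σ * ((t : ℤ) - 1) : ℤ) : Fin m) := by
    rw [hcrit _ ((t : ℤ) - 1)]
    show (m:ℤ) ∣ P' (if 1 ≤ t then t - 1 else k - 1) - ((t : ℤ) - 1)
    by_cases h : 1 ≤ t
    · rw [if_pos h, hval (t-1) (by omega), if_pos (by omega)]
      push_cast [h]
      refine ⟨0, by ring⟩
    · rw [if_neg h, hval (k - 1) (by omega), if_neg (by omega)]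
      refine ⟨1, ?_⟩
      have h1 : t = 0 := by omega
      push_cast [h1]
      omega
  -- the two special vertices
  obtain ⟨a, ha⟩ : ∃ a : Fin m, a = F 0 + ((σ * (t : ℤ) : ℤ) : Fin m) := ⟨_, rfl⟩
  obtain ⟨b, hb⟩ : ∃ b : Fin m, b = F 0 + ((σ * ((t : ℤ) - 1) : ℤ) : Fin m) := ⟨_, rfl⟩
  rw [← ha] at hx1 hx2
  rw [← hb] at hx3 hx4
  have hab : a ≠ b := by
    intro h
    rw [ha, hb, add_right_inj, fin_intCast_eq_iff] at h
    have h2 : σ * (t:ℤ) - σ * ((t:ℤ) - 1) = σ := by ring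
    rw [h2] at h
    have h4 : |σ| = 1 := by rcases hσ with h' | h' <;> simp [h']
    have h3 : (m:ℤ) ≤ |σ| := Int.le_of_dvd (by rw [h4]; norm_num) ((dvd_abs _ _).mpr h)
    rw [h4] at h3
    have hm' : (5:ℤ) ≤ (m:ℤ) := by exact_mod_cast hm5
    linarith
  have hadjab : (cycleGraph m).Adj a b := by
    rw [cycleGraph_adj']
    have hsub : a - b = ((σ : ℤ) : Fin m) := by
      rw [ha, hb, add_sub_add_left_eq_sub, ← Int.cast_sub]
      congr 1; ring
    rcases hσ with h | h
    · left
      rw [hsub, h]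
      push_cast
      exact honem
    · right
      have h2 : b - a = ((1:ℤ) : Fin m) := by
        rw [← neg_sub, hsub, h]; push_cast; ring
      rw [h2]
      push_cast
      exact honem
  have hx12 : (⟨t, htlt⟩ : Fin k) ≠ ⟨(if t + 2 < k then t + 2 else t + 2 - k), hx2v⟩ := by
    intro h
    have h2 := congrArg Fin.val h
    simp only at h2
    split_ifs at h2 <;> omega
  have hx34 : (⟨(if t + 1 < k then t + 1 else t + 1 - k), hx3v⟩ : Fin k)
      ≠ ⟨(if 1 ≤ t then t - 1 else k - 1), hx4v⟩ := by
    intro h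
    have h2 := congrArg Fin.val h
    simp only at h2
    split_ifs at h2 <;> omega
  -- counting
  have hcount : ∀ z : Fin m,
      (Finset.univ.filter (fun x : Fin k => f x = z)).card
        = 1 + (if z = a then 1 else 0) + (if z = b then 1 else 0) := by
    have hsumg : ∑ z : Fin m, (Finset.univ.filter (fun x : Fin k => f x = z)).card = k := by
      rw [← Finset.card_eq_sum_card_fiberwise (fun x _ => Finset.mem_univ (f x))]
      simp
    have hsumh : ∑ z : Fin m, (1 + (if z = a then 1 else 0) + (if z = b then 1 else 0)) = k := by
      rw [Finset.sum_add_distrib, Finset.sum_add_distrib]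
      rw [Finset.sum_const, Finset.sum_ite_eq' Finset.univ a (fun _ => 1),
        Finset.sum_ite_eq' Finset.univ b (fun _ => 1)]
      simp only [Finset.mem_univ, if_pos, Finset.card_univ, Fintype.card_fin, smul_eq_mul, mul_one]
      omega
    have hle : ∀ z ∈ (Finset.univ : Finset (Fin m)),
        (1 + (if z = a then 1 else 0) + (if z = b then 1 else 0))
          ≤ (Finset.univ.filter (fun x : Fin k => f x = z)).card := by
      intro z _
      by_cases hza : z = a
      · subst hza
        rw [if_pos rfl, if_neg hab]
        have hsub : ({⟨t, htlt⟩, ⟨(if t + 2 < k then t + 2 else t + 2 - k), hx2v⟩} : Finset (Fin k))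
            ⊆ Finset.univ.filter (fun x : Fin k => f x = z) := by
          intro x hx
          rcases Finset.mem_insert.mp hx with h | h
          · subst h; exact Finset.mem_filter.mpr ⟨Finset.mem_univ _, hx1⟩
          · rw [Finset.mem_singleton.mp h]
            exact Finset.mem_filter.mpr ⟨Finset.mem_univ _, hx2⟩
        calc 1 + 1 + 0 = ({⟨t, htlt⟩, ⟨(if t + 2 < k then t + 2 else t + 2 - k), hx2v⟩} :
              Finset (Fin k)).card := by rw [Finset.card_pair hx12]
          _ ≤ _ := Finset.card_le_card hsub
      · by_cases hzb : z = b
        · subst hzb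
          rw [if_neg hza, if_pos rfl]
          have hsub : ({⟨(if t + 1 < k then t + 1 else t + 1 - k), hx3v⟩,
              ⟨(if 1 ≤ t then t - 1 else k - 1), hx4v⟩} : Finset (Fin k))
              ⊆ Finset.univ.filter (fun x : Fin k => f x = z) := by
            intro x hx
            rcases Finset.mem_insert.mp hx with h | h
            · subst h; exact Finset.mem_filter.mpr ⟨Finset.mem_univ _, hx3⟩
            · rw [Finset.mem_singleton.mp h]
              exact Finset.mem_filter.mpr ⟨Finset.mem_univ _, hx4⟩
          calc 1 + 0 + 1 = ({⟨(if t + 1 < k then t + 1 else t + 1 - k), hx3v⟩,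
                ⟨(if 1 ≤ t then t - 1 else k - 1), hx4v⟩} :
                Finset (Fin k)).card := by rw [Finset.card_pair hx34]
            _ ≤ _ := Finset.card_le_card hsub
        · rw [if_neg hza, if_neg hzb]
          obtain ⟨x, hx⟩ := hsurj z
          have : x ∈ Finset.univ.filter (fun x : Fin k => f x = z) :=
            Finset.mem_filter.mpr ⟨Finset.mem_univ _, hx⟩
          simpa using Finset.card_pos.mpr ⟨x, this⟩
    intro z
    have := (Finset.sum_eq_sum_iff_of_le hle).mp (by rw [hsumh, hsumg]) z (Finset.mem_univ z)
    omega
  refine ⟨hsurj, a, b, hab, hadjab, ?_, ?_, ?_⟩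
  · rw [hcount a, if_pos rfl, if_neg hab]
  · rw [hcount b, if_neg (Ne.symm hab), if_pos rfl]
  · intro z hza hzb
    rw [hcount z, if_neg hza, if_neg hzb]
end

section
/- Let m ≥ 3 be an odd integer. Then every graph homomorphism from the cycle C_m to itself is bijective. -/
open SimpleGraph Finset

theorem odd_cycle_self_hom_bijective
    (m : ℕ) (hm : 3 ≤ m) (hodd : Odd m)
    (f : cycleGraph m →g cycleGraph m) :
    Function.Bijective f := by
  obtain ⟨k, rfl⟩ : ∃ k, m = k + 3 := ⟨m - 3, by omega⟩
  let F : ZMod (k + 3) → ZMod (k + 3) := fun x => f x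
  have hadj : ∀ i : ZMod (k + 3), (cycleGraph (k + 3)).Adj i (i + 1 : ZMod (k + 3)) := by
    intro i
    apply (cycleGraph_adj (n := k + 1)).mpr
    right; show (i + 1 : ZMod (k + 3)) - i = 1; ring
  have hstep : ∀ i : ZMod (k + 3), F (i + 1) = F i + 1 ∨ F (i + 1) = F i - 1 := by
    intro i
    have h := f.map_adj (hadj i)
    rw [cycleGraph_adj] at h
    rcases h with h | h
    · right
      have h' : F i - F (i + 1) = 1 := h
      linear_combination -h'
    · left
      have h' : F (i + 1) - F i = 1 := h
      linear_combination h'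
  set A : Finset (ZMod (k + 3)) := univ.filter (fun i => F (i + 1) = F i + 1) with hA
  have hsum : ∑ i : ZMod (k + 3), (F (i + 1) - F i) = 0 := by
    have he := Fintype.sum_equiv (Equiv.addRight (1 : ZMod (k + 3)))
      (fun x => F (x + 1)) F (fun x => rfl)
    rw [Finset.sum_sub_distrib, he, sub_self]
  have hcardA : A.card + Aᶜ.card = k + 3 := by
    rw [Finset.card_add_card_compl]
    simp [ZMod.card]
  have hsum2 : ((A.card : ZMod (k + 3))) - (Aᶜ.card : ZMod (k + 3)) = 0 := by
    have h1 : ∑ i ∈ A, (F (i + 1) - F i) = (A.card : ZMod (k + 3)) := by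
      rw [Finset.sum_congr rfl (fun i hi => ?_), Finset.sum_const, nsmul_eq_mul, mul_one]
      rw [hA, Finset.mem_filter] at hi
      linear_combination hi.2
    have h2 : ∑ i ∈ Aᶜ, (F (i + 1) - F i) = -(Aᶜ.card : ZMod (k + 3)) := by
      rw [Finset.sum_congr rfl (fun i hi => ?_), Finset.sum_const, nsmul_eq_mul, mul_neg_one]
      rw [Finset.mem_compl, hA, Finset.mem_filter] at hi
      rcases hstep i with h | h
      · exact absurd ⟨Finset.mem_univ i, h⟩ hi
      · linear_combination h
    have h3 := Finset.sum_add_sum_compl A (fun i => F (i + 1) - F i)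
    rw [h1, h2, hsum] at h3
    linear_combination h3
  have hmod : A.card ≡ Aᶜ.card [MOD (k + 3)] :=
    (ZMod.natCast_eq_natCast_iff _ _ _).mp (by linear_combination hsum2)
  have hne : A.card ≠ Aᶜ.card := by
    intro h
    obtain ⟨t, ht⟩ := hodd
    omega
  -- one of the two sets is everything
  have hall : A.card = k + 3 ∨ Aᶜ.card = k + 3 := by
    by_contra hcon
    push_neg at hcon
    unfold Nat.ModEq at hmod
    rw [Nat.mod_eq_of_lt (by omega), Nat.mod_eq_of_lt (by omega)] at hmod
    exact hne hmod
  have hC : ∃ c : ZMod (k + 3), c * c = 1 ∧ ∀ i, F (i + 1) = F i + c := by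
    rcases hall with h | h
    · refine ⟨1, by ring, fun i => ?_⟩
      have : i ∈ A := Finset.eq_univ_of_card A (by simpa [ZMod.card] using h) ▸ Finset.mem_univ i
      rw [hA, Finset.mem_filter] at this
      simpa using this.2
    · refine ⟨-1, by ring, fun i => ?_⟩
      have hi : i ∈ Aᶜ := Finset.eq_univ_of_card Aᶜ (by simpa [ZMod.card] using h) ▸ Finset.mem_univ i
      rw [Finset.mem_compl, hA, Finset.mem_filter] at hi
      rcases hstep i with h' | h'
      · exact absurd ⟨Finset.mem_univ i, h'⟩ hi
      · rw [h']; ring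
  obtain ⟨c, hcc, hstepc⟩ := hC
  have key : ∀ n : ℕ, F (n : ZMod (k + 3)) = F 0 + c * n := by
    intro n
    induction n with
    | zero => simp
    | succ n ih =>
      push_cast
      rw [hstepc, ih]
      ring
  have hF : ∀ x : ZMod (k + 3), F x = F 0 + c * x := by
    intro x
    have h := key x.val
    rwa [ZMod.natCast_rightInverse x] at h
  have hinj : Function.Injective F := by
    intro x y hxy
    rw [hF x, hF y] at hxy
    have h2 : c * x = c * y := by linear_combination hxy
    linear_combination c * h2 - (x - y) * hcc
  exact Finite.injective_iff_bijective.mp hinj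
end

section
/- Let k ≥ 7 be an odd integer and let G be a finite simple graph that is P_k-free and contains no cycle on m vertices as a subgraph for any odd m with 3 ≤ m < k - 2. Let c : Z/kZ → V(G) be injective with c(a) adjacent to c(b) if and only if b - a = ±1, and let u be a vertex not in the image of c whose set of neighbors in the image of c is exactly {c(i), c(i+2)} for some i ∈ Z/kZ. Then (1) every neighbor of u either lies in the image of c or has a neighbor in the image of c, and (2) if w is a neighbor of u not in the image of c whose set of neighbors in the image of c is exactly {c(j), c(j+2)} for some j ∈ Z/kZ, then j - i ∈ {1, -1, 3, -3} in Z/kZ. -/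
open SimpleGraph

private lemma zmodCastInj {k m n : ℕ} (hm : m < k) (hn : n < k)
    (h : (m : ZMod k) = (n : ZMod k)) : m = n := by
  haveI : NeZero k := ⟨by omega⟩
  have h2 := congrArg ZMod.val h
  rwa [ZMod.val_cast_of_lt hm, ZMod.val_cast_of_lt hn] at h2

/-- vertices of the cycle through `u`, the arc `c a, …, c b`, and `w`. -/
private def cycMap {k : ℕ} {V : Type} (u w : V) (c : ZMod k → V) (a : ZMod k) (t : ℕ) : ℕ → V
  | 0 => u
  | (m+1) => if m = t + 1 then w else c (a + (m : ZMod k))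

private lemma buildCycle {V : Type} {G : SimpleGraph V} {k : ℕ} (hk : 7 ≤ k)
    {c : ZMod k → V} (hinj : Function.Injective c)
    (hcyc : ∀ a b : ZMod k, G.Adj (c a) (c b) ↔ (b - a = 1 ∨ b - a = -1))
    {u w : V} (hu : u ∉ Set.range c) (hw : w ∉ Set.range c)
    (huw : G.Adj u w) {a b : ZMod k} (hua : G.Adj u (c a)) (hwb : G.Adj w (c b))
    {t : ℕ} (ht : b - a = (t : ZMod k)) (htk : t < k) :
    ContainsSubgraph (cycleGraph (t+3)) G := by
  haveI : NeZero k := ⟨by omega⟩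
  have hune : u ≠ w := G.ne_of_adj huw
  refine ⟨fun p => cycMap u w c a t p.val, ?_, ?_⟩
  · intro p q hpq
    simp only at hpq
    rcases p with ⟨pv, hpv⟩
    rcases q with ⟨qv, hqv⟩
    simp only [Fin.mk.injEq]
    rcases pv with _ | pm <;> rcases qv with _ | qm
    · rfl
    · simp only [cycMap] at hpq
      split_ifs at hpq with h1
      · exact absurd hpq hune
      · exact absurd ⟨_, hpq.symm⟩ hu
    · simp only [cycMap] at hpq
      split_ifs at hpq with h1
      · exact absurd hpq.symm hune
      · exact absurd ⟨_, hpq⟩ hu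
    · simp only [cycMap] at hpq
      split_ifs at hpq with h1 h2 h2
      · omega
      · exact absurd ⟨_, hpq.symm⟩ hw
      · exact absurd ⟨_, hpq⟩ hw
      · have := hinj hpq
        have hml : (pm : ZMod k) = (qm : ZMod k) := by
          have := add_left_cancel this
          exact this
        have : pm = qm := zmodCastInj (by omega) (by omega) hml
        omega
  · have step : ∀ p : Fin (t+3), G.Adj (cycMap u w c a t p.val) (cycMap u w c a t (p+1).val) := by
      intro p
      have hlt : p.val < t + 3 := p.isLt
      have hval : (p+1).val = (p.val + 1) % (t+3) := by
        rw [Fin.val_add, Fin.val_one']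
        rw [Nat.mod_eq_of_lt (show 1 < t + 3 by omega)]
      rcases hp : p.val with _ | m
      · have hq : (p+1).val = 1 := by rw [hval, hp]; exact Nat.mod_eq_of_lt (by omega)
        rw [hq]
        simp only [cycMap]
        rw [if_neg (by omega)]
        simpa using hua
      · have hm2 : m + 1 < t + 3 := by omega
        rcases Nat.lt_or_ge m t with hmt | hmt
        · -- middle edge
          have hq : (p+1).val = m + 2 := by rw [hval, hp]; exact Nat.mod_eq_of_lt (by omega)
          rw [hq]
          simp only [cycMap]
          rw [if_neg (by omega), if_neg (by omega)]
          refine (hcyc _ _).mpr (Or.inl ?_)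
          push_cast
          ring
        · rcases Nat.eq_or_lt_of_le hmt with hmt' | hmt'
          · -- m = t : edge from c b to w
            have hq : (p+1).val = t + 2 := by
              rw [hval, hp, ← hmt']
              exact Nat.mod_eq_of_lt (by omega)
            rw [hq]
            simp only [cycMap]
            rw [if_neg (by omega)]
            simp only [if_true]
            have hb : a + (m : ZMod k) = b := by rw [← hmt', ← ht]; ring
            rw [hb]
            exact hwb.symm
          · -- m = t + 1, p.val = t + 2 : edge from w back to u
            have hm : m = t + 1 := by omega
            have hq : (p+1).val = 0 := by
              rw [hval, hp, hm]
              have : t + 1 + 1 + 1 = t + 3 := by omega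
              rw [this, Nat.mod_self]
            rw [hq, hm]
            simp only [cycMap, if_true]
            exact huw.symm
    intro p q hadj
    rw [cycleGraph_adj'] at hadj
    have hone : (1 : Fin (t+3)).val = 1 := by
      rw [Fin.val_one']; exact Nat.mod_eq_of_lt (by omega)
    rcases hadj with h | h
    · -- (p - q).val = 1, so p = q + 1
      have hpq : p = q + 1 := by
        have : p - q = 1 := Fin.ext (by rw [hone]; exact h)
        rw [← this]; abel
      rw [hpq]
      exact ((step q).symm : G.Adj (cycMap u w c a t (q+1).val) (cycMap u w c a t q.val)).symm.symm
    · have hpq : q = p + 1 := by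
        have : q - p = 1 := Fin.ext (by rw [hone]; exact h)
        rw [← this]; abel
      rw [hpq]
      exact step p

private lemma arcSmall {V : Type} {G : SimpleGraph V} {k : ℕ} (hk : 7 ≤ k) (hodd : Odd k)
    (hnoShortOdd : ∀ m : ℕ, Odd m → 3 ≤ m → m < k - 2 → ¬ ContainsSubgraph (cycleGraph m) G)
    {c : ZMod k → V} (hinj : Function.Injective c)
    (hcyc : ∀ a b : ZMod k, G.Adj (c a) (c b) ↔ (b - a = 1 ∨ b - a = -1))
    {u w : V} (hu : u ∉ Set.range c) (hw : w ∉ Set.range c)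
    (huw : G.Adj u w) {a b : ZMod k} (hua : G.Adj u (c a)) (hwb : G.Adj w (c b)) :
    ∃ s : ℕ, s % 2 = 1 ∧ s ≤ 5 ∧ (b - a = (s : ZMod k) ∨ b - a = -(s : ZMod k)) := by
  haveI : NeZero k := ⟨by omega⟩
  have hk2 : k % 2 = 1 := Nat.odd_iff.mp hodd
  set t := (b - a).val with htdef
  have ht : b - a = (t : ZMod k) := (ZMod.natCast_rightInverse _).symm
  have htk : t < k := ZMod.val_lt _
  have hab : a - b = ((k - t : ℕ) : ZMod k) := by
    have h1 : ((k - t : ℕ) : ZMod k) = ((k : ℕ) : ZMod k) - ((t : ℕ) : ZMod k) :=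
      Nat.cast_sub (le_of_lt htk)
    rw [h1, ZMod.natCast_self, zero_sub, ← ht]
    ring
  have key : ∀ (t' : ℕ), t' < k → t' % 2 = 0 →
      ((b - a = (t' : ZMod k)) ∨ (a - b = (t' : ZMod k))) → k - 5 ≤ t' := by
    intro t' h1 h2 h3
    by_contra hlt
    push_neg at hlt
    have hoddc : Odd (t' + 3) := by
      rw [Nat.odd_iff]; omega
    have hcon : ContainsSubgraph (cycleGraph (t'+3)) G := by
      rcases h3 with h3 | h3
      · exact buildCycle hk hinj hcyc hu hw huw hua hwb h3 h1
      · exact buildCycle hk hinj hcyc hw hu huw.symm hwb hua h3 h1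
    exact hnoShortOdd (t'+3) hoddc (by omega) (by omega) hcon
  by_cases hpar : t % 2 = 0
  · have h5 : k - 5 ≤ t := key t htk hpar (Or.inl ht)
    refine ⟨k - t, by omega, by omega, Or.inr ?_⟩
    rw [← hab, neg_sub]
  · have h0 : t ≠ 0 := by omega
    have h5 : k - 5 ≤ k - t := key (k - t) (by omega) (by omega) (Or.inr hab)
    exact ⟨t, by omega, by omega, Or.inl ht⟩

/-- vertices of the induced path `x, u, c i, c (i-1), …`. -/
private def pMap {k : ℕ} {V : Type} (x u : V) (c : ZMod k → V) (i : ZMod k) : ℕ → V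
  | 0 => x
  | 1 => u
  | (m+2) => c (i - (m : ZMod k))

private lemma noLonely {V : Type} {G : SimpleGraph V} {k : ℕ} (hk : 7 ≤ k)
    (hPfree : ¬ ContainsInduced (pathGraph k) G)
    {c : ZMod k → V} (hinj : Function.Injective c)
    (hcyc : ∀ a b : ZMod k, G.Adj (c a) (c b) ↔ (b - a = 1 ∨ b - a = -1))
    {u : V} (hu : u ∉ Set.range c) {i : ZMod k}
    (huadj : ∀ a : ZMod k, G.Adj u (c a) ↔ (a = i ∨ a = i + 2))
    {x : V} (hux : G.Adj u x) (hxr : x ∉ Set.range c)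
    (hxc : ∀ a : ZMod k, ¬ G.Adj x (c a)) : False := by
  haveI : NeZero k := ⟨by omega⟩
  have hxu : x ≠ u := (G.ne_of_adj hux).symm
  -- adjacency of u to path vertices
  have huc : ∀ m : ℕ, m + 2 < k → (G.Adj u (c (i - (m : ZMod k))) ↔ m = 0) := by
    intro m hm
    rw [huadj]
    constructor
    · rintro (h | h)
      · have : (m : ZMod k) = ((0 : ℕ) : ZMod k) := by
          push_cast
          linear_combination - h
        exact zmodCastInj (by omega) (by omega) this
      · exfalso
        have h2 : ((m + 2 : ℕ) : ZMod k) = 0 := by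
          push_cast
          linear_combination - h
        rw [ZMod.natCast_eq_zero_iff] at h2
        have := Nat.le_of_dvd (by omega) h2
        omega
    · intro h
      subst h
      left
      simp
  -- adjacency between path vertices
  have hcc : ∀ m n : ℕ, m + 2 < k → n + 2 < k →
      (G.Adj (c (i - (m : ZMod k))) (c (i - (n : ZMod k))) ↔ (m = n + 1 ∨ n = m + 1)) := by
    intro m n hm hn
    rw [hcyc]
    constructor
    · rintro (h | h)
      · left
        have h2 : (m : ZMod k) = ((n + 1 : ℕ) : ZMod k) := by
          push_cast
          linear_combination h
        exact zmodCastInj (by omega) (by omega) h2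
      · right
        have h2 : (n : ZMod k) = ((m + 1 : ℕ) : ZMod k) := by
          push_cast
          linear_combination - h
        exact zmodCastInj (by omega) (by omega) h2
    · rintro (h | h)
      · left; subst h; push_cast; ring
      · right; subst h; push_cast; ring
  apply hPfree
  refine ⟨⟨⟨fun p => pMap x u c i p.val, ?_⟩, ?_⟩⟩
  · intro p q hpq
    simp only at hpq
    rcases p with ⟨pv, hpv⟩
    rcases q with ⟨qv, hqv⟩
    simp only [Fin.mk.injEq]
    rcases pv with _ | pv <;> rcases qv with _ | qv
    · rfl
    · rcases qv with _ | qm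
      · exact absurd hpq hxu
      · exact absurd ⟨_, hpq.symm⟩ hxr
    · rcases pv with _ | pm
      · exact absurd hpq.symm hxu
      · exact absurd ⟨_, hpq⟩ hxr
    · rcases pv with _ | pm <;> rcases qv with _ | qm
      · rfl
      · exact absurd ⟨_, hpq.symm⟩ hu
      · exact absurd ⟨_, hpq⟩ hu
      · simp only [pMap] at hpq
        have h2 := hinj hpq
        have h3 : (pm : ZMod k) = (qm : ZMod k) := by linear_combination - h2
        have := zmodCastInj (show pm < k by omega) (show qm < k by omega) h3
        omega
  · intro p q
    rw [pathGraph_adj]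
    rcases p with ⟨pv, hpv⟩
    rcases q with ⟨qv, hqv⟩
    simp only
    rcases pv with _ | pv <;> rcases qv with _ | qv
    · exact iff_of_false (G.irrefl) (by omega)
    · rcases qv with _ | qm
      · exact iff_of_true (hux.symm) (by omega)
      · exact iff_of_false (hxc _) (by omega)
    · rcases pv with _ | pm
      · exact iff_of_true hux (by omega)
      · exact iff_of_false (fun h => hxc _ h.symm) (by omega)
    · rcases pv with _ | pm <;> rcases qv with _ | qm
      · exact iff_of_false (G.irrefl) (by omega)
      · -- u vs c (i - qm)
        change G.Adj u (c (i - (qm : ZMod k))) ↔ _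
        rw [huc qm (by omega)]
        omega
      · change G.Adj (c (i - (pm : ZMod k))) u ↔ _
        rw [G.adj_comm, huc pm (by omega)]
        omega
      · change G.Adj (c (i - (pm : ZMod k))) (c (i - (qm : ZMod k))) ↔ _
        rw [hcc pm qm (by omega) (by omega)]
        omega

theorem neighbors_of_D_type_vertex_Ck
    (k : ℕ) (hk : 7 ≤ k) (hodd : Odd k) (V : Type) [Fintype V] (G : SimpleGraph V)
    (hPfree : ¬ ContainsInduced (pathGraph k) G)
    (hnoShortOdd : ∀ m : ℕ, Odd m → 3 ≤ m → m < k - 2 →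
      ¬ ContainsSubgraph (cycleGraph m) G)
    (c : ZMod k → V) (hinj : Function.Injective c)
    (hcyc : ∀ a b : ZMod k, G.Adj (c a) (c b) ↔ (b - a = 1 ∨ b - a = -1))
    (u : V) (hu : u ∉ Set.range c) (i : ZMod k)
    (hui : {x : V | x ∈ Set.range c ∧ G.Adj u x} = {c i, c (i + 2)}) :
    (∀ x : V, G.Adj u x → x ∈ Set.range c ∨ ∃ a : ZMod k, G.Adj x (c a)) ∧
    (∀ (w : V) (j : ZMod k), G.Adj u w → w ∉ Set.range c →
      {x : V | x ∈ Set.range c ∧ G.Adj w x} = {c j, c (j + 2)} →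
      j - i ∈ ({1, -1, 3, -3} : Set (ZMod k))) := by
  haveI : NeZero k := ⟨by omega⟩
  have hk2 : k % 2 = 1 := Nat.odd_iff.mp hodd
  have hsetadj : ∀ (v : V) (l : ZMod k),
      {x : V | x ∈ Set.range c ∧ G.Adj v x} = {c l, c (l + 2)} →
      ∀ a : ZMod k, G.Adj v (c a) ↔ (a = l ∨ a = l + 2) := by
    intro v l hset a
    have hmem := Set.ext_iff.mp hset (c a)
    simp only [Set.mem_setOf_eq, Set.mem_insert_iff, Set.mem_singleton_iff] at hmem
    constructor
    · intro h
      rcases hmem.mp ⟨⟨a, rfl⟩, h⟩ with h2 | h2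
      · exact Or.inl (hinj h2)
      · exact Or.inr (hinj h2)
    · rintro (rfl | rfl)
      · exact (hmem.mpr (Or.inl rfl)).2
      · exact (hmem.mpr (Or.inr rfl)).2
  have huadj := hsetadj u i hui
  have hadjui : G.Adj u (c i) := (huadj i).mpr (Or.inl rfl)
  have hadjui2 : G.Adj u (c (i + 2)) := (huadj (i+2)).mpr (Or.inr rfl)
  constructor
  · intro x hux
    by_contra hcon
    push_neg at hcon
    exact noLonely hk hPfree hinj hcyc hu huadj hux hcon.1 (fun a => hcon.2 a)
  · intro w j huw hwr hwj
    have hwadj := hsetadj w j hwj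
    have hadjwj : G.Adj w (c j) := (hwadj j).mpr (Or.inl rfl)
    have hadjwj2 : G.Adj w (c (j + 2)) := (hwadj (j+2)).mpr (Or.inr rfl)
    simp only [Set.mem_insert_iff, Set.mem_singleton_iff]
    have no7 : ∀ s : ℕ, s % 2 = 1 → s ≤ 5 →
        ¬ ((7 : ZMod k) = (s : ZMod k) ∨ (7 : ZMod k) = -(s : ZMod k)) := by
      rintro s hso hsl (h | h)
      · have h2 : ((7 : ℕ) : ZMod k) = ((s : ℕ) : ZMod k) := by push_cast; exact h
        rw [ZMod.natCast_eq_natCast_iff] at h2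
        have h3 : 7 % k = s % k := h2
        have h4 : s % k = s := Nat.mod_eq_of_lt (by omega)
        rcases Nat.eq_or_lt_of_le hk with h5 | h5
        · rw [← h5, Nat.mod_self] at h3; omega
        · rw [Nat.mod_eq_of_lt h5] at h3; omega
      · have h2 : ((7 + s : ℕ) : ZMod k) = 0 := by push_cast; rw [h]; ring
        rw [ZMod.natCast_eq_zero_iff] at h2
        have h3 := Nat.le_of_dvd (by omega) h2
        have h4 : k ≤ 12 := by omega
        interval_cases k <;> omega
    obtain ⟨s1, hs1o, hs1l, hd1⟩ := arcSmall hk hodd hnoShortOdd hinj hcyc hu hwr huw hadjui hadjwj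
    obtain ⟨s2, hs2o, hs2l, hd2⟩ := arcSmall hk hodd hnoShortOdd hinj hcyc hu hwr huw hadjui hadjwj2
    obtain ⟨s3, hs3o, hs3l, hd3⟩ := arcSmall hk hodd hnoShortOdd hinj hcyc hu hwr huw hadjui2 hadjwj
    have hs1 : s1 = 1 ∨ s1 = 3 ∨ s1 = 5 := by omega
    rcases hs1 with rfl | rfl | rfl
    · rcases hd1 with h | h
      · left; rw [h]; norm_num
      · right; left; rw [h]; norm_num
    · rcases hd1 with h | h
      · right; right; left; rw [h]; norm_num
      · right; right; right; rw [h]; norm_num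
    · exfalso
      rcases hd1 with h | h
      · -- j - i = 5, then (j+2) - i = 7
        apply no7 s2 hs2o hs2l
        rcases hd2 with h2 | h2
        · left; rw [← h2]; push_cast at h ⊢; linear_combination - h
        · right; rw [← h2]; push_cast at h ⊢; linear_combination - h
      · -- j - i = -5, then j - (i+2) = -7
        apply no7 s3 hs3o hs3l
        rcases hd3 with h3 | h3
        · right
          have : -(7 : ZMod k) = (s3 : ZMod k) := by
            rw [← h3]; push_cast at h ⊢; linear_combination - h
          linear_combination - this
        · left
          have : -(7 : ZMod k) = -(s3 : ZMod k) := by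
            rw [← h3]; push_cast at h ⊢; linear_combination - h
          linear_combination - this
end

section
/- Let k ≥ 7 be an odd integer and let G be a finite simple graph that is P_k-free, contains no induced cycle on k vertices, and contains no cycle on m vertices as a subgraph for any odd m with 3 ≤ m < k - 2. Let c : Z/(k-2)Z → V(G) be injective with c(a) adjacent to c(b) if and only if b - a = ±1. Let u and w be adjacent vertices, neither in the image of c, such that the set of neighbors of u in the image of c is exactly {c(i)} and the set of neighbors of w in the image of c is exactly {c(j)}. Then j - i ∈ {1, -1, 3, -3} in Z/(k-2)Z. -/
open SimpleGraph

lemma arc_cycle_subgraph {n : ℕ} {V : Type} (G : SimpleGraph V)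
    (c : ZMod n → V) (hinj : Function.Injective c)
    (hcyc : ∀ a b : ZMod n, G.Adj (c a) (c b) ↔ (b - a = 1 ∨ b - a = -1))
    (u w : V) (huw : G.Adj u w) (hu : u ∉ Set.range c) (hw : w ∉ Set.range c)
    (i j : ZMod n) (hui : G.Adj u (c i)) (hwj : G.Adj w (c j))
    (a : ℕ) (ha : a < n) (hja : j = i + (a : ZMod n)) :
    ContainsSubgraph (cycleGraph (a + 3)) G := by
  have han : ¬ (a + 2 = 0) := by omega
  refine ⟨fun t => if t.val = 0 then u else if t.val = a + 2 then w
    else c (i + ((t.val - 1 : ℕ) : ZMod n)), ?_, ?_⟩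
  · -- injectivity
    intro s t hst
    have hs := s.isLt
    have ht := t.isLt
    have key : ∀ p q : ℕ, p ≠ 0 → p ≠ a + 2 → p < a + 3 → q ≠ 0 → q ≠ a + 2 → q < a + 3 →
        i + ((p - 1 : ℕ) : ZMod n) = i + ((q - 1 : ℕ) : ZMod n) → p = q := by
      intro p q hp0 hp2 hpl hq0 hq2 hql h
      have h' : ((p - 1 : ℕ) : ZMod n) = ((q - 1 : ℕ) : ZMod n) := add_left_cancel h
      have hpn : p - 1 < n := by omega
      have hqn : q - 1 < n := by omega
      have := congrArg ZMod.val h'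
      rw [ZMod.val_cast_of_lt hpn, ZMod.val_cast_of_lt hqn] at this
      omega
    by_cases hs0 : s.val = 0 <;> by_cases ht0 : t.val = 0 <;>
      by_cases hs2 : s.val = a + 2 <;> by_cases ht2 : t.val = a + 2 <;>
      simp only [hs0, ht0, hs2, ht2, han, if_true, if_false, ite_true, ite_false] at hst ⊢ <;>
      first
        | (exfalso; omega)
        | (exact Fin.ext (by omega))
        | (exact absurd hst huw.ne)
        | (exact absurd hst.symm huw.ne)
        | (exact (hu ⟨_, hst.symm⟩).elim)
        | (exact (hu ⟨_, hst⟩).elim)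
        | (exact (hw ⟨_, hst.symm⟩).elim)
        | (exact (hw ⟨_, hst⟩).elim)
        | (exact Fin.ext (key s.val t.val hs0 hs2 s.isLt ht0 ht2 t.isLt (hinj hst)))
  · -- adjacency
    have step : ∀ s t : Fin (a + 3), t = s + 1 →
        G.Adj ((fun t : Fin (a+3) => if t.val = 0 then u else if t.val = a + 2 then w
          else c (i + ((t.val - 1 : ℕ) : ZMod n))) s)
          ((fun t : Fin (a+3) => if t.val = 0 then u else if t.val = a + 2 then w
          else c (i + ((t.val - 1 : ℕ) : ZMod n))) t) := by
      intro s t hts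
      have htv : t.val = if s.val = a + 2 then 0 else s.val + 1 := by
        subst hts
        rw [Fin.val_add_one]
        by_cases h : s = Fin.last (a + 2)
        · have h2 : s.val = a + 2 := by rw [h]; rfl
          rw [if_pos h, if_pos h2]
        · have h2 : ¬ (s.val = a + 2) := fun hv => h (Fin.ext hv)
          rw [if_neg h, if_neg h2]
      by_cases hs2 : s.val = a + 2
      · -- wrap-around edge: w -- u
        rw [if_pos hs2] at htv
        simp only [hs2, htv, han, if_true, if_false, ite_true, ite_false]
        exact huw.symm
      · rw [if_neg hs2] at htv
        by_cases hs0 : s.val = 0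
        · -- edge u -- c i
          have ht2 : ¬ (t.val = a + 2) := by omega
          have ht0 : ¬ (t.val = 0) := by omega
          simp only [hs0, ht0, ht2, if_true, if_false, ite_true, ite_false]
          have : i + ((t.val - 1 : ℕ) : ZMod n) = i := by
            rw [htv, hs0]; norm_num
          rw [this]; exact hui
        · by_cases ht2 : t.val = a + 2
          · -- edge c j -- w
            have hsa : s.val - 1 = a := by omega
            simp only [hs0, hs2, ht2, if_true, if_false, ite_true, ite_false]
            have : i + ((s.val - 1 : ℕ) : ZMod n) = j := by rw [hsa, hja]
            rw [this]; exact hwj.symm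
          · -- interior arc edge
            have ht0 : ¬ (t.val = 0) := by omega
            simp only [hs0, hs2, ht0, ht2, if_true, if_false, ite_true, ite_false]
            refine (hcyc _ _).mpr (Or.inl ?_)
            have h1 : ((t.val - 1 : ℕ) : ZMod n) = (((s.val - 1) + 1 : ℕ) : ZMod n) := by
              congr 1; omega
            rw [h1]
            push_cast
            ring
    intro s t hadj
    have hadj' := (cycleGraph_adj (n := a + 1)).mp hadj
    rcases hadj' with h | h
    · exact (step t s ((eq_add_of_sub_eq h).trans (add_comm _ _))).symm
    · exact step s t ((eq_add_of_sub_eq h).trans (add_comm _ _))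

theorem adjacent_D_type_vertices_Ckm2
    (k : ℕ) (hk : 7 ≤ k) (hodd : Odd k) (V : Type) [Fintype V] (G : SimpleGraph V)
    (hPfree : ¬ ContainsInduced (pathGraph k) G)
    (hCkfree : ¬ ContainsInduced (cycleGraph k) G)
    (hnoShortOdd : ∀ m : ℕ, Odd m → 3 ≤ m → m < k - 2 →
      ¬ ContainsSubgraph (cycleGraph m) G)
    (c : ZMod (k - 2) → V) (hinj : Function.Injective c)
    (hcyc : ∀ a b : ZMod (k - 2), G.Adj (c a) (c b) ↔ (b - a = 1 ∨ b - a = -1))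
    (u w : V) (huw : G.Adj u w)
    (hu : u ∉ Set.range c) (hw : w ∉ Set.range c)
    (i j : ZMod (k - 2))
    (hui : {x : V | x ∈ Set.range c ∧ G.Adj u x} = {c i})
    (hwj : {x : V | x ∈ Set.range c ∧ G.Adj w x} = {c j}) :
    j - i ∈ ({1, -1, 3, -3} : Set (ZMod (k - 2))) := by
  have hn5 : 5 ≤ k - 2 := by omega
  haveI : NeZero (k - 2) := ⟨by omega⟩
  obtain ⟨p, hp⟩ := hodd
  have hnodd : k - 2 = 2 * (p - 1) + 1 := by omega
  -- u is adjacent to c i, w is adjacent to c j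
  have hui' : G.Adj u (c i) := ((Set.ext_iff.mp hui (c i)).mpr (Set.mem_singleton _)).2
  have hwj' : G.Adj w (c j) := ((Set.ext_iff.mp hwj (c j)).mpr (Set.mem_singleton _)).2
  -- the two arcs give cycles
  have ha1 := arc_cycle_subgraph G c hinj hcyc u w huw hu hw i j hui' hwj'
    (j - i).val (ZMod.val_lt _) (by rw [ZMod.natCast_val, ZMod.cast_id]; ring)
  have ha2 := arc_cycle_subgraph G c hinj hcyc w u huw.symm hw hu j i hwj' hui'
    (i - j).val (ZMod.val_lt _) (by rw [ZMod.natCast_val, ZMod.cast_id]; ring)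
  set a1 := (j - i).val with ha1d
  set a2 := (i - j).val with ha2d
  have hlt1 : a1 < (k - 2) := ZMod.val_lt _
  have hlt2 : a2 < (k - 2) := ZMod.val_lt _
  by_cases hij : j = i
  · exfalso
    have h0 : a1 = 0 := by rw [ha1d, hij, sub_self, ZMod.val_zero]
    rw [h0] at ha1
    exact hnoShortOdd 3 (by decide) le_rfl (by omega) ha1
  · -- a1 + a2 = (k - 2)
    have hne : j - i ≠ 0 := sub_ne_zero_of_ne hij
    haveI : NeZero (j - i) := ⟨hne⟩
    have hsum : a1 + a2 = (k - 2) := by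
      have : a2 = (k - 2) - a1 := by
        rw [ha2d, show i - j = -(j - i) by ring, ZMod.val_neg_of_ne_zero]
      have h1 : 0 < a1 := by
        rcases Nat.eq_zero_or_pos a1 with h | h
        · exact absurd ((ZMod.val_eq_zero _).mp h) hne
        · exact h
      omega
    rcases Nat.even_or_odd a1 with he | ho
    · -- a1 + 3 is odd; forbidden if < (k - 2), so a1 ∈ {(k - 2)-3, (k - 2)-1}
      have hodd3 : Odd (a1 + 3) := by
        obtain ⟨q, hq⟩ := he; exact ⟨q + 1, by omega⟩
      have hge : ¬ (a1 + 3 < (k - 2)) := fun hlt =>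
        hnoShortOdd (a1 + 3) hodd3 (by omega) hlt ha1
      obtain ⟨q, hq⟩ := he
      have : a1 = (k - 2) - 3 ∨ a1 = (k - 2) - 1 := by omega
      have hji : j - i = (a1 : ZMod (k - 2)) := by
        rw [ha1d, ZMod.natCast_val, ZMod.cast_id]
      rcases this with h | h
      · right; right; right
        rw [hji, h, Nat.cast_sub (by omega : 3 ≤ k - 2), ZMod.natCast_self, zero_sub]
        norm_num
      · right; left
        rw [hji, h, Nat.cast_sub (by omega : 1 ≤ k - 2), ZMod.natCast_self, zero_sub]
        norm_num
    · -- a2 is even, a2 + 3 is odd, so a2 ∈ {(k - 2)-3, (k - 2)-1}, i.e. i - j ∈ {-3, -1}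
      have he : Even a2 := by
        rcases Nat.even_or_odd a2 with h | h
        · exact h
        · exfalso; obtain ⟨x, hx⟩ := ho; obtain ⟨y, hy⟩ := h; omega
      have hodd3 : Odd (a2 + 3) := by
        obtain ⟨q, hq⟩ := he; exact ⟨q + 1, by omega⟩
      have hge : ¬ (a2 + 3 < (k - 2)) := fun hlt =>
        hnoShortOdd (a2 + 3) hodd3 (by omega) hlt ha2
      obtain ⟨q, hq⟩ := he
      have : a2 = (k - 2) - 3 ∨ a2 = (k - 2) - 1 := by omega
      have hij' : i - j = (a2 : ZMod (k - 2)) := by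
        rw [ha2d, ZMod.natCast_val, ZMod.cast_id]
      have hflip : j - i = -(i - j) := by ring
      rcases this with h | h
      · right; right; left
        rw [hflip, hij', h, Nat.cast_sub (by omega : 3 ≤ k - 2), ZMod.natCast_self, zero_sub,
          neg_neg]
        norm_num
      · left
        rw [hflip, hij', h, Nat.cast_sub (by omega : 1 ≤ k - 2), ZMod.natCast_self, zero_sub,
          neg_neg]
        norm_num
end
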